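/- arXiv:1301.3331 — 10 statements merged into one kernel-verified Lean document; each statement's English description precedes it below -/
import Mathlib

section
/- If g and h are completely multiplicative arithmetic functions and f = g * h (Dirichlet convolution), then for all positive integers m, n: f(mn) = ∑_{a | gcd(m,n)} f(m/a) f(n/a) μ(a) g(a) h(a), where μ is the Möbius function. -/
open Finset ArithmeticFunction

private lemma sum_coprime_mul_divisors {M N : ℕ} (hM : M ≠ 0) (hN : N ≠ 0)
    (hMN : Nat.Coprime M N) (F : ℕ → ℂ) :
    ∑ d ∈ (M * N).divisors, F d = ∑ u ∈ M.divisors, ∑ v ∈ N.divisors, F (u * v) := by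
  rw [← Finset.sum_product']
  refine (Finset.sum_bij (fun p _ => p.1 * p.2) ?_ ?_ ?_ ?_).symm
  · rintro ⟨u, v⟩ huv
    simp only [Finset.mem_product, Nat.mem_divisors] at huv ⊢
    exact ⟨mul_dvd_mul huv.1.1 huv.2.1, mul_ne_zero hM hN⟩
  · rintro ⟨u, v⟩ huv ⟨u', v'⟩ huv' (h : u * v = u' * v')
    simp only [Finset.mem_product, Nat.mem_divisors] at huv huv'
    have hu : u ∣ u' := by
      have h1 : u ∣ u' * v' := h ▸ dvd_mul_right u v
      exact (Nat.Coprime.dvd_of_dvd_mul_right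
        ((hMN.coprime_dvd_left huv.1.1).coprime_dvd_right huv'.2.1) h1)
    have hu' : u' ∣ u := by
      have h1 : u' ∣ u * v := h ▸ dvd_mul_right u' v'
      exact (Nat.Coprime.dvd_of_dvd_mul_right
        ((hMN.coprime_dvd_left huv'.1.1).coprime_dvd_right huv.2.1) h1)
    have : u = u' := Nat.dvd_antisymm hu hu'
    subst this
    exact Prod.ext rfl (Nat.eq_of_mul_eq_mul_left
      (Nat.pos_of_dvd_of_pos huv.1.1 (Nat.pos_of_ne_zero hM)) h)
  · intro d hd
    simp only [Nat.mem_divisors] at hd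
    obtain ⟨a, b, ha, hb, rfl⟩ := exists_dvd_and_dvd_of_dvd_mul hd.1
    exact ⟨⟨a, b⟩, Finset.mem_product.mpr ⟨Nat.mem_divisors.mpr ⟨ha, hM⟩,
      Nat.mem_divisors.mpr ⟨hb, hN⟩⟩, rfl⟩
  · intros; rfl

private noncomputable def Sq (x y : ℂ) (k : ℕ) : ℂ := ∑ i ∈ Finset.range (k+1), x^i * y^(k-i)

private lemma Sq_zero (x y : ℂ) : Sq x y 0 = 1 := by simp [Sq]

private lemma Sq_one (x y : ℂ) : Sq x y 1 = x + y := by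
  simp [Sq, Finset.sum_range_succ]; ring

private lemma Sq_step (x y : ℂ) (k : ℕ) : Sq x y (k+1) = x * Sq x y k + y^(k+1) := by
  unfold Sq
  rw [Finset.sum_range_succ']
  simp only [Nat.succ_sub_succ, pow_zero, one_mul, Nat.sub_zero]
  rw [Finset.mul_sum]
  congr 1
  exact Finset.sum_congr rfl fun i _ => by ring

private lemma Sq_base (x y : ℂ) (b : ℕ) :
    Sq x y (b+2) = Sq x y 1 * Sq x y (b+1) - x*y*(Sq x y 0 * Sq x y b) := by
  have h1 := Sq_step x y (b+1)
  have h2 := Sq_step x y b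
  rw [Sq_one, Sq_zero]
  linear_combination h1 - y * h2

private lemma Sq_rec (x y : ℂ) : ∀ a b, Sq x y (a+b+2) =
    Sq x y (a+1) * Sq x y (b+1) - x*y*(Sq x y a * Sq x y b) := by
  intro a
  induction a with
  | zero => intro b; simpa [Sq_one, Sq_zero] using Sq_base x y b
  | succ a ih =>
    intro b
    have e : a+1+b+2 = a+(b+1)+2 := by omega
    rw [e, ih (b+1), Sq_base x y b, Sq_base x y a, Sq_zero]
    ring

private lemma prime_power_case {p : ℕ} (hp : p.Prime) (α β : ℕ) (x y : ℂ) :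
    ∑ j ∈ Finset.range (min α β + 1),
      Sq x y (α-j) * Sq x y (β-j) * ((moebius (p^j) : ℤ) : ℂ) * x^j * y^j
    = Sq x y (α+β) := by
  match α, β with
  | 0, β => simp [Sq_zero, moebius_apply_one]
  | (a+1), 0 => simp [Sq_zero, moebius_apply_one]
  | (a+1), (b+1) =>
    set F : ℕ → ℂ := fun j => Sq x y (a+1-j) * Sq x y (b+1-j) * ((moebius (p^j) : ℤ) : ℂ) * x^j * y^j with hF
    have hzero : ∀ j ∈ Finset.Ico 2 (min (a+1) (b+1) + 1), F j = 0 := by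
      intro j hj
      rw [Finset.mem_Ico] at hj
      have : moebius (p^j) = 0 := by
        rw [moebius_apply_prime_pow hp (by omega)]
        simp [show j ≠ 1 by omega]
      simp [hF, this]
    have hsplit := Finset.sum_range_add_sum_Ico F (show 2 ≤ min (a+1) (b+1) + 1 by omega)
    rw [← hsplit, Finset.sum_eq_zero hzero, add_zero]
    rw [Finset.sum_range_succ, Finset.sum_range_one]
    simp only [hF, pow_zero, pow_one, Nat.sub_zero, Nat.succ_sub_one,
      moebius_apply_one, moebius_apply_prime hp]
    push_cast
    rw [show a+1+(b+1) = a+b+2 by omega, Sq_rec]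
    ring

theorem busche_ramanujan_i (g h f : ℕ → ℂ)
    (hg1 : g 1 = 1) (hg : ∀ m n : ℕ, g (m * n) = g m * g n)
    (hh1 : h 1 = 1) (hh : ∀ m n : ℕ, h (m * n) = h m * h n)
    (hf : ∀ n : ℕ, f n = ∑ d ∈ n.divisors, g d * h (n / d))
    (m n : ℕ) (hm : 0 < m) (hn : 0 < n) :
    f (m * n) = ∑ a ∈ (Nat.gcd m n).divisors,
      f (m / a) * f (n / a) * (ArithmeticFunction.moebius a : ℂ) * g a * h a := by
  have cm_powg : ∀ p k : ℕ, g (p ^ k) = (g p) ^ k := by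
    intro p k
    induction k with
    | zero => simpa using hg1
    | succ k ih => rw [pow_succ, hg, ih, pow_succ]
  have cm_powh : ∀ p k : ℕ, h (p ^ k) = (h p) ^ k := by
    intro p k
    induction k with
    | zero => simpa using hh1
    | succ k ih => rw [pow_succ, hh, ih, pow_succ]
  have f_one : f 1 = 1 := by rw [hf]; simp [hg1, hh1]
  have f_mul : ∀ {a b : ℕ}, a ≠ 0 → b ≠ 0 → Nat.Coprime a b → f (a * b) = f a * f b := by
    intro a b ha hb hab
    rw [hf, hf a, hf b, sum_coprime_mul_divisors ha hb hab, Finset.sum_mul_sum]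
    refine Finset.sum_congr rfl fun u hu => Finset.sum_congr rfl fun v hv => ?_
    rw [Nat.mem_divisors] at hu hv
    rw [hg, ← Nat.div_mul_div_comm hu.1 hv.1, hh]
    ring
  have f_pp : ∀ {p : ℕ}, p.Prime → ∀ k, f (p ^ k) = Sq (g p) (h p) k := by
    intro p hp k
    rw [hf, Nat.sum_divisors_prime_pow hp, Sq]
    refine Finset.sum_congr rfl fun i hi => ?_
    rw [Finset.mem_range] at hi
    rw [cm_powg, Nat.pow_div (by omega) hp.pos, cm_powh]
  have key : ∀ N m n : ℕ, m * n = N → 0 < m → 0 < n →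
      f (m * n) = ∑ a ∈ (Nat.gcd m n).divisors,
        f (m / a) * f (n / a) * (moebius a : ℂ) * g a * h a := by
    intro N
    induction N using Nat.strong_induction_on with
    | _ N ih =>
    intro m n hmnN hm hn
    by_cases hone : m * n = 1
    · obtain rfl := Nat.eq_one_of_mul_eq_one_right hone
      obtain rfl := Nat.eq_one_of_mul_eq_one_left hone
      simp [f_one, moebius_apply_one, hg1, hh1]
    · have hmn1 : 1 < m * n := by
        have : 0 < m * n := Nat.mul_pos hm hn
        omega
      set p := (m*n).minFac with hpdef
      have hp : p.Prime := Nat.minFac_prime hone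
      set α := m.factorization p with hα
      set β := n.factorization p with hβ
      set m₁ := m / p ^ α with hm₁def
      set n₁ := n / p ^ β with hn₁def
      have hmfac : p ^ α * m₁ = m := Nat.ordProj_mul_ordCompl_eq_self m p
      have hnfac : p ^ β * n₁ = n := Nat.ordProj_mul_ordCompl_eq_self n p
      have hpm₁ : ¬ p ∣ m₁ := Nat.not_dvd_ordCompl hp hm.ne'
      have hpn₁ : ¬ p ∣ n₁ := Nat.not_dvd_ordCompl hp hn.ne'
      have hm₁pos : 0 < m₁ := Nat.ordCompl_pos p hm.ne'
      have hn₁pos : 0 < n₁ := Nat.ordCompl_pos p hn.ne'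
      have cpm₁ : Nat.Coprime p m₁ := (Nat.Prime.coprime_iff_not_dvd hp).mpr hpm₁
      have cpn₁ : Nat.Coprime p n₁ := (Nat.Prime.coprime_iff_not_dvd hp).mpr hpn₁
      have hαβ : 0 < α + β := by
        rcases (Nat.Prime.dvd_mul hp).mp (Nat.minFac_dvd (m*n)) with hd | hd
        · have := Nat.Prime.factorization_pos_of_dvd hp hm.ne' hd; omega
        · have := Nat.Prime.factorization_pos_of_dvd hp hn.ne' hd; omega
      have gcd_split : ∀ a b M N : ℕ, a ≤ b → Nat.Coprime p M →
          Nat.gcd (p^a * M) (p^b * N) = p^a * Nat.gcd M N := by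
        intro a b M N hab hcop
        have e : p^b * N = p^a * (p^(b-a) * N) := by
          rw [← mul_assoc, ← pow_add, Nat.add_sub_cancel' hab]
        rw [e, Nat.gcd_mul_left, Nat.Coprime.gcd_mul_left_cancel_right N (hcop.pow_left _)]
      have hgcd : Nat.gcd m n = p ^ (min α β) * Nat.gcd m₁ n₁ := by
        rcases le_total α β with hab | hab
        · rw [← hmfac, ← hnfac, gcd_split α β m₁ n₁ hab cpm₁, min_eq_left hab]
        · rw [← hmfac, ← hnfac, Nat.gcd_comm, gcd_split β α n₁ m₁ hab cpn₁,
            min_eq_right hab, Nat.gcd_comm n₁ m₁]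
      set γ := min α β with hγ
      set G₁ := Nat.gcd m₁ n₁ with hG₁
      have hG₁pos : 0 < G₁ := Nat.gcd_pos_of_pos_left _ hm₁pos
      have cpG : Nat.Coprime (p^γ) G₁ :=
        (cpm₁.pow_left γ).coprime_dvd_right (Nat.gcd_dvd_left m₁ n₁)
      have hcopm : Nat.Coprime (p^(α+β)) (m₁*n₁) := ((cpm₁.mul_right cpn₁).pow_left _)
      have hmnfac : m * n = p^(α+β) * (m₁ * n₁) := by
        rw [← hmfac, ← hnfac]; ring
      have hlt : m₁ * n₁ < N := by
        have h2 : 2 ≤ p ^ (α+β) := le_trans hp.two_le (Nat.le_self_pow (by omega) p)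
        have hpos : 0 < m₁ * n₁ := Nat.mul_pos hm₁pos hn₁pos
        calc m₁ * n₁ = 1 * (m₁ * n₁) := by ring
        _ < p^(α+β) * (m₁ * n₁) := by
            exact Nat.mul_lt_mul_of_lt_of_le (by omega) (le_refl _) hpos
        _ = N := by rw [← hmnfac, hmnN]
      have hB := ih (m₁*n₁) hlt m₁ n₁ rfl hm₁pos hn₁pos
      have hterm : ∀ j ∈ Finset.range (γ+1), ∀ a ∈ G₁.divisors,
          f (m / (p^j * a)) * f (n / (p^j * a)) * ((moebius (p^j*a) : ℤ) : ℂ)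
            * g (p^j*a) * h (p^j*a)
          = (Sq (g p) (h p) (α-j) * Sq (g p) (h p) (β-j) * ((moebius (p^j) : ℤ) : ℂ)
              * (g p)^j * (h p)^j)
            * (f (m₁/a) * f (n₁/a) * ((moebius a : ℤ) : ℂ) * g a * h a) := by
        intro j hj a ha
        rw [Finset.mem_range] at hj
        rw [Nat.mem_divisors] at ha
        have hjα : j ≤ α := le_trans (by omega) (min_le_left α β)
        have hjβ : j ≤ β := le_trans (by omega) (min_le_right α β)
        have ham₁ : a ∣ m₁ := ha.1.trans (Nat.gcd_dvd_left m₁ n₁)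
        have han₁ : a ∣ n₁ := ha.1.trans (Nat.gcd_dvd_right m₁ n₁)
        have hapos : 0 < a := Nat.pos_of_dvd_of_pos ham₁ hm₁pos
        have hcopja : Nat.Coprime (p^j) a := (cpm₁.pow_left j).coprime_dvd_right ham₁
        have hdm : m / (p^j * a) = p^(α-j) * (m₁ / a) := by
          rw [← hmfac, ← Nat.div_mul_div_comm (pow_dvd_pow p hjα) ham₁,
            Nat.pow_div hjα hp.pos]
        have hdn : n / (p^j * a) = p^(β-j) * (n₁ / a) := by
          rw [← hnfac, ← Nat.div_mul_div_comm (pow_dvd_pow p hjβ) han₁,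
            Nat.pow_div hjβ hp.pos]
        have hm₁a : m₁ / a ≠ 0 := (Nat.div_pos (Nat.le_of_dvd hm₁pos ham₁) hapos).ne'
        have hn₁a : n₁ / a ≠ 0 := (Nat.div_pos (Nat.le_of_dvd hn₁pos han₁) hapos).ne'
        have hcop1 : Nat.Coprime (p^(α-j)) (m₁/a) :=
          (cpm₁.pow_left _).coprime_dvd_right (Nat.div_dvd_of_dvd ham₁)
        have hcop2 : Nat.Coprime (p^(β-j)) (n₁/a) :=
          (cpn₁.pow_left _).coprime_dvd_right (Nat.div_dvd_of_dvd han₁)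
        rw [hdm, hdn, f_mul (pow_ne_zero _ hp.pos.ne') hm₁a hcop1,
          f_mul (pow_ne_zero _ hp.pos.ne') hn₁a hcop2,
          f_pp hp, f_pp hp,
          isMultiplicative_moebius.map_mul_of_coprime hcopja,
          hg, hh, cm_powg, cm_powh]
        push_cast
        ring
      calc f (m * n) = f (p^(α+β)) * f (m₁ * n₁) := by
            rw [hmnfac, f_mul (pow_ne_zero _ hp.pos.ne') (Nat.mul_pos hm₁pos hn₁pos).ne' hcopm]
        _ = (∑ j ∈ Finset.range (γ+1),
              Sq (g p) (h p) (α-j) * Sq (g p) (h p) (β-j) * ((moebius (p^j) : ℤ) : ℂ)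
                * (g p)^j * (h p)^j)
            * (∑ a ∈ G₁.divisors,
              f (m₁/a) * f (n₁/a) * ((moebius a : ℤ) : ℂ) * g a * h a) := by
            rw [f_pp hp, prime_power_case hp α β, hB]
        _ = ∑ j ∈ Finset.range (γ+1), ∑ a ∈ G₁.divisors,
              f (m / (p^j * a)) * f (n / (p^j * a)) * ((moebius (p^j*a) : ℤ) : ℂ)
                * g (p^j*a) * h (p^j*a) := by
            rw [Finset.sum_mul_sum]
            exact (Finset.sum_congr rfl fun j hj =>
              Finset.sum_congr rfl fun a ha => (hterm j hj a ha)).symm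
        _ = ∑ a ∈ (Nat.gcd m n).divisors,
              f (m / a) * f (n / a) * (moebius a : ℂ) * g a * h a := by
            rw [hgcd, sum_coprime_mul_divisors (pow_ne_zero _ hp.pos.ne') hG₁pos.ne' cpG
              (fun a => f (m / a) * f (n / a) * (moebius a : ℂ) * g a * h a),
              Nat.sum_divisors_prime_pow hp]
  exact key (m*n) m n rfl hm hn
end

section
/- If g and h are completely multiplicative arithmetic functions and f = g * h (Dirichlet convolution), then for all positive integers m, n: f(m) f(n) = ∑_{a | gcd(m,n)} f(mn/a²) g(a) h(a). -/
private lemma br_div_dvd_div {a b c : ℕ} (hab : a ∣ b) (hbc : b ∣ c) :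
    b / a ∣ c / a := by
  obtain ⟨k, rfl⟩ := hbc
  rcases Nat.eq_zero_or_pos a with rfl | ha
  · simp
  · rw [mul_comm, Nat.mul_div_assoc k hab]
    exact dvd_mul_left _ _

theorem busche_ramanujan_ii (g h f : ℕ → ℂ)
    (hg1 : g 1 = 1) (hg : ∀ m n : ℕ, g (m * n) = g m * g n)
    (hh1 : h 1 = 1) (hh : ∀ m n : ℕ, h (m * n) = h m * h n)
    (hf : ∀ n : ℕ, f n = ∑ d ∈ n.divisors, g d * h (n / d))
    (m n : ℕ) (hm : 0 < m) (hn : 0 < n) :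
    f m * f n = ∑ a ∈ (Nat.gcd m n).divisors,
      f (m * n / (a ^ 2)) * g a * h a := by
  have hm0 : m ≠ 0 := hm.ne'
  have hn0 : n ≠ 0 := hn.ne'
  have hmn : 0 < m * n := by positivity
  -- the self-inverse map
  set φ : (Σ _ : ℕ, ℕ) → (Σ _ : ℕ, ℕ) := fun p =>
    ⟨Nat.gcd m (p.1 * p.2) / p.1, (p.1 * p.2) / (Nat.gcd m (p.1 * p.2) / p.1)⟩ with hφ
  have key : ∀ x y : ℕ, x ∣ m → x ≠ 0 →
      (φ ⟨x, y⟩).1 * (φ ⟨x, y⟩).2 = x * y ∧ φ (φ ⟨x, y⟩) = ⟨x, y⟩ := by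
    intro x y hxm hx0
    have hG0 : Nat.gcd m (x * y) ≠ 0 := fun hc => hm0 (Nat.eq_zero_of_gcd_eq_zero_left hc)
    have hxG : x ∣ Nat.gcd m (x * y) := Nat.dvd_gcd hxm (dvd_mul_right x y)
    have huxy : Nat.gcd m (x * y) / x ∣ x * y :=
      (Nat.div_dvd_of_dvd hxG).trans (Nat.gcd_dvd_right _ _)
    have hprod : (φ ⟨x, y⟩).1 * (φ ⟨x, y⟩).2 = x * y := Nat.mul_div_cancel' huxy
    refine ⟨hprod, ?_⟩
    have h1 : (φ (φ ⟨x, y⟩)).1 = x := by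
      show Nat.gcd m ((φ ⟨x, y⟩).1 * (φ ⟨x, y⟩).2) / (φ ⟨x, y⟩).1 = x
      rw [hprod]
      exact Nat.div_div_self hxG hG0
    have h2 : (φ (φ ⟨x, y⟩)).2 = y := by
      show (φ ⟨x, y⟩).1 * (φ ⟨x, y⟩).2 / (φ (φ ⟨x, y⟩)).1 = y
      rw [hprod, h1, Nat.mul_div_cancel_left y (Nat.pos_of_ne_zero hx0)]
    calc φ (φ ⟨x, y⟩) = ⟨(φ (φ ⟨x, y⟩)).1, (φ (φ ⟨x, y⟩)).2⟩ := (Sigma.eta _).symm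
      _ = ⟨x, y⟩ := by rw [h1, h2]
  -- rewrite LHS
  have hL : f m * f n = ∑ p ∈ (m.divisors.sigma fun _ => n.divisors),
      g (p.1 * p.2) * h (m * n / (p.1 * p.2)) := by
    rw [hf m, hf n, Finset.sum_mul_sum, Finset.sum_sigma]
    refine Finset.sum_congr rfl fun d hd => Finset.sum_congr rfl fun e he => ?_
    obtain ⟨hdm, -⟩ := Nat.mem_divisors.mp hd
    obtain ⟨hen, -⟩ := Nat.mem_divisors.mp he
    rw [hg, ← Nat.div_mul_div_comm hdm hen, hh]
    ring
  -- rewrite RHS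
  have hR : (∑ a ∈ (Nat.gcd m n).divisors, f (m * n / a ^ 2) * g a * h a)
      = ∑ q ∈ ((Nat.gcd m n).divisors.sigma fun a => (m * n / a ^ 2).divisors),
        g (q.1 * q.2) * h (m * n / (q.1 * q.2)) := by
    rw [Finset.sum_sigma]
    refine Finset.sum_congr rfl fun a ha => ?_
    obtain ⟨hag, -⟩ := Nat.mem_divisors.mp ha
    have ha0 : 0 < a := Nat.pos_of_mem_divisors ha
    have ham : a ∣ m := hag.trans (Nat.gcd_dvd_left _ _)
    have han : a ∣ n := hag.trans (Nat.gcd_dvd_right _ _)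
    have ha2 : a ^ 2 ∣ m * n := by rw [sq]; exact mul_dvd_mul ham han
    rw [hf (m * n / a ^ 2), Finset.sum_mul, Finset.sum_mul]
    refine Finset.sum_congr rfl fun c hc => ?_
    obtain ⟨hcd, -⟩ := Nat.mem_divisors.mp hc
    have hc0 : 0 < c := Nat.pos_of_mem_divisors hc
    have hac : a ^ 2 * c ∣ m * n := (Nat.dvd_div_iff_mul_dvd ha2).mp hcd
    obtain ⟨k, hk⟩ := hac
    have e1 : m * n / a ^ 2 / c = k := by
      rw [Nat.div_div_eq_div_mul, hk, Nat.mul_div_cancel_left]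
      positivity
    have e2 : m * n / (a * c) = a * k := by
      rw [hk, sq, show a * a * c * k = a * c * (a * k) by ring,
        Nat.mul_div_cancel_left _ (by positivity)]
    rw [e1, e2, hg, hh]
    ring
  rw [hL, hR]
  refine Finset.sum_nbij' φ φ ?_ ?_ ?_ ?_ ?_
  · -- forward membership
    rintro ⟨d, e⟩ hp
    rw [Finset.mem_sigma, Nat.mem_divisors, Nat.mem_divisors] at hp
    obtain ⟨⟨hdm, -⟩, ⟨hen, -⟩⟩ := hp
    have hd0 : 0 < d := Nat.pos_of_dvd_of_pos hdm hm
    have he0 : 0 < e := Nat.pos_of_dvd_of_pos hen hn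
    set G := Nat.gcd m (d * e) with hGdef
    have hG0 : G ≠ 0 := fun hc => hm0 (Nat.eq_zero_of_gcd_eq_zero_left hc)
    have hdG : d ∣ G := Nat.dvd_gcd hdm (dvd_mul_right d e)
    have haMd : G / d ∣ m / d := br_div_dvd_div hdG (Nat.gcd_dvd_left _ _)
    have haE : G / d ∣ e := by
      have := br_div_dvd_div hdG (Nat.gcd_dvd_right m (d * e))
      rwa [Nat.mul_div_cancel_left e hd0] at this
    have ham : G / d ∣ m := haMd.trans (Nat.div_dvd_of_dvd hdm)
    have han : G / d ∣ n := haE.trans hen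
    have haD : G / d ∣ d * e := (Nat.div_dvd_of_dvd hdG).trans (Nat.gcd_dvd_right _ _)
    have ha2 : (G / d) ^ 2 ∣ m * n := by rw [sq]; exact mul_dvd_mul ham han
    rw [Finset.mem_sigma, Nat.mem_divisors, Nat.mem_divisors]
    refine ⟨⟨Nat.dvd_gcd ham han, fun hc => hm0 (Nat.eq_zero_of_gcd_eq_zero_left hc)⟩, ?_, ?_⟩
    · -- second component divides m*n/(G/d)^2
      show d * e / (G / d) ∣ m * n / (G / d) ^ 2
      rw [Nat.dvd_div_iff_mul_dvd ha2, sq, mul_assoc, Nat.mul_div_cancel' haD]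
      have hamndiv : G / d ∣ m * n / (d * e) := by
        rw [← Nat.div_mul_div_comm hdm hen]
        exact haMd.trans (dvd_mul_right _ _)
      obtain ⟨k, hk⟩ : d * e ∣ m * n := mul_dvd_mul hdm hen
      rw [hk, Nat.mul_div_cancel_left k (by positivity)] at hamndiv
      obtain ⟨j, rfl⟩ := hamndiv
      rw [hk]
      exact ⟨j, by ring⟩
    · exact Nat.ne_of_gt (Nat.div_pos (Nat.le_of_dvd hmn ha2)
        (pow_pos (Nat.div_pos (Nat.le_of_dvd (Nat.pos_of_ne_zero hG0) hdG) hd0) 2))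
  · -- backward membership
    rintro ⟨a, c⟩ hq
    rw [Finset.mem_sigma, Nat.mem_divisors, Nat.mem_divisors] at hq
    obtain ⟨⟨hag, -⟩, hcd, -⟩ := hq
    have ham : a ∣ m := hag.trans (Nat.gcd_dvd_left _ _)
    have han : a ∣ n := hag.trans (Nat.gcd_dvd_right _ _)
    have ha0 : 0 < a := Nat.pos_of_dvd_of_pos ham hm
    have ha2 : a ^ 2 ∣ m * n := by rw [sq]; exact mul_dvd_mul ham han
    have hacmn : a ^ 2 * c ∣ m * n := (Nat.dvd_div_iff_mul_dvd ha2).mp hcd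
    set G := Nat.gcd m (a * c) with hGdef
    have hG0 : G ≠ 0 := fun hc => hm0 (Nat.eq_zero_of_gcd_eq_zero_left hc)
    have haG : a ∣ G := Nat.dvd_gcd ham (dvd_mul_right a c)
    have hGa0 : 0 < G / a := Nat.div_pos (Nat.le_of_dvd (Nat.pos_of_ne_zero hG0) haG) ha0
    have hdm : G / a ∣ m := (br_div_dvd_div haG (Nat.gcd_dvd_left _ _)).trans
      (Nat.div_dvd_of_dvd ham)
    have hdD : G / a ∣ a * c := (Nat.div_dvd_of_dvd haG).trans (Nat.gcd_dvd_right _ _)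
    rw [Finset.mem_sigma, Nat.mem_divisors, Nat.mem_divisors]
    refine ⟨⟨hdm, hm0⟩, ?_, hn0⟩
    show a * c / (G / a) ∣ n
    have hDnd : a * c ∣ n * (G / a) := by
      rw [← Nat.mul_div_assoc n haG, Nat.dvd_div_iff_mul_dvd (dvd_mul_of_dvd_right haG n),
        ← Nat.gcd_mul_left n m (a * c)]
      refine Nat.dvd_gcd ?_ ?_
      · rw [mul_comm n m]
        calc a * (a * c) = a ^ 2 * c := by ring
          _ ∣ m * n := hacmn
      · exact mul_dvd_mul_right han (a * c)
    have := br_div_dvd_div hdD hDnd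
    rwa [Nat.mul_div_cancel _ hGa0] at this
  · -- left inverse
    rintro ⟨d, e⟩ hp
    rw [Finset.mem_sigma, Nat.mem_divisors] at hp
    obtain ⟨⟨hdm, -⟩, -⟩ := hp
    exact (key d e hdm (Nat.pos_of_dvd_of_pos hdm hm).ne').2
  · -- right inverse
    rintro ⟨a, c⟩ hq
    rw [Finset.mem_sigma, Nat.mem_divisors] at hq
    obtain ⟨⟨hag, -⟩, -⟩ := hq
    have ham : a ∣ m := hag.trans (Nat.gcd_dvd_left _ _)
    exact (key a c ham (Nat.pos_of_dvd_of_pos ham hm).ne').2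
  · -- summand equality
    rintro ⟨d, e⟩ hp
    rw [Finset.mem_sigma, Nat.mem_divisors] at hp
    obtain ⟨⟨hdm, -⟩, -⟩ := hp
    rw [(key d e hdm (Nat.pos_of_dvd_of_pos hdm hm).ne').1]
end

section
/- For the divisor function d and all positive integers m, n: d(m) d(n) = ∑_{a | gcd(m,n)} d(mn/a²). -/
open Finset

private lemma card_divisors_ppow {p : ℕ} (hp : p.Prime) (k : ℕ) :
    (p ^ k).divisors.card = k + 1 := by
  rw [Nat.divisors_prime_pow hp, Finset.card_map, Finset.card_range]

private lemma aux_sum (c : ℕ) : ∀ s : ℕ, 2 * c ≤ s →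
    ∑ t ∈ Finset.range (c + 1), (s - 2 * t + 1) = (c + 1) * (s - c + 1) := by
  induction c with
  | zero => intro s hs; simp
  | succ c ih =>
    intro s hs
    obtain ⟨r, rfl⟩ : ∃ r, s = 2 * c + 2 + r := ⟨s - (2 * c + 2), by omega⟩
    rw [Finset.sum_range_succ, ih _ (by omega)]
    have h1 : 2 * c + 2 + r - 2 * (c + 1) + 1 = r + 1 := by omega
    have h2 : 2 * c + 2 + r - c + 1 = c + r + 3 := by omega
    have h3 : 2 * c + 2 + r - (c + 1) + 1 = c + r + 2 := by omega
    rw [h1, h2, h3]; ring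

/-- Splitting a sum over the divisors of a product of coprimes into a double sum. -/
private lemma sum_divisors_coprime {M : Type*} [AddCommMonoid M] {m n : ℕ}
    (h : Nat.Coprime m n) (hm : m ≠ 0) (hn : n ≠ 0) (f : ℕ → M) :
    ∑ a ∈ (m * n).divisors, f a = ∑ x ∈ m.divisors, ∑ y ∈ n.divisors, f (x * y) := by
  rw [← Finset.sum_product']
  have key : ∀ a ∈ (m * n).divisors, a.gcd m * a.gcd n = a := by
    intro a ha
    rw [Nat.mem_divisors] at ha
    rw [← Nat.Coprime.gcd_mul a h, Nat.gcd_eq_left ha.1]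
  refine Finset.sum_nbij' (i := fun a : ℕ => (a.gcd m, a.gcd n))
    (j := fun p : ℕ × ℕ => p.1 * p.2) ?_ ?_ ?_ ?_ ?_
  · intro a ha
    rw [Nat.mem_divisors] at ha
    simp only [Finset.mem_product, Nat.mem_divisors]
    exact ⟨⟨Nat.gcd_dvd_right a m, hm⟩, ⟨Nat.gcd_dvd_right a n, hn⟩⟩
  · rintro ⟨x, y⟩ hxy
    simp only [Finset.mem_product, Nat.mem_divisors] at hxy
    exact Nat.mem_divisors.mpr ⟨mul_dvd_mul hxy.1.1 hxy.2.1, mul_ne_zero hm hn⟩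
  · intro a ha
    exact key a ha
  · rintro ⟨x, y⟩ hxy
    simp only [Finset.mem_product, Nat.mem_divisors] at hxy
    have hyx : Nat.Coprime y m := Nat.Coprime.coprime_dvd_left hxy.2.1 h.symm
    have hxn : Nat.Coprime x n := Nat.Coprime.coprime_dvd_left hxy.1.1 h
    have e1 : (x * y).gcd m = x := by
      rw [Nat.Coprime.gcd_mul_right_cancel x hyx, Nat.gcd_eq_left hxy.1.1]
    have e2 : (x * y).gcd n = y := by
      rw [mul_comm, Nat.Coprime.gcd_mul_right_cancel y hxn, Nat.gcd_eq_left hxy.2.1]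
    simp [e1, e2]
  · intro a ha
    rw [key a ha]

private lemma key : ∀ m : ℕ, 0 < m → ∀ n : ℕ, 0 < n →
    m.divisors.card * n.divisors.card =
      ∑ a ∈ (Nat.gcd m n).divisors, (m * n / a ^ 2).divisors.card := by
  intro m
  induction m using Nat.strong_induction_on with
  | _ m IH =>
    intro hm n hn
    rcases eq_or_ne m 1 with rfl | hm1
    · simp [Nat.gcd_one_left]
    -- setup
    have hm0 : m ≠ 0 := hm.ne'
    have hn0 : n ≠ 0 := hn.ne'
    set p := m.minFac with hpdef
    have hp : p.Prime := Nat.minFac_prime hm1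
    set i := m.factorization p with hidef
    set j := n.factorization p with hjdef
    set m' := m / p ^ i with hm'def
    set n' := n / p ^ j with hn'def
    have hmm : p ^ i * m' = m := Nat.ordProj_mul_ordCompl_eq_self m p
    have hnn : p ^ j * n' = n := Nat.ordProj_mul_ordCompl_eq_self n p
    have hpm' : ¬ p ∣ m' := Nat.not_dvd_ordCompl hp hm0
    have hpn' : ¬ p ∣ n' := Nat.not_dvd_ordCompl hp hn0
    have hm'0 : m' ≠ 0 := by
      intro h; rw [h, mul_zero] at hmm; exact hm0 hmm.symm
    have hn'0 : n' ≠ 0 := by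
      intro h; rw [h, mul_zero] at hnn; exact hn0 hnn.symm
    have hi : 0 < i := hp.factorization_pos_of_dvd hm0 (Nat.minFac_dvd m)
    have hm'lt : m' < m := by
      apply Nat.div_lt_self hm
      exact Nat.one_lt_pow hi.ne' hp.one_lt
    -- coprimality facts
    have cpm' : Nat.Coprime p m' := (Nat.Prime.coprime_iff_not_dvd hp).mpr hpm'
    have cpn' : Nat.Coprime p n' := (Nat.Prime.coprime_iff_not_dvd hp).mpr hpn'
    set c := min i j with hcdef
    set g := Nat.gcd m' n' with hgdef
    have hg0 : g ≠ 0 := Nat.gcd_ne_zero_left hm'0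
    have hgm' : g ∣ m' := Nat.gcd_dvd_left _ _
    have hgn' : g ∣ n' := Nat.gcd_dvd_right _ _
    have cpg : Nat.Coprime (p ^ c) g :=
      Nat.Coprime.pow_left _ (Nat.Coprime.coprime_dvd_right hgm' cpm')
    -- gcd m n = p^c * g
    have hgcd : Nat.gcd m n = p ^ c * g := by
      rw [← hmm, ← hnn]
      rw [Nat.Coprime.gcd_mul _ (cpn'.pow_left j)]
      congr 1
      · rw [Nat.Coprime.gcd_mul_right_cancel _ ((cpm'.symm).pow_right j), hcdef]
        rcases le_total i j with h | h
        · rw [Nat.gcd_eq_left (pow_dvd_pow p h), min_eq_left h]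
        · rw [Nat.gcd_eq_right (pow_dvd_pow p h), min_eq_right h]
      · rw [mul_comm (p ^ i) m', Nat.Coprime.gcd_mul_right_cancel _ (cpn'.pow_left i)]
    have hci : c ≤ i := by rw [hcdef]; exact min_le_left _ _
    have hcj : c ≤ j := by rw [hcdef]; exact min_le_right _ _
    -- rewrite the inner term
    have hterm : ∀ k ∈ Finset.range (c + 1), ∀ y ∈ g.divisors,
        (m * n / (p ^ k * y) ^ 2).divisors.card
          = (i + j - 2 * k + 1) * ((m' * n' / y ^ 2).divisors.card) := by
      intro k hk y hy
      rw [Finset.mem_range] at hk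
      rw [Nat.mem_divisors] at hy
      have hk' : 2 * k ≤ i + j := by omega
      have hym' : y ∣ m' := hy.1.trans hgm'
      have hyn' : y ∣ n' := hy.1.trans hgn'
      have hy2 : y ^ 2 ∣ m' * n' := by rw [pow_two]; exact mul_dvd_mul hym' hyn'
      have hp2 : p ^ (2 * k) ∣ p ^ (i + j) := pow_dvd_pow p hk'
      have hmn : m * n = p ^ (i + j) * (m' * n') := by
        rw [← hmm, ← hnn, pow_add]; ring
      have hden : (p ^ k * y) ^ 2 = p ^ (2 * k) * y ^ 2 := by
        rw [mul_pow, ← pow_mul, mul_comm k 2]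
      rw [hmn, hden, ← Nat.div_mul_div_comm hp2 hy2, Nat.pow_div hk' hp.pos]
      have cop : Nat.Coprime (p ^ (i + j - 2 * k)) (m' * n' / y ^ 2) :=
        Nat.Coprime.pow_left _
          ((cpm'.mul_right cpn').coprime_dvd_right (Nat.div_dvd_of_dvd hy2))
      rw [Nat.Coprime.card_divisors_mul cop, card_divisors_ppow hp]
    have hDm : m.divisors.card = (i + 1) * m'.divisors.card := by
      rw [← hmm, Nat.Coprime.card_divisors_mul (cpm'.pow_left i), card_divisors_ppow hp]
    have hDn : n.divisors.card = (j + 1) * n'.divisors.card := by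
      rw [← hnn, Nat.Coprime.card_divisors_mul (cpn'.pow_left j), card_divisors_ppow hp]
    have hIH := IH m' hm'lt (Nat.pos_of_ne_zero hm'0) n' (Nat.pos_of_ne_zero hn'0)
    have hcc : (c + 1) * (i + j - c + 1) = (i + 1) * (j + 1) := by
      rcases le_total i j with h | h
      · have h1 : c = i := by rw [hcdef]; exact min_eq_left h
        have h2 : i + j - c + 1 = j + 1 := by omega
        rw [h2, h1]
      · have h1 : c = j := by rw [hcdef]; exact min_eq_right h
        have h2 : i + j - c + 1 = i + 1 := by omega
        rw [h2, h1, mul_comm]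
    rw [hgcd, sum_divisors_coprime cpg (pow_ne_zero c hp.pos.ne') hg0,
      Nat.sum_divisors_prime_pow hp]
    rw [Finset.sum_congr rfl fun k hk => Finset.sum_congr rfl fun y hy => hterm k hk y hy]
    simp_rw [← Finset.mul_sum]
    rw [← Finset.sum_mul, aux_sum c (i + j) (by omega), ← hIH, hDm, hDn, hcc]
    ring

theorem busche_ramanujan_divisor_count_prod (m n : ℕ) (hm : 0 < m) (hn : 0 < n) :
    m.divisors.card * n.divisors.card =
      ∑ a ∈ (Nat.gcd m n).divisors, (m * n / a ^ 2).divisors.card := by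
  exact key m hm n hn
end

section
/- For the sum-of-divisors function σ and all positive integers m, n: σ(m) σ(n) = ∑_{a | gcd(m,n)} σ(mn/a²) a. -/
open Finset Nat

private lemma brs_forward (m n a b : ℕ) (hm : m ≠ 0) (hn : n ≠ 0)
    (ham : a ∣ m) (hbn : b ∣ n) (ha0 : a ≠ 0) (hb0 : b ≠ 0) :
    Nat.gcd a (n / b) ∣ Nat.gcd m n ∧
    a * b / Nat.gcd a (n / b) ∣ m * n / Nat.gcd a (n / b) ^ 2 ∧
    Nat.gcd (a * b / Nat.gcd a (n / b)) (n / Nat.gcd a (n / b)) = b ∧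
    a * b = a * b / Nat.gcd a (n / b) * Nat.gcd a (n / b) := by
  set d := Nat.gcd a (n / b) with hd
  have hnb0 : n / b ≠ 0 := (Nat.div_pos (Nat.le_of_dvd (Nat.pos_of_ne_zero hn) hbn)
    (Nat.pos_of_ne_zero hb0)).ne'
  have hd0 : d ≠ 0 := Nat.gcd_ne_zero_left ha0
  have hda : d ∣ a := Nat.gcd_dvd_left _ _
  have hdnb : d ∣ n / b := Nat.gcd_dvd_right _ _
  have hdn : d ∣ n := hdnb.trans (Nat.div_dvd_of_dvd hbn)
  have hdm : d ∣ m := hda.trans ham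
  have hdg : d ∣ Nat.gcd m n := Nat.dvd_gcd hdm hdn
  have hbd : b * d ∣ n := by
    have h1 : b * d ∣ b * (n / b) := mul_dvd_mul_left b hdnb
    rwa [Nat.mul_div_cancel' hbn] at h1
  have hdab : d ∣ a * b := hda.mul_right b
  have hd2 : d ^ 2 ∣ m * n := by rw [sq]; exact mul_dvd_mul hdm hdn
  have hval : a * b = a * b / d * d := (Nat.div_mul_cancel hdab).symm
  have he : a * b / d ∣ m * n / d ^ 2 := by
    rw [Nat.dvd_div_iff_mul_dvd hd2]
    have : d ^ 2 * (a * b / d) = d * (a * b) := by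
      rw [sq, mul_assoc, Nat.mul_div_cancel' hdab]
    rw [this]
    have : a * (b * d) ∣ m * n := mul_dvd_mul ham hbd
    calc d * (a * b) = a * (b * d) := by ring
    _ ∣ m * n := this
  have he0 : a * b / d ≠ 0 :=
    (Nat.div_pos (Nat.le_of_dvd (Nat.pos_of_ne_zero (mul_ne_zero ha0 hb0)) hdab)
      (Nat.pos_of_ne_zero hd0)).ne'
  have hnd0 : n / d ≠ 0 := (Nat.div_pos (Nat.le_of_dvd (Nat.pos_of_ne_zero hn) hdn)
    (Nat.pos_of_ne_zero hd0)).ne'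
  refine ⟨hdg, he, ?_, hval⟩
  -- gcd (a*b/d) (n/d) = b via factorizations
  have fd : ∀ p, d.factorization p = min (a.factorization p)
      (n.factorization p - b.factorization p) := by
    intro p
    rw [hd, Nat.factorization_gcd ha0 hnb0, Finsupp.inf_apply, Nat.factorization_div hbn,
      Finsupp.tsub_apply]
  have fe : ∀ p, (a * b / d).factorization p =
      a.factorization p + b.factorization p - d.factorization p := by
    intro p
    rw [Nat.factorization_div hdab, Finsupp.tsub_apply, Nat.factorization_mul ha0 hb0,
      Finsupp.add_apply]
  apply Nat.eq_of_factorization_eq (Nat.gcd_ne_zero_left he0) hb0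
  intro p
  have hbn' : b.factorization p ≤ n.factorization p :=
    Finsupp.le_def.mp ((Nat.factorization_le_iff_dvd hb0 hn).mpr hbn) p
  rw [Nat.factorization_gcd he0 hnd0, Finsupp.inf_apply, fe p,
    Nat.factorization_div hdn, Finsupp.tsub_apply, fd p]
  omega

private lemma brs_backward (m n d e : ℕ) (hm : m ≠ 0) (hn : n ≠ 0)
    (hdg : d ∣ Nat.gcd m n) (he : e ∣ m * n / d ^ 2) (hd0 : d ≠ 0) (he0 : e ≠ 0) :
    d * e / Nat.gcd e (n / d) ∣ m ∧ Nat.gcd e (n / d) ∣ n ∧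
    Nat.gcd (d * e / Nat.gcd e (n / d)) (n / Nat.gcd e (n / d)) = d ∧
    d * e = d * e / Nat.gcd e (n / d) * Nat.gcd e (n / d) := by
  set b := Nat.gcd e (n / d) with hbdef
  have hdm : d ∣ m := hdg.trans (Nat.gcd_dvd_left m n)
  have hdn : d ∣ n := hdg.trans (Nat.gcd_dvd_right m n)
  have hnd0 : n / d ≠ 0 := (Nat.div_pos (Nat.le_of_dvd (Nat.pos_of_ne_zero hn) hdn)
    (Nat.pos_of_ne_zero hd0)).ne'
  have hb0 : b ≠ 0 := Nat.gcd_ne_zero_left he0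
  have hbe : b ∣ e := Nat.gcd_dvd_left _ _
  have hbnd : b ∣ n / d := Nat.gcd_dvd_right _ _
  have hbn : b ∣ n := hbnd.trans (Nat.div_dvd_of_dvd hdn)
  have hbde : b ∣ d * e := hbe.mul_left d
  have ha0 : d * e / b ≠ 0 :=
    (Nat.div_pos (Nat.le_of_dvd (Nat.pos_of_ne_zero (mul_ne_zero hd0 he0)) hbde)
      (Nat.pos_of_ne_zero hb0)).ne'
  have hd2 : d ^ 2 ∣ m * n := by rw [sq]; exact mul_dvd_mul hdm hdn
  -- pointwise facts
  have fdm : ∀ p, d.factorization p ≤ m.factorization p := fun p =>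
    Finsupp.le_def.mp ((Nat.factorization_le_iff_dvd hd0 hm).mpr hdm) p
  have fdn : ∀ p, d.factorization p ≤ n.factorization p := fun p =>
    Finsupp.le_def.mp ((Nat.factorization_le_iff_dvd hd0 hn).mpr hdn) p
  have fmnd : ∀ p, (m * n / d ^ 2).factorization p =
      m.factorization p + n.factorization p - 2 * d.factorization p := by
    intro p
    rw [Nat.factorization_div hd2, Finsupp.tsub_apply, Nat.factorization_mul hm hn,
      Finsupp.add_apply, Nat.factorization_pow, Finsupp.smul_apply, smul_eq_mul]
  have fe_le : ∀ p, e.factorization p ≤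
      m.factorization p + n.factorization p - 2 * d.factorization p := by
    intro p
    have := Finsupp.le_def.mp ((Nat.factorization_le_iff_dvd he0
      ((Nat.div_pos (Nat.le_of_dvd (Nat.pos_of_ne_zero (mul_ne_zero hm hn)) hd2)
        (Nat.pos_of_ne_zero (pow_ne_zero 2 hd0))).ne' : m * n / d ^ 2 ≠ 0)).mpr he) p
    · rwa [fmnd p] at this
  have fb : ∀ p, b.factorization p = min (e.factorization p)
      (n.factorization p - d.factorization p) := by
    intro p
    rw [hbdef, Nat.factorization_gcd he0 hnd0, Finsupp.inf_apply, Nat.factorization_div hdn,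
      Finsupp.tsub_apply]
  have fa : ∀ p, (d * e / b).factorization p =
      d.factorization p + e.factorization p - b.factorization p := by
    intro p
    rw [Nat.factorization_div hbde, Finsupp.tsub_apply, Nat.factorization_mul hd0 he0,
      Finsupp.add_apply]
  have ham : d * e / b ∣ m := by
    rw [← Nat.factorization_le_iff_dvd ha0 hm, Finsupp.le_def]
    intro p
    rw [fa p, fb p]
    have := fe_le p; have := fdm p; have := fdn p
    omega
  refine ⟨ham, hbn, ?_, (Nat.div_mul_cancel hbde).symm⟩
  have hnb0 : n / b ≠ 0 := (Nat.div_pos (Nat.le_of_dvd (Nat.pos_of_ne_zero hn) hbn)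
    (Nat.pos_of_ne_zero hb0)).ne'
  apply Nat.eq_of_factorization_eq (Nat.gcd_ne_zero_left ha0) hd0
  intro p
  rw [Nat.factorization_gcd ha0 hnb0, Finsupp.inf_apply, fa p,
    Nat.factorization_div hbn, Finsupp.tsub_apply, fb p]
  have := fe_le p; have := fdm p; have := fdn p
  omega

theorem busche_ramanujan_sigma_prod (m n : ℕ) (hm : 0 < m) (hn : 0 < n) :
    ArithmeticFunction.sigma 1 m * ArithmeticFunction.sigma 1 n =
      ∑ a ∈ (Nat.gcd m n).divisors, ArithmeticFunction.sigma 1 (m * n / a ^ 2) * a := by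
  have hm' := hm.ne'
  have hn' := hn.ne'
  have hmn : m * n ≠ 0 := mul_ne_zero hm' hn'
  have hg0 : Nat.gcd m n ≠ 0 := Nat.gcd_ne_zero_left hm'
  simp only [ArithmeticFunction.sigma_one_apply]
  rw [Finset.sum_mul_sum]
  simp only [Finset.sum_mul]
  rw [Finset.sum_sigma' m.divisors (fun _ => n.divisors) (fun a b => a * b),
    Finset.sum_sigma' (Nat.gcd m n).divisors (fun d => (m * n / d ^ 2).divisors)
      (fun d e => e * d)]
  refine Finset.sum_nbij'
    (fun x => ⟨Nat.gcd x.1 (n / x.2), x.1 * x.2 / Nat.gcd x.1 (n / x.2)⟩)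
    (fun x => ⟨x.1 * x.2 / Nat.gcd x.2 (n / x.1), Nat.gcd x.2 (n / x.1)⟩)
    ?_ ?_ ?_ ?_ ?_
  · rintro ⟨a, b⟩ hab
    rw [Finset.mem_sigma] at hab
    have ha0 : a ≠ 0 := (Nat.pos_of_mem_divisors hab.1).ne'
    have hb0 : b ≠ 0 := (Nat.pos_of_mem_divisors hab.2).ne'
    obtain ⟨⟨ham, -⟩, hbn, -⟩ : (a ∣ m ∧ m ≠ 0) ∧ b ∣ n ∧ n ≠ 0 :=
      ⟨Nat.mem_divisors.mp hab.1, Nat.mem_divisors.mp hab.2⟩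
    obtain ⟨h1, h2, -, -⟩ := brs_forward m n a b hm' hn' ham hbn ha0 hb0
    rw [Finset.mem_sigma, Nat.mem_divisors, Nat.mem_divisors]
    have hd0 : Nat.gcd a (n / b) ≠ 0 := Nat.gcd_ne_zero_left ha0
    have hd2 : Nat.gcd a (n / b) ^ 2 ∣ m * n := by
      rw [sq]
      exact mul_dvd_mul ((Nat.gcd_dvd_left _ _).trans ham)
        (((Nat.gcd_dvd_right _ _).trans (Nat.div_dvd_of_dvd hbn)).trans dvd_rfl)
    exact ⟨⟨h1, hg0⟩, h2, (Nat.div_pos (Nat.le_of_dvd (Nat.pos_of_ne_zero hmn) hd2)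
      (Nat.pos_of_ne_zero (pow_ne_zero 2 hd0))).ne'⟩
  · rintro ⟨d, e⟩ hde
    rw [Finset.mem_sigma] at hde
    have hd0 : d ≠ 0 := (Nat.pos_of_mem_divisors hde.1).ne'
    have he0 : e ≠ 0 := (Nat.pos_of_mem_divisors hde.2).ne'
    have hdg : d ∣ Nat.gcd m n := (Nat.mem_divisors.mp hde.1).1
    have he : e ∣ m * n / d ^ 2 := (Nat.mem_divisors.mp hde.2).1
    obtain ⟨h1, h2, -, -⟩ := brs_backward m n d e hm' hn' hdg he hd0 he0
    rw [Finset.mem_sigma, Nat.mem_divisors, Nat.mem_divisors]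
    exact ⟨⟨h1, hm'⟩, h2, hn'⟩
  · rintro ⟨a, b⟩ hab
    rw [Finset.mem_sigma] at hab
    have ha0 : a ≠ 0 := (Nat.pos_of_mem_divisors hab.1).ne'
    have hb0 : b ≠ 0 := (Nat.pos_of_mem_divisors hab.2).ne'
    have ham : a ∣ m := (Nat.mem_divisors.mp hab.1).1
    have hbn : b ∣ n := (Nat.mem_divisors.mp hab.2).1
    obtain ⟨-, -, h3, h4⟩ := brs_forward m n a b hm' hn' ham hbn ha0 hb0
    refine Sigma.ext ?_ (heq_of_eq h3)
    show Nat.gcd a (n / b) * (a * b / Nat.gcd a (n / b)) /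
      Nat.gcd (a * b / Nat.gcd a (n / b)) (n / Nat.gcd a (n / b)) = a
    have hmul : Nat.gcd a (n / b) * (a * b / Nat.gcd a (n / b)) = a * b := by
      rw [mul_comm]; exact h4.symm
    rw [h3, hmul, Nat.mul_div_cancel a (Nat.pos_of_ne_zero hb0)]
  · rintro ⟨d, e⟩ hde
    rw [Finset.mem_sigma] at hde
    have hd0 : d ≠ 0 := (Nat.pos_of_mem_divisors hde.1).ne'
    have he0 : e ≠ 0 := (Nat.pos_of_mem_divisors hde.2).ne'
    have hdg : d ∣ Nat.gcd m n := (Nat.mem_divisors.mp hde.1).1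
    have he : e ∣ m * n / d ^ 2 := (Nat.mem_divisors.mp hde.2).1
    obtain ⟨-, -, h3, h4⟩ := brs_backward m n d e hm' hn' hdg he hd0 he0
    refine Sigma.ext h3 (heq_of_eq ?_)
    show d * e / Nat.gcd e (n / d) * Nat.gcd e (n / d) /
      Nat.gcd (d * e / Nat.gcd e (n / d)) (n / Nat.gcd e (n / d)) = e
    rw [h3, ← h4, Nat.mul_div_cancel_left e (Nat.pos_of_ne_zero hd0)]
  · rintro ⟨a, b⟩ hab
    rw [Finset.mem_sigma] at hab
    have ha0 : a ≠ 0 := (Nat.pos_of_mem_divisors hab.1).ne'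
    have hb0 : b ≠ 0 := (Nat.pos_of_mem_divisors hab.2).ne'
    have ham : a ∣ m := (Nat.mem_divisors.mp hab.1).1
    have hbn : b ∣ n := (Nat.mem_divisors.mp hab.2).1
    obtain ⟨-, -, -, h4⟩ := brs_forward m n a b hm' hn' ham hbn ha0 hb0
    exact h4
end

section
/- For every k ∈ ℂ and all positive integers m, n: σ_k(mn) = ∑_{a | gcd(m,n)} σ_k(m/a) σ_k(n/a) μ(a) a^k, where σ_k(n) = ∑_{d | n} d^k. -/
open Finset ArithmeticFunction

/-- The generalized sum-of-divisors function with complex exponent `k`. -/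
noncomputable def sigmaC (k : ℂ) (n : ℕ) : ℂ := ∑ d ∈ n.divisors, (d : ℂ) ^ k

namespace BuscheAux

/-- The right-hand side as a function. -/
noncomputable def R (k : ℂ) (m n : ℕ) : ℂ :=
  ∑ a ∈ (Nat.gcd m n).divisors,
      sigmaC k (m / a) * sigmaC k (n / a) * (ArithmeticFunction.moebius a : ℂ) *
        (a : ℂ) ^ k

lemma natCast_mul_cpow (k : ℂ) (a b : ℕ) :
    ((a * b : ℕ) : ℂ) ^ k = (a : ℂ) ^ k * (b : ℂ) ^ k := by
  push_cast
  exact Complex.natCast_mul_natCast_cpow a b k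

lemma natCast_pow_cpow (k : ℂ) (p i : ℕ) :
    ((p ^ i : ℕ) : ℂ) ^ k = ((p : ℂ) ^ k) ^ i := by
  push_cast
  rw [← Complex.natCast_cpow_natCast_mul p i k, Complex.cpow_nat_mul]

lemma sigmaC_one (k : ℂ) : sigmaC k 1 = 1 := by
  simp [sigmaC, Complex.one_cpow]

/-- Splitting a sum over divisors of a product of coprime numbers. -/
lemma sum_divisors_coprime_mul {m n : ℕ} (hm : m ≠ 0) (hn : n ≠ 0)
    (h : Nat.Coprime m n) (f : ℕ → ℂ) :
    ∑ d ∈ (m * n).divisors, f d = ∑ i ∈ m.divisors, ∑ j ∈ n.divisors, f (i * j) := by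
  have hsp := Finset.sum_product' (s := m.divisors) (t := n.divisors)
    (f := fun i j => f (i * j))
  rw [← hsp]
  refine Finset.sum_nbij' (fun d => (Nat.gcd d m, Nat.gcd d n)) (fun p => p.1 * p.2)
    ?_ ?_ ?_ ?_ ?_
  · intro d hd
    rw [Nat.mem_divisors] at hd
    simp only [Finset.mem_product, Nat.mem_divisors]
    exact ⟨⟨Nat.gcd_dvd_right _ _, hm⟩, ⟨Nat.gcd_dvd_right _ _, hn⟩⟩
  · intro p hp
    simp only [Finset.mem_product, Nat.mem_divisors] at hp
    exact Nat.mem_divisors.mpr ⟨mul_dvd_mul hp.1.1 hp.2.1, mul_ne_zero hm hn⟩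
  · intro d hd
    rw [Nat.mem_divisors] at hd
    exact (Nat.gcd_mul_gcd_eq_iff_dvd_mul_of_coprime h).mpr hd.1
  · intro p hp
    simp only [Finset.mem_product, Nat.mem_divisors] at hp
    obtain ⟨⟨hi, -⟩, ⟨hj, -⟩⟩ := hp
    have h1 : Nat.gcd (p.1 * p.2) m = p.1 := by
      refine Nat.dvd_antisymm ?_ (Nat.dvd_gcd (dvd_mul_right _ _) hi)
      have hcop : Nat.Coprime (Nat.gcd (p.1 * p.2) m) p.2 :=
        Nat.Coprime.coprime_dvd_left (Nat.gcd_dvd_right _ _)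
          (Nat.Coprime.coprime_dvd_right hj h)
      exact hcop.dvd_of_dvd_mul_right (Nat.gcd_dvd_left _ _)
    have h2 : Nat.gcd (p.1 * p.2) n = p.2 := by
      refine Nat.dvd_antisymm ?_ (Nat.dvd_gcd (dvd_mul_left _ _) hj)
      have hcop : Nat.Coprime (Nat.gcd (p.1 * p.2) n) p.1 :=
        Nat.Coprime.coprime_dvd_left (Nat.gcd_dvd_right _ _)
          (Nat.Coprime.coprime_dvd_right hi h.symm)
      refine hcop.dvd_of_dvd_mul_right ?_
      rw [mul_comm]
      exact Nat.gcd_dvd_left _ _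
    rw [h1, h2]
  · intro d hd
    rw [Nat.mem_divisors] at hd
    exact congrArg f ((Nat.gcd_mul_gcd_eq_iff_dvd_mul_of_coprime h).mpr hd.1).symm

lemma sigmaC_mul_coprime (k : ℂ) {m n : ℕ} (hm : m ≠ 0) (hn : n ≠ 0)
    (h : Nat.Coprime m n) : sigmaC k (m * n) = sigmaC k m * sigmaC k n := by
  rw [sigmaC, sum_divisors_coprime_mul hm hn h, sigmaC, sigmaC, Finset.sum_mul_sum]
  refine Finset.sum_congr rfl fun i _ => Finset.sum_congr rfl fun j _ => ?_
  exact natCast_mul_cpow k i j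

lemma sigmaC_prime_pow (k : ℂ) {p : ℕ} (hp : p.Prime) (e : ℕ) :
    sigmaC k (p ^ e) = ∑ i ∈ range (e + 1), ((p : ℂ) ^ k) ^ i := by
  rw [sigmaC, Nat.sum_divisors_prime_pow hp]
  exact Finset.sum_congr rfl fun i _ => natCast_pow_cpow k p i

lemma geom (x : ℂ) (a b : ℕ) :
    (∑ i ∈ range (a + 1), x ^ i) * (∑ i ∈ range (b + 1), x ^ i) =
      (∑ i ∈ range (a + b + 1), x ^ i) +
        x * ((∑ i ∈ range a, x ^ i) * (∑ i ∈ range b, x ^ i)) := by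
  induction b with
  | zero => simp
  | succ b ih =>
    have h1 := Finset.sum_range_succ (fun i => x ^ i) a
    have h2 := Finset.sum_range_succ (fun i => x ^ i) (b + 1)
    have h4 := Finset.sum_range_succ (fun i => x ^ i) b
    have h3 : ∑ i ∈ range (a + (b + 1) + 1), x ^ i
        = (∑ i ∈ range (a + b + 1), x ^ i) + x ^ (a + b + 1) := by
      rw [show a + (b + 1) + 1 = (a + b + 1) + 1 by ring]
      exact Finset.sum_range_succ (fun i => x ^ i) (a + b + 1)
    rw [h4] at ih
    rw [h2, h3, h4]
    linear_combination ih + x ^ (b + 1) * h1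

lemma prime_case (k : ℂ) {p : ℕ} (hp : p.Prime) (a b : ℕ) :
    sigmaC k (p ^ a * p ^ b) = R k (p ^ a) (p ^ b) := by
  have hppos := hp.pos
  have hg : Nat.gcd (p ^ a) (p ^ b) = p ^ min a b := by
    rcases le_total a b with h | h
    · rw [Nat.gcd_eq_left (pow_dvd_pow p h), min_eq_left h]
    · rw [Nat.gcd_eq_right (pow_dvd_pow p h), min_eq_right h]
  rcases Nat.eq_zero_or_pos a with ha | ha
  · subst ha
    simp only [pow_zero, one_mul, R]
    rw [Nat.gcd_one_left]
    simp [sigmaC_one, Complex.one_cpow, Nat.divisors_one]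
  rcases Nat.eq_zero_or_pos b with hb | hb
  · subst hb
    simp only [pow_zero, mul_one, R]
    rw [Nat.gcd_one_right]
    simp [sigmaC_one, Complex.one_cpow, Nat.divisors_one]
  -- main case: a, b ≥ 1
  obtain ⟨a', rfl⟩ : ∃ a', a = a' + 1 := ⟨a - 1, (Nat.succ_pred_eq_of_pos ha).symm⟩
  obtain ⟨b', rfl⟩ : ∃ b', b = b' + 1 := ⟨b - 1, (Nat.succ_pred_eq_of_pos hb).symm⟩
  rw [R, hg, Nat.sum_divisors_prime_pow hp]
  have hmin : min (a' + 1) (b' + 1) + 1 = (min a' b' + 1) + 1 := by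
    rw [Nat.succ_min_succ]
  rw [hmin]
  set F : ℕ → ℂ := fun j =>
    sigmaC k (p ^ (a' + 1) / p ^ j) * sigmaC k (p ^ (b' + 1) / p ^ j) *
      ((moebius (p ^ j) : ℤ) : ℂ) * ((p ^ j : ℕ) : ℂ) ^ k with hF
  have hsub : ∑ j ∈ range (min a' b' + 1 + 1), F j = ∑ j ∈ range 2, F j := by
    refine (Finset.sum_subset ?_ ?_).symm
    · exact Finset.range_subset_range.mpr (by omega)
    · intro j hj hj2
      simp only [Finset.mem_range] at hj hj2
      have h2j : 2 ≤ j := by omega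
      have : moebius (p ^ j) = 0 := by
        rw [ArithmeticFunction.moebius_apply_prime_pow hp (by omega)]
        simp [show j ≠ 1 by omega]
      rw [hF]
      simp only [this]
      push_cast
      ring
  rw [hsub, Finset.sum_range_succ, Finset.sum_range_one, hF]
  simp only []
  rw [pow_zero, pow_one, Nat.div_one, Nat.div_one]
  have hdiv1 : p ^ (a' + 1) / p = p ^ a' := by
    rw [pow_succ, Nat.mul_div_cancel _ hppos]
  have hdiv2 : p ^ (b' + 1) / p = p ^ b' := by
    rw [pow_succ, Nat.mul_div_cancel _ hppos]
  rw [hdiv1, hdiv2, ArithmeticFunction.moebius_apply_one,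
    ArithmeticFunction.moebius_apply_prime hp]
  have hmul : p ^ (a' + 1) * p ^ (b' + 1) = p ^ (a' + 1 + (b' + 1)) :=
    (pow_add p (a' + 1) (b' + 1)).symm
  rw [hmul, sigmaC_prime_pow k hp, sigmaC_prime_pow k hp, sigmaC_prime_pow k hp,
    sigmaC_prime_pow k hp, sigmaC_prime_pow k hp]
  have hgeom := geom ((p : ℂ) ^ k) (a' + 1) (b' + 1)
  have hTa : ∑ i ∈ range (a' + 1), ((p : ℂ) ^ k) ^ i
      = ∑ i ∈ range (a' + 1), ((p : ℂ) ^ k) ^ i := rfl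
  push_cast
  rw [Complex.one_cpow]
  have hx : ((p : ℂ)) ^ k = (((p : ℕ) : ℂ)) ^ k := rfl
  have harr : a' + 1 + (b' + 1) + 1 = a' + 1 + (b' + 1) + 1 := rfl
  linear_combination -hgeom

lemma pair_mul (k : ℂ) {m₁ n₁ m₂ n₂ : ℕ} (hm₁ : 0 < m₁) (hn₁ : 0 < n₁)
    (hm₂ : 0 < m₂) (hn₂ : 0 < n₂) (hcop : Nat.Coprime (m₁ * n₁) (m₂ * n₂))
    (H₁ : sigmaC k (m₁ * n₁) = R k m₁ n₁) (H₂ : sigmaC k (m₂ * n₂) = R k m₂ n₂) :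
    sigmaC k (m₁ * m₂ * (n₁ * n₂)) = R k (m₁ * m₂) (n₁ * n₂) := by
  have cmm : Nat.Coprime m₁ m₂ :=
    Nat.Coprime.coprime_dvd_left (dvd_mul_right m₁ n₁)
      (Nat.Coprime.coprime_dvd_right (dvd_mul_right m₂ n₂) hcop)
  have cmn : Nat.Coprime m₁ n₂ :=
    Nat.Coprime.coprime_dvd_left (dvd_mul_right m₁ n₁)
      (Nat.Coprime.coprime_dvd_right (dvd_mul_left n₂ m₂) hcop)
  have cnm : Nat.Coprime n₁ m₂ :=
    Nat.Coprime.coprime_dvd_left (dvd_mul_left n₁ m₁)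
      (Nat.Coprime.coprime_dvd_right (dvd_mul_right m₂ n₂) hcop)
  have cnn : Nat.Coprime n₁ n₂ :=
    Nat.Coprime.coprime_dvd_left (dvd_mul_left n₁ m₁)
      (Nat.Coprime.coprime_dvd_right (dvd_mul_left n₂ m₂) hcop)
  -- gcd is multiplicative here
  have hg : Nat.gcd (m₁ * m₂) (n₁ * n₂) = Nat.gcd m₁ n₁ * Nat.gcd m₂ n₂ := by
    refine Nat.dvd_antisymm ?_ ?_
    · set d := Nat.gcd (m₁ * m₂) (n₁ * n₂) with hd
      have hdm : d ∣ m₁ * m₂ := Nat.gcd_dvd_left _ _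
      have hdn : d ∣ n₁ * n₂ := Nat.gcd_dvd_right _ _
      have hsplit : Nat.gcd d (m₁ * n₁) * Nat.gcd d (m₂ * n₂) = d :=
        (Nat.gcd_mul_gcd_eq_iff_dvd_mul_of_coprime hcop).mpr
          (hdm.trans (by exact ⟨n₁ * n₂, by ring⟩))
      set d₁ := Nat.gcd d (m₁ * n₁)
      set d₂ := Nat.gcd d (m₂ * n₂)
      have hd₁m : d₁ ∣ m₁ := by
        have : d₁ ∣ m₁ * m₂ := (Nat.gcd_dvd_left _ _).trans hdm
        exact (Nat.Coprime.coprime_dvd_left (Nat.gcd_dvd_right d _)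
          (Nat.Coprime.coprime_dvd_right (dvd_mul_right m₂ n₂) hcop)).dvd_of_dvd_mul_right this
      have hd₁n : d₁ ∣ n₁ := by
        have : d₁ ∣ n₁ * n₂ := (Nat.gcd_dvd_left _ _).trans hdn
        exact (Nat.Coprime.coprime_dvd_left (Nat.gcd_dvd_right d _)
          (Nat.Coprime.coprime_dvd_right (dvd_mul_left n₂ m₂) hcop)).dvd_of_dvd_mul_right this
      have hd₂m : d₂ ∣ m₂ := by
        have hd2 : d₂ ∣ m₁ * m₂ := (Nat.gcd_dvd_left _ _).trans hdm
        rw [mul_comm] at hd2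
        exact (Nat.Coprime.coprime_dvd_left (Nat.gcd_dvd_right d _)
          (Nat.Coprime.coprime_dvd_right (dvd_mul_right m₁ n₁) hcop.symm)).dvd_of_dvd_mul_right hd2
      have hd₂n : d₂ ∣ n₂ := by
        have hd2 : d₂ ∣ n₁ * n₂ := (Nat.gcd_dvd_left _ _).trans hdn
        rw [mul_comm] at hd2
        exact (Nat.Coprime.coprime_dvd_left (Nat.gcd_dvd_right d _)
          (Nat.Coprime.coprime_dvd_right (dvd_mul_left n₁ m₁) hcop.symm)).dvd_of_dvd_mul_right hd2
      calc d = d₁ * d₂ := hsplit.symm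
        _ ∣ Nat.gcd m₁ n₁ * Nat.gcd m₂ n₂ :=
          mul_dvd_mul (Nat.dvd_gcd hd₁m hd₁n) (Nat.dvd_gcd hd₂m hd₂n)
    · exact Nat.dvd_gcd
        (mul_dvd_mul (Nat.gcd_dvd_left _ _) (Nat.gcd_dvd_left _ _))
        (mul_dvd_mul (Nat.gcd_dvd_right _ _) (Nat.gcd_dvd_right _ _))
  have hg₁pos : Nat.gcd m₁ n₁ ≠ 0 := Nat.gcd_ne_zero_left hm₁.ne'
  have hg₂pos : Nat.gcd m₂ n₂ ≠ 0 := Nat.gcd_ne_zero_left hm₂.ne'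
  have hgcop : Nat.Coprime (Nat.gcd m₁ n₁) (Nat.gcd m₂ n₂) :=
    Nat.Coprime.coprime_dvd_left (Nat.gcd_dvd_left _ _)
      (Nat.Coprime.coprime_dvd_right (Nat.gcd_dvd_left _ _) cmm)
  -- LHS
  have hL : sigmaC k (m₁ * m₂ * (n₁ * n₂)) = sigmaC k (m₁ * n₁) * sigmaC k (m₂ * n₂) := by
    rw [show m₁ * m₂ * (n₁ * n₂) = m₁ * n₁ * (m₂ * n₂) by ring]
    exact sigmaC_mul_coprime k (by positivity) (by positivity) hcop
  rw [hL, H₁, H₂, R, R, R, hg,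
    sum_divisors_coprime_mul hg₁pos hg₂pos hgcop, Finset.sum_mul_sum]
  refine Finset.sum_congr rfl fun a₁ ha₁ => Finset.sum_congr rfl fun a₂ ha₂ => ?_
  rw [Nat.mem_divisors] at ha₁ ha₂
  have ha₁m : a₁ ∣ m₁ := ha₁.1.trans (Nat.gcd_dvd_left _ _)
  have ha₁n : a₁ ∣ n₁ := ha₁.1.trans (Nat.gcd_dvd_right _ _)
  have ha₂m : a₂ ∣ m₂ := ha₂.1.trans (Nat.gcd_dvd_left _ _)
  have ha₂n : a₂ ∣ n₂ := ha₂.1.trans (Nat.gcd_dvd_right _ _)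
  have hacop : Nat.Coprime a₁ a₂ :=
    Nat.Coprime.coprime_dvd_left ha₁m (Nat.Coprime.coprime_dvd_right ha₂m cmm)
  have hdm : m₁ * m₂ / (a₁ * a₂) = m₁ / a₁ * (m₂ / a₂) :=
    (Nat.div_mul_div_comm ha₁m ha₂m).symm
  have hdn : n₁ * n₂ / (a₁ * a₂) = n₁ / a₁ * (n₂ / a₂) :=
    (Nat.div_mul_div_comm ha₁n ha₂n).symm
  have hsm : sigmaC k (m₁ * m₂ / (a₁ * a₂)) = sigmaC k (m₁ / a₁) * sigmaC k (m₂ / a₂) := by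
    rw [hdm]
    refine sigmaC_mul_coprime k ?_ ?_ ?_
    · exact (Nat.div_pos (Nat.le_of_dvd hm₁ ha₁m) (Nat.pos_of_dvd_of_pos ha₁m hm₁)).ne'
    · exact (Nat.div_pos (Nat.le_of_dvd hm₂ ha₂m) (Nat.pos_of_dvd_of_pos ha₂m hm₂)).ne'
    · exact Nat.Coprime.coprime_dvd_left (Nat.div_dvd_of_dvd ha₁m)
        (Nat.Coprime.coprime_dvd_right (Nat.div_dvd_of_dvd ha₂m) cmm)
  have hsn : sigmaC k (n₁ * n₂ / (a₁ * a₂)) = sigmaC k (n₁ / a₁) * sigmaC k (n₂ / a₂) := by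
    rw [hdn]
    refine sigmaC_mul_coprime k ?_ ?_ ?_
    · exact (Nat.div_pos (Nat.le_of_dvd hn₁ ha₁n) (Nat.pos_of_dvd_of_pos ha₁n hn₁)).ne'
    · exact (Nat.div_pos (Nat.le_of_dvd hn₂ ha₂n) (Nat.pos_of_dvd_of_pos ha₂n hn₂)).ne'
    · exact Nat.Coprime.coprime_dvd_left (Nat.div_dvd_of_dvd ha₁n)
        (Nat.Coprime.coprime_dvd_right (Nat.div_dvd_of_dvd ha₂n) cnn)
  have hmoeb : (moebius (a₁ * a₂) : ℤ) = moebius a₁ * moebius a₂ :=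
    ArithmeticFunction.isMultiplicative_moebius.map_mul_of_coprime hacop
  rw [hsm, hsn, hmoeb, natCast_mul_cpow k a₁ a₂]
  push_cast
  ring

lemma base_case (k : ℂ) : sigmaC k (1 * 1) = R k 1 1 := by
  rw [mul_one, R, Nat.gcd_self, Nat.divisors_one]
  simp [sigmaC_one, Complex.one_cpow]

lemma main (k : ℂ) : ∀ N m n, 0 < m → 0 < n → m * n = N →
    sigmaC k (m * n) = R k m n := by
  intro N
  induction N using Nat.strong_induction_on with
  | _ N ih =>
    intro m n hm hn hN
    by_cases h1 : m * n = 1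
    · have hme : m = 1 := Nat.eq_one_of_mul_eq_one_right h1
      have hne : n = 1 := Nat.eq_one_of_mul_eq_one_left h1
      subst hme; subst hne
      exact base_case k
    · obtain ⟨p, pp, pdvd⟩ := Nat.exists_prime_and_dvd h1
      set a := m.factorization p with hadef
      set b := n.factorization p with hbdef
      set m' := m / p ^ a with hm'def
      set n' := n / p ^ b with hn'def
      have hmeq : p ^ a * m' = m := Nat.ordProj_mul_ordCompl_eq_self m p
      have hneq : p ^ b * n' = n := Nat.ordProj_mul_ordCompl_eq_self n p
      have hm'pos : 0 < m' := Nat.ordCompl_pos p hm.ne'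
      have hn'pos : 0 < n' := Nat.ordCompl_pos p hn.ne'
      have hpm' : ¬ p ∣ m' := Nat.not_dvd_ordCompl pp hm.ne'
      have hpn' : ¬ p ∣ n' := Nat.not_dvd_ordCompl pp hn.ne'
      have hcop : Nat.Coprime (p ^ a * p ^ b) (m' * n') := by
        rw [← pow_add]
        refine Nat.Coprime.pow_left _ ?_
        rw [Nat.Prime.coprime_iff_not_dvd pp]
        intro h
        rcases (Nat.Prime.dvd_mul pp).mp h with h' | h'
        · exact hpm' h'
        · exact hpn' h'
      have hab : 0 < a + b := by
        rcases (Nat.Prime.dvd_mul pp).mp pdvd with h' | h'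
        · have := Nat.Prime.factorization_pos_of_dvd pp hm.ne' h'
          omega
        · have := Nat.Prime.factorization_pos_of_dvd pp hn.ne' h'
          omega
      have hlt : m' * n' < N := by
        have hNdec : N = p ^ (a + b) * (m' * n') := by
          rw [← hN, ← hmeq, ← hneq, pow_add]; ring
        rw [hNdec]
        have h2 : 1 < p ^ (a + b) := Nat.one_lt_pow (by omega) pp.one_lt
        have hpos : 0 < m' * n' := by positivity
        calc m' * n' = 1 * (m' * n') := (one_mul _).symm
          _ < p ^ (a + b) * (m' * n') := (Nat.mul_lt_mul_right hpos).mpr h2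
      have H₂ := ih (m' * n') hlt m' n' hm'pos hn'pos rfl
      have H₁ := prime_case k pp a b
      have := pair_mul k (pow_pos pp.pos a) (pow_pos pp.pos b) hm'pos hn'pos hcop H₁ H₂
      rw [hmeq, hneq] at this
      exact this

end BuscheAux

theorem busche_ramanujan_sigma_cpow (k : ℂ) (m n : ℕ) (hm : 0 < m) (hn : 0 < n) :
    sigmaC k (m * n) = ∑ a ∈ (Nat.gcd m n).divisors,
      sigmaC k (m / a) * sigmaC k (n / a) * (ArithmeticFunction.moebius a : ℂ) *
        (a : ℂ) ^ k := by
  exact BuscheAux.main k (m * n) m n hm hn rfl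
end

section
/- Let x_1,...,x_k be pairwise distinct elements of a field. Then for every d ≥ 0, the complete homogeneous symmetric polynomial satisfies h_d(x_1,...,x_k) = ∑_{i=1}^{k} x_i^{d+k-1} ∏_{j≠i} (x_i − x_j)^{-1}. -/
/-- Complete homogeneous symmetric polynomial of degree `d` evaluated at `x`. -/
def hsymmVal {R : Type*} [CommRing R] {k : ℕ} (x : Fin k → R) (d : ℕ) : R :=
  ∑ ν ∈ (Fintype.piFinset fun _ : Fin k => Finset.range (d + 1)).filter
      (fun ν => ∑ i, ν i = d), ∏ i, x i ^ ν i

open PowerSeries Finset Polynomial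

lemma hsymmVal_eq_coeff {R : Type*} [CommRing R] {k : ℕ} (x : Fin k → R) (d : ℕ) :
    hsymmVal x d = PowerSeries.coeff d (∏ i : Fin k, PowerSeries.mk fun n => x i ^ n) := by
  rw [coeff_prod]
  simp only [coeff_mk]
  rw [hsymmVal]
  apply Finset.sum_nbij' (fun ν => Finsupp.equivFunOnFinite.symm ν) (fun l => ⇑l)
  · intro ν hν
    simp only [mem_filter, Fintype.mem_piFinset, mem_range] at hν
    rw [Finset.mem_finsuppAntidiag]
    exact ⟨by simpa using hν.2, fun a _ => mem_univ a⟩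
  · intro l hl
    rw [Finset.mem_finsuppAntidiag] at hl
    simp only [mem_filter, Fintype.mem_piFinset, mem_range]
    refine ⟨fun i => ?_, hl.1⟩
    have : l i ≤ d := hl.1 ▸ Finset.single_le_sum (fun j _ => Nat.zero_le _) (mem_univ i)
    omega
  · intro ν _; ext i; simp
  · intro l _; exact Finsupp.equivFunOnFinite.symm_apply_apply l
  · intro ν _
    refine Finset.prod_congr rfl fun i _ => ?_
    simp

lemma geom_inv {R : Type*} [CommRing R] (a : R) :
    (1 - PowerSeries.C a * PowerSeries.X) * PowerSeries.mk (fun n => a ^ n) = 1 := by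
  ext n
  rw [sub_mul, one_mul, map_sub, mul_assoc]
  cases n with
  | zero => simp
  | succ m => simp [PowerSeries.coeff_C_mul, PowerSeries.coeff_succ_X_mul, pow_succ, mul_comm]

lemma interp {K : Type*} [Field K] {k : ℕ} (hk : 0 < k) (x : Fin k → K)
    (hx : Function.Injective x) :
    (Polynomial.X ^ (k - 1) : K[X]) =
      ∑ i : Fin k, Polynomial.C (x i ^ (k - 1) * ∏ j ∈ univ.erase i, (x i - x j)⁻¹) *
        ∏ j ∈ univ.erase i, (Polynomial.X - Polynomial.C (x j)) := by
  have hvs : Set.InjOn x (univ : Finset (Fin k)) := fun a _ b _ h => hx h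
  have hdeg : (Polynomial.X ^ (k - 1) : K[X]).degree < (univ : Finset (Fin k)).card := by
    rw [degree_X_pow, card_univ, Fintype.card_fin]
    exact_mod_cast Nat.sub_lt hk one_pos
  have h := Lagrange.eq_interpolate hvs hdeg
  rw [Lagrange.interpolate_apply] at h
  rw [h]
  refine Finset.sum_congr rfl fun i _ => ?_
  rw [Lagrange.basis]
  simp only [Lagrange.basisDivisor]
  rw [Finset.prod_mul_distrib, ← map_prod, ← mul_assoc, ← Polynomial.C_mul,
    eval_pow, eval_X]

lemma key_poly {K : Type*} [Field K] {k : ℕ} (hk : 0 < k) (x : Fin k → K)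
    (hx : Function.Injective x) :
    ∑ i : Fin k, Polynomial.C (x i ^ (k - 1) * ∏ j ∈ univ.erase i, (x i - x j)⁻¹) *
      ∏ j ∈ univ.erase i, (1 - Polynomial.C (x j) * Polynomial.X) = (1 : K[X]) := by
  apply RatFunc.algebraMap_injective K
  set u : RatFunc K := (RatFunc.X)⁻¹ with hu
  have hXne : (RatFunc.X : RatFunc K) ≠ 0 := RatFunc.X_ne_zero
  have hfac : ∀ a : K, algebraMap K[X] (RatFunc K) (1 - Polynomial.C a * Polynomial.X)
      = RatFunc.X * (u - RatFunc.C a) := by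
    intro a
    rw [map_sub, map_one, map_mul, RatFunc.algebraMap_C, RatFunc.algebraMap_X]
    rw [hu, mul_sub, mul_inv_cancel₀ hXne]
    ring
  have hcard : ∀ i : Fin k, (univ.erase i).card = k - 1 := fun i => by
    rw [card_erase_of_mem (mem_univ i), card_univ, Fintype.card_fin]
  have hsum2 : ∑ i : Fin k, RatFunc.C (x i ^ (k - 1) * ∏ j ∈ univ.erase i, (x i - x j)⁻¹) *
      ∏ j ∈ univ.erase i, (u - RatFunc.C (x j)) = u ^ (k - 1) := by
    have h := congrArg (Polynomial.aeval u) (interp hk x hx)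
    rw [map_pow, Polynomial.aeval_X, map_sum] at h
    refine Eq.trans (Finset.sum_congr rfl fun i _ => ?_) h.symm
    symm
    rw [map_mul, Polynomial.aeval_C, map_prod, RatFunc.algebraMap_eq_C]
    congr 1
    refine Finset.prod_congr rfl fun j _ => ?_
    rw [map_sub, Polynomial.aeval_X, Polynomial.aeval_C, RatFunc.algebraMap_eq_C]
  have hterm : ∀ i : Fin k, algebraMap K[X] (RatFunc K)
      (Polynomial.C (x i ^ (k - 1) * ∏ j ∈ univ.erase i, (x i - x j)⁻¹) *
        ∏ j ∈ univ.erase i, (1 - Polynomial.C (x j) * Polynomial.X))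
      = RatFunc.X ^ (k - 1) * (RatFunc.C (x i ^ (k - 1) * ∏ j ∈ univ.erase i, (x i - x j)⁻¹) *
          ∏ j ∈ univ.erase i, (u - RatFunc.C (x j))) := by
    intro i
    rw [map_mul, RatFunc.algebraMap_C, map_prod,
      Finset.prod_congr rfl (fun j _ => hfac (x j)),
      Finset.prod_mul_distrib, Finset.prod_const, hcard i]
    ring
  rw [map_one, map_sum, Finset.sum_congr rfl (fun i _ => hterm i), ← Finset.mul_sum, hsum2,
    ← mul_pow, mul_inv_cancel₀ hXne, one_pow]

theorem hsymm_lagrange {K : Type*} [Field K] {k : ℕ} (hk : 0 < k) (x : Fin k → K)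
    (hx : Function.Injective x) (d : ℕ) :
    hsymmVal x d = ∑ i : Fin k, x i ^ (d + k - 1) *
      ∏ j ∈ Finset.univ.erase i, (x i - x j)⁻¹ := by
  classical
  have hps : ∑ i : Fin k, PowerSeries.C (x i ^ (k - 1) * ∏ j ∈ univ.erase i, (x i - x j)⁻¹) *
      ∏ j ∈ univ.erase i, (1 - PowerSeries.C (x j) * PowerSeries.X) = 1 := by
    have h := congrArg (Polynomial.coeToPowerSeries.ringHom (R := K)) (key_poly hk x hx)
    rw [map_one, map_sum] at h
    refine Eq.trans (Finset.sum_congr rfl fun i _ => ?_).symm h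
    rw [map_mul, map_prod, Polynomial.coeToPowerSeries.ringHom_apply, Polynomial.coe_C]
    congr 1
    refine Finset.prod_congr rfl fun j _ => ?_
    rw [map_sub, map_one, map_mul, Polynomial.coeToPowerSeries.ringHom_apply,
      Polynomial.coeToPowerSeries.ringHom_apply, Polynomial.coe_C, Polynomial.coe_X]
  have key : (∏ i : Fin k, PowerSeries.mk fun n => x i ^ n) =
      ∑ i : Fin k, PowerSeries.C (x i ^ (k - 1) * ∏ j ∈ univ.erase i, (x i - x j)⁻¹) *
        PowerSeries.mk (fun n => x i ^ n) := by
    calc (∏ i : Fin k, PowerSeries.mk fun n => x i ^ n)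
        = (∑ i : Fin k, PowerSeries.C (x i ^ (k - 1) * ∏ j ∈ univ.erase i, (x i - x j)⁻¹) *
            ∏ j ∈ univ.erase i, (1 - PowerSeries.C (x j) * PowerSeries.X)) *
          ∏ i : Fin k, PowerSeries.mk fun n => x i ^ n := by rw [hps, one_mul]
      _ = ∑ i : Fin k, PowerSeries.C (x i ^ (k - 1) * ∏ j ∈ univ.erase i, (x i - x j)⁻¹) *
            PowerSeries.mk (fun n => x i ^ n) := by
          rw [Finset.sum_mul]
          refine Finset.sum_congr rfl fun i _ => ?_
          rw [mul_assoc]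
          congr 1
          rw [← Finset.mul_prod_erase _ _ (mem_univ i), ← mul_assoc,
            mul_comm (∏ j ∈ univ.erase i, (1 - PowerSeries.C (x j) * PowerSeries.X)),
            mul_assoc, ← Finset.prod_mul_distrib]
          rw [Finset.prod_congr rfl (fun j _ => geom_inv (x j)), Finset.prod_const_one, mul_one]
  have h := congrArg (PowerSeries.coeff d) key
  rw [← hsymmVal_eq_coeff, map_sum] at h
  rw [h]
  refine Finset.sum_congr rfl fun i _ => ?_
  rw [PowerSeries.coeff_C_mul, PowerSeries.coeff_mk]
  have : d + k - 1 = (k - 1) + d := by omega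
  rw [this, pow_add]
  ring
end

section
/- Let g and h be completely multiplicative arithmetic functions, f = g * h, and r ≥ 1. Define the multiplicative function ψ_f of r variables by: ψ_f(p^{ν_1},...,p^{ν_r}) = 1 if all ν_i = 0; ψ_f(p^{ν_1},...,p^{ν_r}) = (−1)^{j−1} g(p) h(p) f(p^{j−2}) if all ν_i ∈ {0,1} and j := ν_1 + ... + ν_r ≥ 2; and ψ_f(p^{ν_1},...,p^{ν_r}) = 0 otherwise. Then for all positive integers n_1,...,n_r: f(n_1 ··· n_r) = ∑_{a_1 | n_1, ..., a_r | n_r} f(n_1/a_1) ··· f(n_r/a_r) ψ_f(a_1,...,a_r). -/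
open Finset

namespace BRhelp

noncomputable def sf (x y : ℂ) : ℕ → ℂ := fun k => ∑ j ∈ Finset.range (k+1), x^j * y^(k-j)

noncomputable def tf (x y : ℂ) : ℕ → ℂ
  | 0 => 0
  | (k+1) => sf x y k

noncomputable def cf (x y : ℂ) : ℕ → ℂ
  | 0 => 1
  | (j+1) => (-1)^j * (x*y) * tf x y j

variable (x y : ℂ)

lemma sf_zero : sf x y 0 = 1 := by simp [sf]

lemma sf_succ (k : ℕ) : sf x y (k+1) = x * sf x y k + y^(k+1) := by
  rw [sf, Finset.sum_range_succ' (fun j => x^j * y^(k+1-j)) (k+1)]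
  simp only [pow_zero, one_mul, Nat.sub_zero, sf, Finset.mul_sum]
  congr 1
  apply Finset.sum_congr rfl
  intro j hj
  rw [Finset.mem_range] at hj
  rw [Nat.succ_sub_succ]
  ring

lemma sf_rec (k : ℕ) : sf x y (k+1) = (x+y) * sf x y k - x*y * tf x y k := by
  cases k with
  | zero => simp [sf, tf, Finset.sum_range_succ]; ring
  | succ k =>
      have h1 := sf_succ x y k
      have h2 := sf_succ x y (k+1)
      have : (y:ℂ)^(k+1+1) = y * y^(k+1) := by ring
      rw [h2, this, show (y:ℂ)^(k+1) = sf x y (k+1) - x * sf x y k by rw [h1]; ring]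
      show _ = (x+y) * sf x y (k+1) - x*y * sf x y k
      ring

lemma sf_add_tf_add (m : ℕ) : ∀ n : ℕ,
    sf x y (m+n) = sf x y m * sf x y n - x*y * tf x y m * tf x y n ∧
    tf x y (m+n) = sf x y m * tf x y n + tf x y m * sf x y n - (x+y) * tf x y m * tf x y n := by
  intro n
  induction n with
  | zero => simp [sf_zero, tf]
  | succ n ih =>
      obtain ⟨ihs, iht⟩ := ih
      constructor
      · rw [show m + (n+1) = (m+n) + 1 by ring, sf_rec, ihs, iht,
          sf_rec x y n, show tf x y (n+1) = sf x y n from rfl]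
        ring
      · rw [show m + (n+1) = (m+n) + 1 by ring,
          show tf x y ((m+n)+1) = sf x y (m+n) from rfl, ihs,
          show tf x y (n+1) = sf x y n from rfl, sf_rec x y n]
        ring

lemma sf_add (m n : ℕ) : sf x y (m+n) = sf x y m * sf x y n - x*y * tf x y m * tf x y n :=
  (sf_add_tf_add x y m n).1

lemma tf_add (m n : ℕ) : tf x y (m+n) = sf x y m * tf x y n + tf x y m * sf x y n
    - (x+y) * tf x y m * tf x y n :=
  (sf_add_tf_add x y m n).2



lemma ABC {ι : Type*} [DecidableEq ι] (ν : ι → ℕ) (T : Finset ι) :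
    (∑ S ∈ T.powerset, cf x y S.card *
        ∏ i ∈ T, (if i ∈ S then tf x y (ν i) else sf x y (ν i)) = sf x y (∑ i ∈ T, ν i)) ∧
    (∑ S ∈ T.powerset, (-1)^S.card * (x*y) * tf x y S.card *
        ∏ i ∈ T, (if i ∈ S then tf x y (ν i) else sf x y (ν i))
        = -(x*y) * tf x y (∑ i ∈ T, ν i)) ∧
    (∑ S ∈ T.powerset, (-1)^S.card * sf x y S.card *
        ∏ i ∈ T, (if i ∈ S then tf x y (ν i) else sf x y (ν i))
        = sf x y (∑ i ∈ T, ν i) - (x+y) * tf x y (∑ i ∈ T, ν i)) := by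
  classical
  induction T using Finset.induction_on with
  | empty => simp [cf, tf, sf_zero]
  | @insert a T ha ih =>
      obtain ⟨ihA, ihB, ihC⟩ := ih
      have key : ∀ w : ℕ → ℂ,
          ∑ S ∈ (insert a T).powerset, w S.card *
            ∏ i ∈ insert a T, (if i ∈ S then tf x y (ν i) else sf x y (ν i))
          = sf x y (ν a) * ∑ S ∈ T.powerset, w S.card *
              ∏ i ∈ T, (if i ∈ S then tf x y (ν i) else sf x y (ν i))
            + tf x y (ν a) * ∑ S ∈ T.powerset, w (S.card + 1) *
              ∏ i ∈ T, (if i ∈ S then tf x y (ν i) else sf x y (ν i)) := by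
        intro w
        rw [Finset.sum_powerset_insert ha, Finset.mul_sum, Finset.mul_sum]
        congr 1
        · apply Finset.sum_congr rfl
          intro S hS
          rw [Finset.mem_powerset] at hS
          have haS : a ∉ S := fun hc => ha (hS hc)
          rw [Finset.prod_insert ha, if_neg haS]
          ring
        · apply Finset.sum_congr rfl
          intro S hS
          rw [Finset.mem_powerset] at hS
          have haS : a ∉ S := fun hc => ha (hS hc)
          rw [Finset.prod_insert ha, if_pos (Finset.mem_insert_self a S),
            Finset.card_insert_of_notMem haS]
          have hprod : ∏ i ∈ T, (if i ∈ insert a S then tf x y (ν i) else sf x y (ν i))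
              = ∏ i ∈ T, (if i ∈ S then tf x y (ν i) else sf x y (ν i)) := by
            apply Finset.prod_congr rfl
            intro i hi
            have : i ≠ a := fun hc => ha (hc ▸ hi)
            simp [Finset.mem_insert, this]
          rw [hprod]
          ring
      have hsum : ∑ i ∈ insert a T, ν i = ν a + ∑ i ∈ T, ν i := Finset.sum_insert ha
      set M := ∑ i ∈ T, ν i with hM
      set P : Finset ι → ℂ := fun S => ∏ i ∈ T, (if i ∈ S then tf x y (ν i) else sf x y (ν i))
        with hP
      have hBaux : ∑ S ∈ T.powerset, cf x y (S.card + 1) * P S = -(x*y) * tf x y M := by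
        rw [← ihB]
        exact Finset.sum_congr rfl fun S _ => by
          rw [show cf x y (S.card + 1) = (-1)^S.card * (x*y) * tf x y S.card from rfl]
      have hCaux : ∑ S ∈ T.powerset, ((-1):ℂ)^S.card * tf x y (S.card + 1) * P S
          = sf x y M - (x+y) * tf x y M := by
        rw [← ihC]
        exact Finset.sum_congr rfl fun S _ => by
          rw [show tf x y (S.card + 1) = sf x y S.card from rfl]
      have hDaux : ∑ S ∈ T.powerset, ((-1):ℂ)^S.card * sf x y (S.card + 1) * P S
          = (x+y) * (sf x y M - (x+y) * tf x y M) + (x*y) * tf x y M := by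
        have step : ∀ S ∈ T.powerset, ((-1):ℂ)^S.card * sf x y (S.card + 1) * P S
            = (x+y) * ((-1)^S.card * sf x y S.card * P S)
              - ((-1)^S.card * (x*y) * tf x y S.card * P S) := by
          intro S _
          rw [sf_rec]
          ring
        rw [Finset.sum_congr rfl step, Finset.sum_sub_distrib, ← Finset.mul_sum, ihC, ihB]
        ring
      refine ⟨?_, ?_, ?_⟩
      · have h1 := key (cf x y)
        rw [h1, ihA, hBaux, hsum, sf_add]
        ring
      · have h1 := key (fun j => (-1)^j * (x*y) * tf x y j)
        have h2 : ∑ S ∈ T.powerset, ((-1):ℂ)^(S.card+1) * (x*y) * tf x y (S.card+1) * P S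
            = -((x*y) * (sf x y M - (x+y) * tf x y M)) := by
          rw [← hCaux, Finset.mul_sum, ← Finset.sum_neg_distrib]
          exact Finset.sum_congr rfl fun S _ => by rw [pow_succ]; ring
        rw [h1, ihB, h2, hsum, tf_add]
        ring
      · have h1 := key (fun j => (-1)^j * sf x y j)
        have h3 : ∑ S ∈ T.powerset, ((-1):ℂ)^(S.card+1) * sf x y (S.card+1) * P S
            = -((x+y) * (sf x y M - (x+y) * tf x y M) + (x*y) * tf x y M) := by
          rw [← hDaux, ← Finset.sum_neg_distrib]
          exact Finset.sum_congr rfl fun S _ => by rw [pow_succ]; ring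
        rw [h1, ihC, h3, hsum, sf_add, tf_add]
        ring

section main
variable {r : ℕ} (g h f : ℕ → ℂ) (ψ : (Fin r → ℕ) → ℂ)
variable (hg1 : g 1 = 1) (hg : ∀ m n : ℕ, g (m * n) = g m * g n)
variable (hh1 : h 1 = 1) (hh : ∀ m n : ℕ, h (m * n) = h m * h n)
variable (hf : ∀ n : ℕ, f n = ∑ d ∈ n.divisors, g d * h (n / d))
variable (hψp : ∀ p : ℕ, p.Prime → ∀ ν : Fin r → ℕ,
      ψ (fun i => p ^ ν i) =
        if ∀ i, ν i = 0 then 1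
        else if (∀ i, ν i ≤ 1) ∧ 2 ≤ ∑ i, ν i then
          (-1 : ℂ) ^ (∑ i, ν i - 1) * g p * h p * f (p ^ (∑ i, ν i - 2))
        else 0)

include hf hg1 hh1 in
lemma f_one : f 1 = 1 := by
  rw [hf 1, Nat.divisors_one]
  simp [hg1, hh1]

include hg1 hg hh1 hh hf in
lemma f_mult {m n : ℕ} (hmn : Nat.Coprime m n) : f (m * n) = f m * f n := by
  classical
  set G0 : ArithmeticFunction ℂ := ⟨fun k => if k = 0 then 0 else g k, by simp⟩ with hG0
  set H0 : ArithmeticFunction ℂ := ⟨fun k => if k = 0 then 0 else h k, by simp⟩ with hH0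
  have hG0m : G0.IsMultiplicative := by
    constructor
    · simp [hG0, ArithmeticFunction.coe_mk, hg1]
    · intro a b hab
      rcases eq_or_ne a 0 with rfl | ha
      · simp [hG0, ArithmeticFunction.coe_mk]
      rcases eq_or_ne b 0 with rfl | hb
      · simp [hG0, ArithmeticFunction.coe_mk]
      simp [hG0, ArithmeticFunction.coe_mk, ha, hb, mul_eq_zero, hg a b]
  have hH0m : H0.IsMultiplicative := by
    constructor
    · simp [hH0, ArithmeticFunction.coe_mk, hh1]
    · intro a b hab
      rcases eq_or_ne a 0 with rfl | ha
      · simp [hH0, ArithmeticFunction.coe_mk]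
      rcases eq_or_ne b 0 with rfl | hb
      · simp [hH0, ArithmeticFunction.coe_mk]
      simp [hH0, ArithmeticFunction.coe_mk, ha, hb, mul_eq_zero, hh a b]
  have feq : ∀ k, f k = (G0 * H0) k := by
    intro k
    rw [hf k, ArithmeticFunction.mul_apply, Nat.sum_divisorsAntidiagonal
      (fun a b => (G0 a) * (H0 b))]
    apply Finset.sum_congr rfl
    intro d hd
    rw [Nat.mem_divisors] at hd
    have hk : k ≠ 0 := hd.2
    have hd0 : d ≠ 0 := by rintro rfl; exact hk (Nat.eq_zero_of_zero_dvd hd.1)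
    have hkd0 : k / d ≠ 0 := by
      apply Nat.ne_of_gt
      exact Nat.div_pos (Nat.le_of_dvd (Nat.pos_of_ne_zero hk) hd.1) (Nat.pos_of_ne_zero hd0)
    simp [hG0, hH0, ArithmeticFunction.coe_mk, hd0, hkd0]
  rw [feq, feq, feq, (hG0m.mul hH0m).map_mul_of_coprime hmn]

include hg1 hg hh1 hh hf in
lemma f_prime_pow {p : ℕ} (hp : p.Prime) (k : ℕ) : f (p ^ k) = sf (g p) (h p) k := by
  have gpow : ∀ j : ℕ, g (p ^ j) = (g p) ^ j := by
    intro j; induction j with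
    | zero => simpa using hg1
    | succ j ih => rw [pow_succ, pow_succ, hg, ih]
  have hpow : ∀ j : ℕ, h (p ^ j) = (h p) ^ j := by
    intro j; induction j with
    | zero => simpa using hh1
    | succ j ih => rw [pow_succ, pow_succ, hh, ih]
  rw [hf, Nat.sum_divisors_prime_pow hp, sf]
  apply Finset.sum_congr rfl
  intro j hj
  rw [Finset.mem_range, Nat.lt_succ_iff] at hj
  rw [Nat.pow_div hj hp.pos, gpow, hpow]

include hg1 hg hh1 hh hf hψp in
lemma prime_pow_case {p : ℕ} (hp : p.Prime) (e : Fin r → ℕ) :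
    f (∏ i, p ^ e i) = ∑ a ∈ Fintype.piFinset (fun i => (p ^ e i).divisors),
      (∏ i, f (p ^ e i / a i)) * ψ a := by
  classical
  set x := g p with hx
  set y := h p with hy
  have hfp : ∀ k, f (p ^ k) = sf x y k := f_prime_pow g h f hg1 hg hh1 hh hf hp
  -- Step 1 : reindex the divisor sum by exponents
  have step1 : ∑ a ∈ Fintype.piFinset (fun i => (p ^ e i).divisors),
      (∏ i, f (p ^ e i / a i)) * ψ a
      = ∑ μ ∈ Fintype.piFinset (fun i => Finset.range (e i + 1)),
        (∏ i, sf x y (e i - μ i)) * ψ (fun i => p ^ μ i) := by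
    symm
    apply Finset.sum_nbij' (i := fun μ => fun i => p ^ μ i)
      (j := fun a => fun i => (a i).factorization p)
    · intro μ hμ
      rw [Fintype.mem_piFinset] at hμ ⊢
      intro i
      rw [Nat.mem_divisors]
      exact ⟨pow_dvd_pow p (Nat.lt_succ_iff.mp (Finset.mem_range.mp (hμ i))),
        pow_ne_zero _ hp.pos.ne'⟩
    · intro a ha
      rw [Fintype.mem_piFinset] at ha ⊢
      intro i
      obtain ⟨j, hj, hji⟩ := (Nat.dvd_prime_pow hp).mp (Nat.mem_divisors.mp (ha i)).1
      rw [hji, Nat.Prime.factorization_pow hp, Finsupp.single_eq_same, Finset.mem_range,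
        Nat.lt_succ_iff]
      exact hj
    · intro μ hμ
      funext i
      rw [Nat.Prime.factorization_pow hp, Finsupp.single_eq_same]
    · intro a ha
      rw [Fintype.mem_piFinset] at ha
      funext i
      obtain ⟨j, hj, hji⟩ := (Nat.dvd_prime_pow hp).mp (Nat.mem_divisors.mp (ha i)).1
      show p ^ (a i).factorization p = a i
      rw [hji, Nat.Prime.factorization_pow hp, Finsupp.single_eq_same]
    · intro μ hμ
      rw [Fintype.mem_piFinset] at hμ
      congr 1
      apply Finset.prod_congr rfl
      intro i _
      rw [Nat.pow_div (Nat.lt_succ_iff.mp (Finset.mem_range.mp (hμ i))) hp.pos, hfp]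
  rw [step1]
  have hprodp : ∏ i, p ^ e i = p ^ (∑ i, e i) := Finset.prod_pow_eq_pow_sum _ _ _
  rw [hprodp, hfp]
  have habc := (ABC x y e (Finset.univ : Finset (Fin r))).1
  rw [← habc]
  -- now prove the two sums are equal
  set Dom := Fintype.piFinset (fun i : Fin r => Finset.range (e i + 1)) with hDom
  set F : (Fin r → ℕ) → ℂ := fun μ => (∏ i, sf x y (e i - μ i)) * ψ (fun i => p ^ μ i) with hF
  set G : Finset (Fin r) → ℂ := fun S =>
    cf x y S.card * ∏ i, (if i ∈ S then tf x y (e i) else sf x y (e i)) with hG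
  have hψ0 : ∀ μ : Fin r → ℕ, ¬ (∀ i, μ i ≤ 1) → ψ (fun i => p ^ μ i) = 0 := by
    intro μ hμ
    rw [hψp p hp μ, if_neg, if_neg]
    · rintro ⟨h1, -⟩; exact hμ h1
    · intro hall; exact hμ (fun i => by rw [hall i]; exact Nat.zero_le 1)
  have hL : ∑ μ ∈ Dom, F μ = ∑ μ ∈ Dom.filter (fun μ => ∀ i, μ i ≤ 1), F μ := by
    symm
    apply Finset.sum_subset (Finset.filter_subset _ _)
    intro μ hμ hμn
    rw [Finset.mem_filter, not_and] at hμn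
    rw [hF]
    simp only []
    rw [hψ0 μ (hμn hμ), mul_zero]
  have hR : ∑ S ∈ (Finset.univ : Finset (Fin r)).powerset, G S
      = ∑ S ∈ (Finset.univ : Finset (Fin r)).powerset.filter (fun S => ∀ i ∈ S, e i ≠ 0), G S := by
    symm
    apply Finset.sum_subset (Finset.filter_subset _ _)
    intro S hS hSn
    rw [Finset.mem_filter, not_and] at hSn
    push_neg at hSn
    obtain ⟨i, hiS, hie⟩ := hSn hS
    rw [hG]
    simp only []
    rw [Finset.prod_eq_zero (Finset.mem_univ i), mul_zero]
    rw [if_pos hiS, hie]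
    rfl
  rw [show (∑ μ ∈ Dom, (∏ i, sf x y (e i - μ i)) * ψ (fun i => p ^ μ i)) = ∑ μ ∈ Dom, F μ from rfl,
    show (∑ S ∈ (Finset.univ : Finset (Fin r)).powerset, cf x y S.card *
      ∏ i ∈ Finset.univ, (if i ∈ S then tf x y (e i) else sf x y (e i)))
      = ∑ S ∈ (Finset.univ : Finset (Fin r)).powerset, G S from rfl, hL, hR]
  symm
  apply Finset.sum_nbij' (i := fun μ => Finset.univ.filter (fun i => μ i = 1))
    (j := fun S => fun i => if i ∈ S then 1 else 0)
  · intro μ hμ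
    rw [Finset.mem_filter] at hμ
    obtain ⟨hμdom, hμ1⟩ := hμ
    rw [Fintype.mem_piFinset] at hμdom
    rw [Finset.mem_filter]
    refine ⟨Finset.mem_powerset.mpr (Finset.subset_univ _), ?_⟩
    intro i hi
    rw [Finset.mem_filter] at hi
    have := Nat.lt_succ_iff.mp (Finset.mem_range.mp (hμdom i))
    omega
  · intro S hS
    rw [Finset.mem_filter] at hS
    obtain ⟨-, hSe⟩ := hS
    rw [Finset.mem_filter]
    constructor
    · rw [Fintype.mem_piFinset]
      intro i
      rw [Finset.mem_range, Nat.lt_succ_iff]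
      by_cases hi : i ∈ S
      · simp only [if_pos hi]
        exact Nat.one_le_iff_ne_zero.mpr (hSe i hi)
      · simp only [if_neg hi]; exact Nat.zero_le _
    · intro i
      by_cases hi : i ∈ S
      · simp only [if_pos hi]; exact le_refl 1
      · simp only [if_neg hi]; exact Nat.zero_le _
  · intro μ hμ
    rw [Finset.mem_filter] at hμ
    funext i
    have hb := hμ.2 i
    simp only [Finset.mem_filter, Finset.mem_univ, true_and]
    by_cases h1 : μ i = 1
    · rw [if_pos h1, h1]
    · rw [if_neg h1]
      omega
  · intro S hS
    ext i
    simp only [Finset.mem_filter, Finset.mem_univ, true_and]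
    by_cases hi : i ∈ S
    · simp [hi]
    · simp [hi]
  · intro μ hμ
    rw [Finset.mem_filter] at hμ
    obtain ⟨hμdom, hμ1⟩ := hμ
    rw [Fintype.mem_piFinset] at hμdom
    have hle : ∀ i, μ i ≤ e i := fun i => Nat.lt_succ_iff.mp (Finset.mem_range.mp (hμdom i))
    set S := Finset.univ.filter (fun i => μ i = 1) with hS
    have hcard : ∑ i, μ i = S.card := by
      rw [hS, Finset.card_filter]
      apply Finset.sum_congr rfl
      intro i _
      have := hμ1 i
      interval_cases hi : μ i <;> simp
    rw [hF, hG]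
    simp only []
    have hprodeq : ∏ i, sf x y (e i - μ i)
        = ∏ i, (if i ∈ S then tf x y (e i) else sf x y (e i)) := by
      apply Finset.prod_congr rfl
      intro i _
      by_cases h1 : μ i = 1
      · have hiS : i ∈ S := by rw [hS, Finset.mem_filter]; exact ⟨Finset.mem_univ i, h1⟩
        rw [if_pos hiS, h1]
        have he1 : 1 ≤ e i := le_trans (le_of_eq h1.symm) (hle i)
        obtain ⟨k, hk⟩ : ∃ k, e i = k + 1 := ⟨e i - 1, by omega⟩
        rw [hk]
        rfl
      · have h0 : μ i = 0 := by have := hμ1 i; omega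
        have hiS : i ∉ S := by rw [hS, Finset.mem_filter]; exact fun hc => h1 hc.2
        rw [if_neg hiS, h0, Nat.sub_zero]
    have hψeq : ψ (fun i => p ^ μ i) = cf x y S.card := by
      rw [hψp p hp μ]
      by_cases hall : ∀ i, μ i = 0
      · rw [if_pos hall]
        have : S = ∅ := by
          rw [hS]
          apply Finset.filter_false_of_mem
          intro i _
          rw [hall i]
          exact one_ne_zero ∘ Eq.symm
        rw [this]
        rfl
      · rw [if_neg hall]
        by_cases h2 : 2 ≤ ∑ i, μ i
        · rw [if_pos ⟨hμ1, h2⟩]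
          obtain ⟨k, hk⟩ : ∃ k, ∑ i, μ i = k + 2 := ⟨(∑ i, μ i) - 2, by omega⟩
          rw [← hcard, hk]
          show _ = cf x y ((k+1)+1)
          rw [show cf x y ((k+1)+1) = (-1)^(k+1) * (x*y) * tf x y (k+1) from rfl]
          rw [show tf x y (k+1) = sf x y k from rfl]
          rw [show k + 2 - 1 = k + 1 from rfl, show k + 2 - 2 = k from rfl, hfp]
          ring
        · rw [if_neg (fun hc => h2 hc.2)]
          have hone : ∑ i, μ i = 1 := by
            have hne : ∑ i, μ i ≠ 0 := by
              intro hc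
              exact hall (fun i => by
                have := (Finset.sum_eq_zero_iff).mp hc i (Finset.mem_univ i)
                exact this)
            omega
          rw [← hcard, hone]
          show (0:ℂ) = (-1)^0 * (x*y) * tf x y 0
          rw [show tf x y 0 = 0 from rfl]
          ring
    rw [hprodeq, hψeq]
    exact mul_comm _ _



lemma G_split {r : ℕ} (f : ℕ → ℂ) (ψ : (Fin r → ℕ) → ℂ)
    (fmul : ∀ {m n : ℕ}, Nat.Coprime m n → f (m * n) = f m * f n)
    (hψmul : ∀ m n : Fin r → ℕ, Nat.gcd (∏ i, m i) (∏ i, n i) = 1 →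
      ψ (fun i => m i * n i) = ψ m * ψ n)
    (u v : Fin r → ℕ) (hu : ∀ i, 0 < u i) (hv : ∀ i, 0 < v i)
    (huv : Nat.Coprime (∏ i, u i) (∏ i, v i)) :
    ∑ a ∈ Fintype.piFinset (fun i => (u i * v i).divisors),
        (∏ i, f ((u i * v i) / a i)) * ψ a
      = (∑ b ∈ Fintype.piFinset (fun i => (u i).divisors), (∏ i, f (u i / b i)) * ψ b)
        * (∑ c ∈ Fintype.piFinset (fun i => (v i).divisors), (∏ i, f (v i / c i)) * ψ c) := by
  classical
  have hcop : ∀ i, Nat.Coprime (u i) (v i) := fun i =>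
    Nat.Coprime.coprime_dvd_left (Finset.dvd_prod_of_mem u (Finset.mem_univ i))
      (Nat.Coprime.coprime_dvd_right (Finset.dvd_prod_of_mem v (Finset.mem_univ i)) huv)
  rw [Finset.sum_mul_sum, ← Finset.sum_product']
  apply Finset.sum_nbij'
    (i := fun a => (fun i => Nat.gcd (a i) (u i), fun i => Nat.gcd (a i) (v i)))
    (j := fun bc => fun i => bc.1 i * bc.2 i)
  · intro a ha
    rw [Fintype.mem_piFinset] at ha
    rw [Finset.mem_product]
    constructor
    · rw [Fintype.mem_piFinset]
      intro i
      exact Nat.mem_divisors.mpr ⟨Nat.gcd_dvd_right _ _, (hu i).ne'⟩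
    · rw [Fintype.mem_piFinset]
      intro i
      exact Nat.mem_divisors.mpr ⟨Nat.gcd_dvd_right _ _, (hv i).ne'⟩
  · intro bc hbc
    rw [Finset.mem_product, Fintype.mem_piFinset, Fintype.mem_piFinset] at hbc
    rw [Fintype.mem_piFinset]
    intro i
    exact Nat.mem_divisors.mpr
      ⟨mul_dvd_mul (Nat.mem_divisors.mp (hbc.1 i)).1 (Nat.mem_divisors.mp (hbc.2 i)).1,
        (mul_pos (hu i) (hv i)).ne'⟩
  · intro a ha
    rw [Fintype.mem_piFinset] at ha
    funext i
    have h1 : a i ∣ u i * v i := (Nat.mem_divisors.mp (ha i)).1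
    have := (hcop i).gcd_mul (a i)
    rw [Nat.gcd_eq_left h1] at this
    exact this.symm
  · intro bc hbc
    rw [Finset.mem_product, Fintype.mem_piFinset, Fintype.mem_piFinset] at hbc
    have hb : ∀ i, bc.1 i ∣ u i := fun i => (Nat.mem_divisors.mp (hbc.1 i)).1
    have hc : ∀ i, bc.2 i ∣ v i := fun i => (Nat.mem_divisors.mp (hbc.2 i)).1
    have e1 : (fun i => Nat.gcd (bc.1 i * bc.2 i) (u i)) = bc.1 := by
      funext i
      rw [Nat.Coprime.gcd_mul_right_cancel (bc.1 i)
        (Nat.Coprime.coprime_dvd_left (hc i) (hcop i).symm), Nat.gcd_eq_left (hb i)]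
    have e2 : (fun i => Nat.gcd (bc.1 i * bc.2 i) (v i)) = bc.2 := by
      funext i
      rw [Nat.Coprime.gcd_mul_left_cancel (bc.2 i)
        (Nat.Coprime.coprime_dvd_left (hb i) (hcop i)), Nat.gcd_eq_left (hc i)]
    exact Prod.ext e1 e2
  · intro a ha
    rw [Fintype.mem_piFinset] at ha
    set b := fun i => Nat.gcd (a i) (u i) with hbdef
    set c := fun i => Nat.gcd (a i) (v i) with hcdef
    have hb : ∀ i, b i ∣ u i := fun i => Nat.gcd_dvd_right _ _
    have hc : ∀ i, c i ∣ v i := fun i => Nat.gcd_dvd_right _ _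
    have habc : ∀ i, a i = b i * c i := by
      intro i
      have h1 : a i ∣ u i * v i := (Nat.mem_divisors.mp (ha i)).1
      have := (hcop i).gcd_mul (a i)
      rw [Nat.gcd_eq_left h1] at this
      exact this
    have hdiv : ∀ i, (u i * v i) / a i = (u i / b i) * (v i / c i) := by
      intro i
      rw [habc i, Nat.div_mul_div_comm (hb i) (hc i)]
    have hψeq : ψ a = ψ b * ψ c := by
      have : a = fun i => b i * c i := funext habc
      rw [this]
      apply hψmul
      have hdb : (∏ i, b i) ∣ ∏ i, u i :=
        Finset.prod_dvd_prod_of_dvd _ _ (fun i _ => hb i)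
      have hdc : (∏ i, c i) ∣ ∏ i, v i :=
        Finset.prod_dvd_prod_of_dvd _ _ (fun i _ => hc i)
      exact Nat.Coprime.coprime_dvd_left hdb (Nat.Coprime.coprime_dvd_right hdc huv)
    have hfprod : ∏ i, f ((u i * v i) / a i) = (∏ i, f (u i / b i)) * ∏ i, f (v i / c i) := by
      rw [← Finset.prod_mul_distrib]
      apply Finset.prod_congr rfl
      intro i _
      rw [hdiv i]
      apply fmul
      exact Nat.Coprime.coprime_dvd_left (Nat.div_dvd_of_dvd (hb i))
        (Nat.Coprime.coprime_dvd_right (Nat.div_dvd_of_dvd (hc i)) (hcop i))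
    rw [hfprod, hψeq]
    ring

end main
end BRhelp

theorem busche_ramanujan_r_vars {r : ℕ} (hr : 1 ≤ r) (g h f : ℕ → ℂ)
    (hg1 : g 1 = 1) (hg : ∀ m n : ℕ, g (m * n) = g m * g n)
    (hh1 : h 1 = 1) (hh : ∀ m n : ℕ, h (m * n) = h m * h n)
    (hf : ∀ n : ℕ, f n = ∑ d ∈ n.divisors, g d * h (n / d))
    (ψ : (Fin r → ℕ) → ℂ)
    (hψmul : ∀ m n : Fin r → ℕ, Nat.gcd (∏ i, m i) (∏ i, n i) = 1 →
      ψ (fun i => m i * n i) = ψ m * ψ n)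
    (hψp : ∀ p : ℕ, p.Prime → ∀ ν : Fin r → ℕ,
      ψ (fun i => p ^ ν i) =
        if ∀ i, ν i = 0 then 1
        else if (∀ i, ν i ≤ 1) ∧ 2 ≤ ∑ i, ν i then
          (-1 : ℂ) ^ (∑ i, ν i - 1) * g p * h p * f (p ^ (∑ i, ν i - 2))
        else 0)
    (n : Fin r → ℕ) (hn : ∀ i, 0 < n i) :
    f (∏ i, n i) = ∑ a ∈ Fintype.piFinset fun i => (n i).divisors,
      (∏ i, f (n i / a i)) * ψ a := by
  classical
  have fmul : ∀ {m k : ℕ}, Nat.Coprime m k → f (m * k) = f m * f k :=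
    fun hmk => BRhelp.f_mult g h f hg1 hg hh1 hh hf hmk
  have f1 : f 1 = 1 := BRhelp.f_one g h f hg1 hh1 hf
  suffices H : ∀ N (n : Fin r → ℕ), (∀ i, 0 < n i) → ∏ i, n i = N →
      f (∏ i, n i) = ∑ a ∈ Fintype.piFinset fun i => (n i).divisors,
        (∏ i, f (n i / a i)) * ψ a from H _ n hn rfl
  intro N
  induction N using Nat.strong_induction_on with
  | _ N ih =>
    intro n hn hN
    have hn0 : ∀ i, n i ≠ 0 := fun i => (hn i).ne'
    by_cases h1 : ∏ i, n i = 1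
    · have hni : ∀ i, n i = 1 := fun i =>
        Nat.dvd_one.mp (h1 ▸ Finset.dvd_prod_of_mem n (Finset.mem_univ i))
      have hψ1 : ψ (fun _ => 1) = 1 := by
        have h2 := hψp 2 Nat.prime_two (fun _ => 0)
        simp only [pow_zero] at h2
        simpa using h2
      have hpi : Fintype.piFinset (fun i : Fin r => (n i).divisors)
          = {fun _ => 1} := by
        ext a
        simp [Fintype.mem_piFinset, hni, Nat.divisors_one, funext_iff]
      rw [hpi, Finset.sum_singleton, h1, f1, hψ1, mul_one]
      symm
      apply Finset.prod_eq_one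
      intro i _
      simp only [hni i]
      simpa using f1
    · obtain ⟨p, hp, hpd⟩ := Nat.exists_prime_and_dvd h1
      set e : Fin r → ℕ := fun i => (n i).factorization p with he
      set m : Fin r → ℕ := fun i => n i / p ^ e i with hm
      have hsplit : ∀ i, p ^ e i * m i = n i := fun i =>
        Nat.ordProj_mul_ordCompl_eq_self (n i) p
      have hm_pos : ∀ i, 0 < m i := fun i => Nat.ordCompl_pos p (hn0 i)
      have hpm : ∀ i, ¬ p ∣ m i := fun i => Nat.not_dvd_ordCompl hp (hn0 i)
      have hcop : Nat.Coprime (∏ i, p ^ e i) (∏ i, m i) := by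
        rw [Finset.prod_pow_eq_pow_sum]
        apply Nat.Coprime.pow_left
        apply Nat.Coprime.prod_right
        intro i _
        exact (hp.coprime_iff_not_dvd).mpr (hpm i)
      have hprodn : ∏ i, n i = (∏ i, p ^ e i) * ∏ i, m i := by
        rw [← Finset.prod_mul_distrib]
        exact Finset.prod_congr rfl (fun i _ => (hsplit i).symm)
      have hone_lt : 1 < ∏ i, p ^ e i := by
        obtain ⟨i, -, hpi⟩ := hp.prime.exists_mem_finset_dvd (hN ▸ hpd : p ∣ ∏ i, n i)
        have he1 : 1 ≤ e i := (Nat.Prime.factorization_pos_of_dvd hp (hn0 i) hpi)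
        have hle : 1 ≤ ∑ i, e i :=
          le_trans he1 (Finset.single_le_sum (fun j _ => Nat.zero_le (e j)) (Finset.mem_univ i))
        rw [Finset.prod_pow_eq_pow_sum]
        exact Nat.one_lt_pow (by omega) hp.one_lt
      have hmlt : ∏ i, m i < N := by
        rw [← hN, hprodn]
        exact (Nat.lt_mul_iff_one_lt_left (Finset.prod_pos (fun i _ => hm_pos i))).mpr hone_lt
      have key := BRhelp.G_split f ψ fmul hψmul (fun i => p ^ e i) m
        (fun i => pow_pos hp.pos (e i)) hm_pos hcop
      simp only [hsplit] at key
      have hpp := BRhelp.prime_pow_case g h f ψ hg1 hg hh1 hh hf hψp hp e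
      have hih := ih (∏ i, m i) hmlt m hm_pos rfl
      rw [hprodn, fmul hcop, hpp, hih, ← key]
end

section
/- Let g and h be completely multiplicative arithmetic functions, f = g * h, and r ≥ 1. Let ψ_f be the multiplicative function of r variables defined by ψ_f(p^{ν_1},...,p^{ν_r}) = 1 if all ν_i = 0; (−1)^{j−1} g(p) h(p) f(p^{j−2}) if all ν_i ∈ {0,1} and j := ν_1+...+ν_r ≥ 2; and 0 otherwise. Let ψ_f^{-1} be the inverse of ψ_f under the r-variable Dirichlet convolution. Then for all positive integers n_1,...,n_r: f(n_1) ··· f(n_r) = ∑_{a_1 | n_1, ..., a_r | n_r} f(n_1···n_r/(a_1···a_r)) ψ_f^{-1}(a_1,...,a_r). -/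
open Finset


noncomputable def XX (a b : ℂ) (k : ℕ) : ℂ := ∑ i ∈ Finset.range (k+1), a^i * b^(k-i)

noncomputable def YY (a b : ℂ) (k : ℕ) : ℂ := ∑ i ∈ Finset.range k, a^i * b^(k-1-i)

lemma XX_zero (a b : ℂ) : XX a b 0 = 1 := by simp [XX]

lemma YY_zero (a b : ℂ) : YY a b 0 = 0 := by simp [YY]

lemma YY_succ (a b : ℂ) (k : ℕ) : YY a b (k+1) = XX a b k := by
  simp [XX, YY]

lemma XX_eq (a b : ℂ) (k : ℕ) : XX a b k = b * YY a b k + a^k := by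
  rw [XX, Finset.sum_range_succ, Nat.sub_self, pow_zero, mul_one, YY, Finset.mul_sum]
  congr 1
  refine Finset.sum_congr rfl fun i hi => ?_
  rw [Finset.mem_range] at hi
  rw [mul_comm b, mul_assoc, ← pow_succ, Nat.sub_sub]
  congr 2
  omega

lemma XX_succ (a b : ℂ) (k : ℕ) :
    XX a b (k+1) = (a+b) * XX a b k - a*b*YY a b k := by
  have h1 := XX_eq a b (k+1)
  have h2 := XX_eq a b k
  rw [YY_succ] at h1
  linear_combination h1 - a * h2

lemma XY_add (a b : ℂ) (v u : ℕ) :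
    XX a b (u+v) = XX a b u * XX a b v - a*b*(YY a b u * YY a b v) ∧
    YY a b (u+v) = XX a b u * YY a b v + YY a b u * XX a b v
      - (a+b) * (YY a b u * YY a b v) := by
  induction v generalizing u with
  | zero => simp [XX_zero, YY_zero]
  | succ v ih =>
    obtain ⟨ihX, ihY⟩ := ih u
    constructor
    · rw [show u + (v+1) = (u+v) + 1 by ring, XX_succ, ihX, ihY, XX_succ, YY_succ]
      ring
    · rw [show u + (v+1) = (u+v) + 1 by ring, YY_succ, ihX, XX_succ, YY_succ]
      ring

noncomputable def CC (a b : ℂ) (j : ℕ) : ℂ :=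
  if j = 0 then 1 else (-1:ℂ)^(j-1) * (a*b) * YY a b (j-1)

section Comb
variable {ι : Type*} [DecidableEq ι] (a b : ℂ) (ν : ι → ℕ)

lemma GEN (s : Finset ι) (k : ℕ) :
    ∑ S ∈ s.powerset, (-1:ℂ)^S.card * YY a b (S.card + k) *
        ((∏ i ∈ s \ S, XX a b (ν i)) * ∏ i ∈ S, YY a b (ν i))
      = XX a b (∑ i ∈ s, ν i) * YY a b k - YY a b (∑ i ∈ s, ν i) * XX a b k := by
  induction s using Finset.induction_on generalizing k with
  | empty => simp [XX_zero, YY_zero]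
  | @insert t s ht ih =>
    rw [Finset.sum_powerset_insert ht]
    have hterm1 : ∀ S ∈ s.powerset,
        (-1:ℂ)^S.card * YY a b (S.card + k) *
          ((∏ i ∈ insert t s \ S, XX a b (ν i)) * ∏ i ∈ S, YY a b (ν i))
        = XX a b (ν t) * ((-1:ℂ)^S.card * YY a b (S.card + k) *
          ((∏ i ∈ s \ S, XX a b (ν i)) * ∏ i ∈ S, YY a b (ν i))) := by
      intro S hS
      rw [Finset.mem_powerset] at hS
      have htS : t ∉ S := fun hc => ht (hS hc)
      have : insert t s \ S = insert t (s \ S) := by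
        ext x; simp only [Finset.mem_sdiff, Finset.mem_insert]
        constructor
        · rintro ⟨h1 | h1, h2⟩
          · exact Or.inl h1
          · exact Or.inr ⟨h1, h2⟩
        · rintro (rfl | ⟨h1, h2⟩)
          · exact ⟨Or.inl rfl, htS⟩
          · exact ⟨Or.inr h1, h2⟩
      rw [this, Finset.prod_insert (fun hc => ht (Finset.mem_sdiff.mp hc).1)]
      ring
    have hterm2 : ∀ S ∈ s.powerset,
        (-1:ℂ)^(insert t S).card * YY a b ((insert t S).card + k) *
          ((∏ i ∈ insert t s \ insert t S, XX a b (ν i)) * ∏ i ∈ insert t S, YY a b (ν i))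
        = -(YY a b (ν t) * ((-1:ℂ)^S.card * YY a b (S.card + (k+1)) *
          ((∏ i ∈ s \ S, XX a b (ν i)) * ∏ i ∈ S, YY a b (ν i)))) := by
      intro S hS
      rw [Finset.mem_powerset] at hS
      have htS : t ∉ S := fun hc => ht (hS hc)
      have hsd : insert t s \ insert t S = s \ S := by
        ext x; simp only [Finset.mem_sdiff, Finset.mem_insert]
        constructor
        · rintro ⟨h1 | h1, h2⟩
          · exact absurd (Or.inl h1) h2
          · exact ⟨h1, fun hc => h2 (Or.inr hc)⟩
        · rintro ⟨h1, h2⟩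
          exact ⟨Or.inr h1, by rintro (rfl | hc); exact ht h1; exact h2 hc⟩
      rw [hsd, Finset.card_insert_of_notMem htS, Finset.prod_insert htS,
        show S.card + 1 + k = S.card + (k+1) by ring, pow_succ]
      ring
    rw [Finset.sum_congr rfl hterm1, Finset.sum_congr rfl hterm2, ← Finset.mul_sum,
      Finset.sum_neg_distrib, ← Finset.mul_sum, ih, ih,
      Finset.sum_insert ht]
    obtain ⟨hX, hY⟩ := XY_add a b (∑ i ∈ s, ν i) (ν t)
    rw [hX, hY, XX_succ, YY_succ]
    ring

lemma MAIN (s : Finset ι) :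
    ∑ S ∈ s.powerset, CC a b S.card *
        ((∏ i ∈ s \ S, XX a b (ν i)) * ∏ i ∈ S, YY a b (ν i))
      = XX a b (∑ i ∈ s, ν i) := by
  induction s using Finset.induction_on with
  | empty => simp [CC, XX_zero]
  | @insert t s ht ih =>
    rw [Finset.sum_powerset_insert ht]
    have hterm1 : ∀ S ∈ s.powerset,
        CC a b S.card * ((∏ i ∈ insert t s \ S, XX a b (ν i)) * ∏ i ∈ S, YY a b (ν i))
        = XX a b (ν t) * (CC a b S.card *
            ((∏ i ∈ s \ S, XX a b (ν i)) * ∏ i ∈ S, YY a b (ν i))) := by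
      intro S hS
      rw [Finset.mem_powerset] at hS
      have htS : t ∉ S := fun hc => ht (hS hc)
      have : insert t s \ S = insert t (s \ S) := by
        ext x; simp only [Finset.mem_sdiff, Finset.mem_insert]
        constructor
        · rintro ⟨h1 | h1, h2⟩
          · exact Or.inl h1
          · exact Or.inr ⟨h1, h2⟩
        · rintro (rfl | ⟨h1, h2⟩)
          · exact ⟨Or.inl rfl, htS⟩
          · exact ⟨Or.inr h1, h2⟩
      rw [this, Finset.prod_insert (fun hc => ht (Finset.mem_sdiff.mp hc).1)]
      ring
    have hterm2 : ∀ S ∈ s.powerset,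
        CC a b (insert t S).card *
          ((∏ i ∈ insert t s \ insert t S, XX a b (ν i)) * ∏ i ∈ insert t S, YY a b (ν i))
        = (a*b) * YY a b (ν t) * ((-1:ℂ)^S.card * YY a b (S.card + 0) *
          ((∏ i ∈ s \ S, XX a b (ν i)) * ∏ i ∈ S, YY a b (ν i))) := by
      intro S hS
      rw [Finset.mem_powerset] at hS
      have htS : t ∉ S := fun hc => ht (hS hc)
      have hsd : insert t s \ insert t S = s \ S := by
        ext x; simp only [Finset.mem_sdiff, Finset.mem_insert]
        constructor
        · rintro ⟨h1 | h1, h2⟩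
          · exact absurd (Or.inl h1) h2
          · exact ⟨h1, fun hc => h2 (Or.inr hc)⟩
        · rintro ⟨h1, h2⟩
          exact ⟨Or.inr h1, by rintro (rfl | hc); exact ht h1; exact h2 hc⟩
      rw [hsd, Finset.card_insert_of_notMem htS, Finset.prod_insert htS]
      simp only [CC, Nat.add_sub_cancel, Nat.add_eq_zero, Nat.succ_ne_zero, and_false,
        if_false, Nat.add_zero]
      ring
    rw [Finset.sum_congr rfl hterm1, Finset.sum_congr rfl hterm2, ← Finset.mul_sum,
      ← Finset.mul_sum, ih, GEN, Finset.sum_insert ht]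
    obtain ⟨hX, _⟩ := XY_add a b (∑ i ∈ s, ν i) (ν t)
    rw [hX, XX_zero, YY_zero]
    ring
end Comb

section FLemmas
variable (g h f : ℕ → ℂ)
  (hg1 : g 1 = 1) (hg : ∀ m n : ℕ, g (m * n) = g m * g n)
  (hh1 : h 1 = 1) (hh : ∀ m n : ℕ, h (m * n) = h m * h n)
  (hf : ∀ n : ℕ, f n = ∑ d ∈ n.divisors, g d * h (n / d))

include hg1 hg in
lemma g_pp (p i : ℕ) : g (p ^ i) = (g p) ^ i := by
  induction i with
  | zero => simpa using hg1
  | succ i ih => rw [pow_succ, pow_succ, hg, ih]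

include hf hg1 hh1 in
lemma f_one : f 1 = 1 := by
  rw [hf 1]; simp [Nat.divisors_one, hg1, hh1]

include hg1 hg hh1 hh hf in
lemma f_pp {p : ℕ} (hp : p.Prime) (k : ℕ) : f (p ^ k) = XX (g p) (h p) k := by
  rw [hf, Nat.sum_divisors_prime_pow hp, XX]
  refine Finset.sum_congr rfl fun i hi => ?_
  rw [Finset.mem_range] at hi
  rw [g_pp g hg1 hg, Nat.pow_div (by omega) hp.pos,
    show h (p ^ (k-i)) = (h p)^(k-i) from g_pp h hh1 hh p (k-i)]

include hg1 hg hh1 hh hf in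
lemma f_mult {m n : ℕ} (hm : 0 < m) (hn : 0 < n) (hmn : Nat.Coprime m n) :
    f (m * n) = f m * f n := by
  classical
  let gA : ArithmeticFunction ℂ := ⟨fun n => if n = 0 then 0 else g n, by simp⟩
  let hA : ArithmeticFunction ℂ := ⟨fun n => if n = 0 then 0 else h n, by simp⟩
  have gA_apply : ∀ k, gA k = if k = 0 then 0 else g k := fun k => rfl
  have hA_apply : ∀ k, hA k = if k = 0 then 0 else h k := fun k => rfl
  have hgAm : gA.IsMultiplicative := by
    refine ⟨by rw [gA_apply]; simp [hg1], fun {x y} hxy => ?_⟩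
    rcases Nat.eq_zero_or_pos x with rfl | hx
    · have : y = 1 := Nat.coprime_zero_left y |>.mp hxy
      subst this; simp [gA_apply, hg1]
    rcases Nat.eq_zero_or_pos y with rfl | hy
    · have : x = 1 := Nat.coprime_zero_right x |>.mp hxy
      subst this; simp [gA_apply, hg1]
    rw [gA_apply, gA_apply, gA_apply, if_neg (by positivity), if_neg (by omega),
      if_neg (by omega), hg]
  have hhAm : hA.IsMultiplicative := by
    refine ⟨by rw [hA_apply]; simp [hh1], fun {x y} hxy => ?_⟩
    rcases Nat.eq_zero_or_pos x with rfl | hx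
    · have : y = 1 := Nat.coprime_zero_left y |>.mp hxy
      subst this; simp [hA_apply, hh1]
    rcases Nat.eq_zero_or_pos y with rfl | hy
    · have : x = 1 := Nat.coprime_zero_right x |>.mp hxy
      subst this; simp [hA_apply, hh1]
    rw [hA_apply, hA_apply, hA_apply, if_neg (by positivity), if_neg (by omega),
      if_neg (by omega), hh]
  have key : ∀ k : ℕ, 0 < k → f k = (gA * hA) k := by
    intro k hk
    rw [ArithmeticFunction.mul_apply, Nat.sum_divisorsAntidiagonal (fun x y => gA x * hA y),
      hf k]
    refine Finset.sum_congr rfl fun d hd => ?_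
    rw [Nat.mem_divisors] at hd
    have hd0 : d ≠ 0 := by rintro rfl; exact hd.2 (Nat.eq_zero_of_zero_dvd hd.1)
    have hkd0 : k / d ≠ 0 := Nat.ne_of_gt (Nat.div_pos (Nat.le_of_dvd hk hd.1)
      (Nat.pos_of_ne_zero hd0))
    rw [gA_apply, hA_apply, if_neg hd0, if_neg hkd0]
  rw [key _ (by positivity), key _ hm, key _ hn,
    (hgAm.mul hhAm).map_mul_of_coprime hmn]

end FLemmas


lemma nat_div_dvd_div {b a n : ℕ} (hb : b ∣ a) (ha : a ∣ n) : a / b ∣ n / b := by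
  obtain ⟨u, rfl⟩ := hb
  obtain ⟨v, rfl⟩ := ha
  rcases Nat.eq_zero_or_pos b with rfl | hbp
  · simp
  · rw [Nat.mul_div_cancel_left _ hbp, Nat.mul_assoc, Nat.mul_div_cancel_left _ hbp]
    exact dvd_mul_right u v

lemma nat_div_div_eq {b a n : ℕ} (hb : b ∣ a) (ha : a ∣ n) :
    n / b / (a / b) = n / a := by
  rw [Nat.div_div_eq_div_mul, Nat.mul_div_cancel' hb]

section Conv
variable {r : ℕ}

noncomputable def Dconv (F G : (Fin r → ℕ) → ℂ) (n : Fin r → ℕ) : ℂ :=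
  ∑ a ∈ Fintype.piFinset (fun i => (n i).divisors), F a * G (fun i => n i / a i)

lemma mem_D {n a : Fin r → ℕ} :
    a ∈ Fintype.piFinset (fun i => (n i).divisors) ↔ ∀ i, a i ∣ n i ∧ n i ≠ 0 := by
  simp [Fintype.mem_piFinset, Nat.mem_divisors]

lemma pos_of_mem_D {n a : Fin r → ℕ} (ha : a ∈ Fintype.piFinset (fun i => (n i).divisors))
    (i : Fin r) : 0 < a i := by
  rw [mem_D] at ha
  rcases Nat.eq_zero_or_pos (a i) with hc | hp
  · exact absurd (hc ▸ (ha i).1) (by simpa [Nat.zero_dvd] using (ha i).2)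
  · exact hp

lemma div_mem_D {n a : Fin r → ℕ} (hn : ∀ i, 0 < n i) (ha : ∀ i, a i ∣ n i) :
    (fun i => n i / a i) ∈ Fintype.piFinset (fun i => (n i).divisors) := by
  rw [mem_D]
  exact fun i => ⟨Nat.div_dvd_of_dvd (ha i), (hn i).ne'⟩

lemma self_mem_D {n : Fin r → ℕ} (hn : ∀ i, 0 < n i) :
    n ∈ Fintype.piFinset (fun i => (n i).divisors) := by
  rw [mem_D]; exact fun i => ⟨dvd_rfl, (hn i).ne'⟩

lemma Dconv_comm (F G : (Fin r → ℕ) → ℂ) (n : Fin r → ℕ) (hn : ∀ i, 0 < n i) :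
    Dconv F G n = Dconv G F n := by
  unfold Dconv
  refine Finset.sum_nbij' (fun a => fun i => n i / a i) (fun a => fun i => n i / a i)
    ?_ ?_ ?_ ?_ ?_
  all_goals intro a ha
  · exact div_mem_D hn (fun i => ((mem_D.mp ha) i).1)
  · exact div_mem_D hn (fun i => ((mem_D.mp ha) i).1)
  · funext i
    exact Nat.div_div_self ((mem_D.mp ha) i).1 (hn i).ne'
  · funext i
    exact Nat.div_div_self ((mem_D.mp ha) i).1 (hn i).ne'
  · have : (fun i => n i / (n i / a i)) = a := by
      funext i
      exact Nat.div_div_self ((mem_D.mp ha) i).1 (hn i).ne'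
    rw [this, mul_comm]

lemma Dconv_assoc (F G H : (Fin r → ℕ) → ℂ) (n : Fin r → ℕ) (hn : ∀ i, 0 < n i) :
    Dconv (Dconv F G) H n = Dconv F (fun m => Dconv G H m) n := by
  unfold Dconv
  simp_rw [Finset.sum_mul, Finset.mul_sum]
  rw [Finset.sum_sigma', Finset.sum_sigma']
  refine Finset.sum_nbij' (fun x => ⟨x.2, fun i => x.1 i / x.2 i⟩)
    (fun x => ⟨fun i => x.1 i * x.2 i, x.1⟩) ?_ ?_ ?_ ?_ ?_
  · rintro ⟨x1, x2⟩ hx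
    dsimp only at hx ⊢
    rw [Finset.mem_sigma] at hx
    obtain ⟨h1, h2⟩ := hx
    have hx2 : ∀ i, 0 < x2 i := pos_of_mem_D h2
    have hx1 : ∀ i, 0 < x1 i := pos_of_mem_D h1
    rw [mem_D] at h1 h2
    rw [Finset.mem_sigma, mem_D, mem_D]
    constructor
    · exact fun i => ⟨dvd_trans (h2 i).1 (h1 i).1, (hn i).ne'⟩
    · intro i
      refine ⟨nat_div_dvd_div (h2 i).1 (h1 i).1, ?_⟩
      exact (Nat.div_pos (Nat.le_of_dvd (hn i) (dvd_trans (h2 i).1 (h1 i).1)) (hx2 i)).ne'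
  · rintro ⟨x1, x2⟩ hx
    dsimp only at hx ⊢
    rw [Finset.mem_sigma] at hx
    obtain ⟨h1, h2⟩ := hx
    have hx1 : ∀ i, 0 < x1 i := pos_of_mem_D h1
    have hx2 : ∀ i, 0 < x2 i := pos_of_mem_D h2
    rw [mem_D] at h1 h2
    rw [Finset.mem_sigma, mem_D, mem_D]
    constructor
    · intro i
      refine ⟨?_, (hn i).ne'⟩
      have : x1 i * x2 i ∣ x1 i * (n i / x1 i) := mul_dvd_mul_left _ (h2 i).1
      rwa [Nat.mul_div_cancel' (h1 i).1] at this
    · exact fun i => ⟨dvd_mul_right _ _, (Nat.mul_pos (hx1 i) (hx2 i)).ne'⟩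
  · rintro ⟨x1, x2⟩ hx
    dsimp only at hx ⊢
    rw [Finset.mem_sigma] at hx
    obtain ⟨h1, h2⟩ := hx
    rw [mem_D] at h1 h2
    have : (fun i => x2 i * (x1 i / x2 i)) = x1 := by
      funext i
      exact Nat.mul_div_cancel' (h2 i).1
    simp only [Sigma.mk.inj_iff, this, heq_eq_eq, and_true]
  · rintro ⟨x1, x2⟩ hx
    dsimp only at hx ⊢
    rw [Finset.mem_sigma] at hx
    obtain ⟨h1, h2⟩ := hx
    have hx1 : ∀ i, 0 < x1 i := pos_of_mem_D h1
    have : (fun i => x1 i * x2 i / x1 i) = x2 := by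
      funext i
      exact Nat.mul_div_cancel_left _ (hx1 i)
    simp only [Sigma.mk.inj_iff, this, heq_eq_eq, and_true]
  · rintro ⟨x1, x2⟩ hx
    dsimp only at hx ⊢
    rw [Finset.mem_sigma] at hx
    obtain ⟨h1, h2⟩ := hx
    have hx1 : ∀ i, 0 < x1 i := pos_of_mem_D h1
    have hx2 : ∀ i, 0 < x2 i := pos_of_mem_D h2
    rw [mem_D] at h1 h2
    have hdd : (fun i => n i / x2 i / (x1 i / x2 i)) = (fun i => n i / x1 i) := by
      funext i
      exact nat_div_div_eq (h2 i).1 (h1 i).1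
    rw [hdd]
    ring

lemma Dconv_delta (F : (Fin r → ℕ) → ℂ) (n : Fin r → ℕ) (hn : ∀ i, 0 < n i) :
    (∑ a ∈ Fintype.piFinset (fun i => (n i).divisors),
      F a * (if ∀ i, n i / a i = 1 then 1 else 0)) = F n := by
  rw [Finset.sum_eq_single n]
  · rw [if_pos (fun i => Nat.div_self (hn i)), mul_one]
  · intro a ha hne
    rw [if_neg, mul_zero]
    intro hc
    apply hne
    funext i
    have h1 := (mem_D.mp ha) i
    have := hc i
    have : n i = a i * 1 := by
      rw [← this, Nat.mul_div_cancel' h1.1]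
    omega
  · intro hc
    exact absurd (self_mem_D hn) hc
end Conv

section Conv2
variable {r : ℕ}
/-- Convolution of multiplicative functions is multiplicative. -/
lemma Dconv_mult (F G : (Fin r → ℕ) → ℂ)
    (hF : ∀ m n : Fin r → ℕ, (∀ i, 0 < m i) → (∀ i, 0 < n i) →
      Nat.gcd (∏ i, m i) (∏ i, n i) = 1 → F (fun i => m i * n i) = F m * F n)
    (hG : ∀ m n : Fin r → ℕ, (∀ i, 0 < m i) → (∀ i, 0 < n i) →
      Nat.gcd (∏ i, m i) (∏ i, n i) = 1 → G (fun i => m i * n i) = G m * G n)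
    (m n : Fin r → ℕ) (hm : ∀ i, 0 < m i) (hn : ∀ i, 0 < n i)
    (hmn : Nat.gcd (∏ i, m i) (∏ i, n i) = 1) :
    Dconv F G (fun i => m i * n i) = Dconv F G m * Dconv F G n := by
  have hco : ∀ i, (m i).Coprime (n i) := fun i =>
    Nat.Coprime.coprime_dvd_left (Finset.dvd_prod_of_mem m (Finset.mem_univ i))
      (Nat.Coprime.coprime_dvd_right (Finset.dvd_prod_of_mem n (Finset.mem_univ i)) hmn)
  unfold Dconv
  rw [Finset.sum_mul_sum, ← Finset.sum_product']
  refine Finset.sum_nbij'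
    (fun a => (fun i => (a i).gcd (m i), fun i => (a i).gcd (n i)))
    (fun bc => fun i => bc.1 i * bc.2 i) ?_ ?_ ?_ ?_ ?_
  · intro a ha
    rw [Finset.mem_product, mem_D, mem_D]
    exact ⟨fun i => ⟨Nat.gcd_dvd_right _ _, (hm i).ne'⟩,
      fun i => ⟨Nat.gcd_dvd_right _ _, (hn i).ne'⟩⟩
  · rintro ⟨b, c⟩ hbc
    rw [Finset.mem_product] at hbc
    obtain ⟨hb, hc⟩ := hbc
    rw [mem_D] at hb hc ⊢
    intro i
    exact ⟨mul_dvd_mul ((hb i).1) ((hc i).1), (Nat.mul_pos (hm i) (hn i)).ne'⟩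
  · intro a ha
    have hapos := pos_of_mem_D ha
    rw [mem_D] at ha
    funext i
    dsimp only
    rw [← Nat.Coprime.gcd_mul (a i) (hco i)]
    exact Nat.gcd_eq_left ((ha i).1)
  · rintro ⟨b, c⟩ hbc
    rw [Finset.mem_product] at hbc
    obtain ⟨hb, hc⟩ := hbc
    rw [mem_D] at hb hc
    have h1 : ∀ i, (b i * c i).gcd (m i) = b i := by
      intro i
      rw [Nat.Coprime.gcd_mul_right_cancel (b i)
        (Nat.Coprime.coprime_dvd_left (hc i).1 (hco i).symm)]
      exact Nat.gcd_eq_left ((hb i).1)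
    have h2 : ∀ i, (b i * c i).gcd (n i) = c i := by
      intro i
      rw [mul_comm, Nat.Coprime.gcd_mul_right_cancel (c i)
        (Nat.Coprime.coprime_dvd_left (hb i).1 (hco i))]
      exact Nat.gcd_eq_left ((hc i).1)
    exact Prod.ext (funext h1) (funext h2)
  · intro a ha
    dsimp only
    have hapos := pos_of_mem_D ha
    rw [mem_D] at ha
    have key : ∀ b c : Fin r → ℕ, (∀ i, b i ∣ m i) → (∀ i, c i ∣ n i) →
        (∀ i, 0 < b i) → (∀ i, 0 < c i) → a = (fun i => b i * c i) →
        F a * G (fun i => m i * n i / a i)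
          = (F b * G fun i => m i / b i) * (F c * G fun i => n i / c i) := by
      intro b c hbdvd hcdvd hbpos hcpos hab
      subst hab
      have hdiv2 : (fun i => m i * n i / (fun i => b i * c i) i)
          = fun i => (m i / b i) * (n i / c i) := by
        funext i
        dsimp only
        rw [Nat.div_mul_div_comm (hbdvd i) (hcdvd i)]
      rw [hdiv2]
      have hco_bc : Nat.gcd (∏ i, b i) (∏ i, c i) = 1 :=
        Nat.Coprime.coprime_dvd_left
          (Finset.prod_dvd_prod_of_dvd _ _ (fun i _ => hbdvd i))
          (Nat.Coprime.coprime_dvd_right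
            (Finset.prod_dvd_prod_of_dvd _ _ (fun i _ => hcdvd i)) hmn)
      have hco_div : Nat.gcd (∏ i, m i / b i) (∏ i, n i / c i) = 1 :=
        Nat.Coprime.coprime_dvd_left
          (Finset.prod_dvd_prod_of_dvd _ _ (fun i _ => Nat.div_dvd_of_dvd (hbdvd i)))
          (Nat.Coprime.coprime_dvd_right
            (Finset.prod_dvd_prod_of_dvd _ _ (fun i _ => Nat.div_dvd_of_dvd (hcdvd i))) hmn)
      rw [hF b c hbpos hcpos hco_bc,
        hG _ _ (fun i => Nat.div_pos (Nat.le_of_dvd (hm i) (hbdvd i)) (hbpos i))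
          (fun i => Nat.div_pos (Nat.le_of_dvd (hn i) (hcdvd i)) (hcpos i)) hco_div]
      ring
    refine key _ _ (fun i => Nat.gcd_dvd_right _ _) (fun i => Nat.gcd_dvd_right _ _)
      (fun i => Nat.gcd_pos_of_pos_left _ (hapos i))
      (fun i => Nat.gcd_pos_of_pos_left _ (hapos i)) (funext fun i => ?_)
    rw [← Nat.Coprime.gcd_mul (a i) (hco i)]
    exact (Nat.gcd_eq_left ((ha i).1)).symm

/-- Two multiplicative functions agreeing on prime powers agree everywhere. -/
lemma Dagree (F G : (Fin r → ℕ) → ℂ)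
    (hF : ∀ m n : Fin r → ℕ, (∀ i, 0 < m i) → (∀ i, 0 < n i) →
      Nat.gcd (∏ i, m i) (∏ i, n i) = 1 → F (fun i => m i * n i) = F m * F n)
    (hG : ∀ m n : Fin r → ℕ, (∀ i, 0 < m i) → (∀ i, 0 < n i) →
      Nat.gcd (∏ i, m i) (∏ i, n i) = 1 → G (fun i => m i * n i) = G m * G n)
    (hpp : ∀ p : ℕ, p.Prime → ∀ ν : Fin r → ℕ,
      F (fun i => p ^ ν i) = G (fun i => p ^ ν i)) :
    ∀ n : Fin r → ℕ, (∀ i, 0 < n i) → F n = G n := by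
  have main : ∀ N : ℕ, ∀ n : Fin r → ℕ, (∀ i, 0 < n i) → (∏ i, n i) = N → F n = G n := by
    intro N
    induction N using Nat.strong_induction_on with
    | _ N IH =>
      intro n hn hN
      by_cases h1 : ∏ i, n i = 1
      · have hone : n = fun i => (2:ℕ) ^ ((fun _ => 0) i : ℕ) := by
          funext i
          have : n i ∣ ∏ i, n i := Finset.dvd_prod_of_mem n (Finset.mem_univ i)
          rw [h1] at this
          simpa using Nat.dvd_one.mp this
        rw [hone]
        exact hpp 2 Nat.prime_two (fun _ => 0)
      · set p : ℕ := (∏ i, n i).minFac with hpdef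
        have hp : p.Prime := Nat.minFac_prime h1
        have hNpos : 0 < ∏ i, n i := Finset.prod_pos (fun i _ => hn i)
        set e : Fin r → ℕ := fun i => (n i).factorization p with hedef
        set m : Fin r → ℕ := fun i => n i / p ^ (e i) with hmdef
        have hsplit : ∀ i, n i = p ^ (e i) * m i := by
          intro i
          rw [hmdef, hedef]
          exact (Nat.ordProj_mul_ordCompl_eq_self (n i) p).symm
        have hmpos : ∀ i, 0 < m i := by
          intro i
          rw [hmdef]
          exact Nat.ordCompl_pos p (hn i).ne'
        have hndvd : ∀ i, ¬ p ∣ m i := by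
          intro i
          rw [hmdef]
          exact Nat.not_dvd_ordCompl hp (hn i).ne'
        have hgcd : Nat.gcd (∏ i, p ^ (e i)) (∏ i, m i) = 1 := by
          rw [Finset.prod_pow_eq_pow_sum]
          exact Nat.Coprime.pow_left _
            (Nat.Coprime.prod_right (fun i _ => (hp.coprime_iff_not_dvd).mpr (hndvd i)))
        have hppos : ∀ i, 0 < p ^ (e i) := fun i => Nat.pow_pos hp.pos
        -- ∏ m < N
        have hpdvd : p ∣ ∏ i, n i := Nat.minFac_dvd _
        have hex : ∃ i, p ∣ n i := by
          by_contra hc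
          push_neg at hc
          have : Nat.Coprime p (∏ i, n i) :=
            Nat.Coprime.prod_right (fun i _ => (hp.coprime_iff_not_dvd).mpr (hc i))
          have := Nat.Coprime.eq_one_of_dvd this hpdvd
          exact hp.one_lt.ne' this
        obtain ⟨i0, hi0⟩ := hex
        have he0 : 1 ≤ e i0 := hp.factorization_pos_of_dvd (hn i0).ne' hi0
        have hesum : 1 ≤ ∑ i, e i :=
          le_trans he0 (Finset.single_le_sum (fun i _ => Nat.zero_le _) (Finset.mem_univ i0))
        have hprod_eq : ∏ i, n i = p ^ (∑ i, e i) * ∏ i, m i := by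
          calc ∏ i, n i = ∏ i, (p ^ (e i) * m i) := Finset.prod_congr rfl (fun i _ => hsplit i)
            _ = (∏ i, p ^ (e i)) * ∏ i, m i := Finset.prod_mul_distrib
            _ = p ^ (∑ i, e i) * ∏ i, m i := by rw [Finset.prod_pow_eq_pow_sum]
        have hmprodpos : 0 < ∏ i, m i := Finset.prod_pos (fun i _ => hmpos i)
        have hlt : ∏ i, m i < N := by
          rw [← hN, hprod_eq]
          have : 2 ≤ p ^ (∑ i, e i) :=
            le_trans hp.two_le (Nat.le_self_pow (by omega) p)
          nlinarith [hmprodpos]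
        have hnfun : n = fun i => p ^ (e i) * m i := funext hsplit
        rw [hnfun, hF _ _ hppos hmpos hgcd, hG _ _ hppos hmpos hgcd, hpp p hp e,
          IH _ hlt m hmpos rfl]
  exact fun n hn => main (∏ i, n i) n hn rfl
end Conv2


lemma nat_prod_div {ι : Type*} (s : Finset ι) (n a : ι → ℕ) (h : ∀ i ∈ s, a i ∣ n i) :
    (∏ i ∈ s, n i) / (∏ i ∈ s, a i) = ∏ i ∈ s, (n i / a i) := by
  classical
  induction s using Finset.induction_on with
  | empty => simp
  | @insert t s ht ih =>
    rw [Finset.prod_insert ht, Finset.prod_insert ht, Finset.prod_insert ht,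
      ← ih (fun i hi => h i (Finset.mem_insert_of_mem hi)),
      ← Nat.div_mul_div_comm (h t (Finset.mem_insert_self t s))
        (Finset.prod_dvd_prod_of_dvd _ _ (fun i hi => h i (Finset.mem_insert_of_mem hi)))]

theorem busche_ramanujan_r_vars_inverse {r : ℕ} (hr : 1 ≤ r) (g h f : ℕ → ℂ)
    (hg1 : g 1 = 1) (hg : ∀ m n : ℕ, g (m * n) = g m * g n)
    (hh1 : h 1 = 1) (hh : ∀ m n : ℕ, h (m * n) = h m * h n)
    (hf : ∀ n : ℕ, f n = ∑ d ∈ n.divisors, g d * h (n / d))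
    (ψ : (Fin r → ℕ) → ℂ)
    (hψmul : ∀ m n : Fin r → ℕ, Nat.gcd (∏ i, m i) (∏ i, n i) = 1 →
      ψ (fun i => m i * n i) = ψ m * ψ n)
    (hψp : ∀ p : ℕ, p.Prime → ∀ ν : Fin r → ℕ,
      ψ (fun i => p ^ ν i) =
        if ∀ i, ν i = 0 then 1
        else if (∀ i, ν i ≤ 1) ∧ 2 ≤ ∑ i, ν i then
          (-1 : ℂ) ^ (∑ i, ν i - 1) * g p * h p * f (p ^ (∑ i, ν i - 2))
        else 0)
    (ψinv : (Fin r → ℕ) → ℂ)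
    (hψinv : ∀ n : Fin r → ℕ, (∀ i, 0 < n i) →
      (∑ a ∈ Fintype.piFinset fun i => (n i).divisors,
        ψ a * ψinv (fun i => n i / a i)) = if ∀ i, n i = 1 then 1 else 0)
    (n : Fin r → ℕ) (hn : ∀ i, 0 < n i) :
    (∏ i, f (n i)) = ∑ a ∈ Fintype.piFinset fun i => (n i).divisors,
      f ((∏ i, n i) / ∏ i, a i) * ψinv a := by
  classical
  have fpp : ∀ p : ℕ, p.Prime → ∀ k : ℕ, f (p ^ k) = XX (g p) (h p) k :=
    fun p hp k => f_pp g h f hg1 hg hh1 hh hf hp k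
  have fmult : ∀ {u v : ℕ}, 0 < u → 0 < v → Nat.Coprime u v → f (u * v) = f u * f v :=
    fun hu hv huv => f_mult g h f hg1 hg hh1 hh hf hu hv huv
  -- the prime-power identity
  have E3 : ∀ p : ℕ, p.Prime → ∀ ν : Fin r → ℕ,
      (∑ a ∈ Fintype.piFinset fun i => (p ^ ν i).divisors,
        ψ a * ∏ i, f (p ^ ν i / a i)) = f (p ^ ∑ i, ν i) := by
    intro p hp ν
    have step1 : (∑ a ∈ Fintype.piFinset fun i => (p ^ ν i).divisors,
          ψ a * ∏ i, f (p ^ ν i / a i))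
        = ∑ μ ∈ Fintype.piFinset (fun i => Finset.range (ν i + 1)),
            ψ (fun i => p ^ μ i) * ∏ i, f (p ^ (ν i - μ i)) := by
      refine (Finset.sum_nbij' (fun μ => fun i => p ^ μ i)
        (fun a => fun i => (a i).factorization p) ?_ ?_ ?_ ?_ ?_).symm
      · intro μ hμ
        simp only [Fintype.mem_piFinset, Finset.mem_range] at hμ
        simp only [Fintype.mem_piFinset, Nat.mem_divisors]
        exact fun i => ⟨pow_dvd_pow p (by have := hμ i; omega),
          pow_ne_zero _ hp.pos.ne'⟩
      · intro a ha
        simp only [Fintype.mem_piFinset, Nat.mem_divisors] at ha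
        simp only [Fintype.mem_piFinset, Finset.mem_range]
        intro i
        obtain ⟨k, hk, hak⟩ := (Nat.dvd_prime_pow hp).mp (ha i).1
        rw [hak, hp.factorization_pow, Finsupp.single_eq_same]
        omega
      · intro μ hμ
        funext i
        dsimp only
        rw [hp.factorization_pow, Finsupp.single_eq_same]
      · intro a ha
        simp only [Fintype.mem_piFinset, Nat.mem_divisors] at ha
        funext i
        dsimp only
        obtain ⟨k, hk, hak⟩ := (Nat.dvd_prime_pow hp).mp (ha i).1
        rw [hak, hp.factorization_pow, Finsupp.single_eq_same]
      · intro μ hμ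
        simp only [Fintype.mem_piFinset, Finset.mem_range] at hμ
        congr 1
        refine Finset.prod_congr rfl fun i _ => ?_
        rw [Nat.pow_div (by have := hμ i; omega) hp.pos]
    have step2 : (∑ μ ∈ Fintype.piFinset (fun i => Finset.range (ν i + 1)),
            ψ (fun i => p ^ μ i) * ∏ i, f (p ^ (ν i - μ i)))
        = ∑ μ ∈ (Fintype.piFinset (fun i => Finset.range (ν i + 1))).filter
            (fun μ => ∀ i, μ i ≤ 1),
            ψ (fun i => p ^ μ i) * ∏ i, f (p ^ (ν i - μ i)) := by
      refine (Finset.sum_subset (Finset.filter_subset _ _) ?_).symm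
      intro μ hμ hnot
      have hn1 : ¬ ∀ i, μ i ≤ 1 := by
        intro hc
        exact hnot (Finset.mem_filter.mpr ⟨hμ, hc⟩)
      have hc1 : ¬ (∀ i, μ i = 0) := fun hz => hn1 (fun i => by rw [hz i]; omega)
      have hc2 : ¬ ((∀ i, μ i ≤ 1) ∧ 2 ≤ ∑ i, μ i) := fun hc => hn1 hc.1
      rw [hψp p hp μ, if_neg hc1, if_neg hc2, zero_mul]
    have step3 : (∑ μ ∈ (Fintype.piFinset (fun i => Finset.range (ν i + 1))).filter
            (fun μ => ∀ i, μ i ≤ 1),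
            ψ (fun i => p ^ μ i) * ∏ i, f (p ^ (ν i - μ i)))
        = ∑ S ∈ Finset.univ.powerset.filter (fun S : Finset (Fin r) => ∀ i ∈ S, 1 ≤ ν i),
            CC (g p) (h p) S.card *
              ((∏ i ∈ Finset.univ \ S, XX (g p) (h p) (ν i)) *
                ∏ i ∈ S, YY (g p) (h p) (ν i)) := by
      refine Finset.sum_nbij' (fun μ => Finset.univ.filter (fun i => μ i = 1))
        (fun S => fun i => if i ∈ S then 1 else 0) ?_ ?_ ?_ ?_ ?_
      · intro μ hμ
        rw [Finset.mem_filter] at hμ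
        obtain ⟨hμr, hμ1⟩ := hμ
        simp only [Fintype.mem_piFinset, Finset.mem_range] at hμr
        rw [Finset.mem_filter]
        refine ⟨Finset.mem_powerset.mpr (Finset.filter_subset _ _), ?_⟩
        intro i hi
        rw [Finset.mem_filter] at hi
        have h1 := hμr i
        have h2 := hi.2
        omega
      · intro S hS
        rw [Finset.mem_filter] at hS
        rw [Finset.mem_filter]
        constructor
        · simp only [Fintype.mem_piFinset, Finset.mem_range]
          intro i
          by_cases hi : i ∈ S
          · rw [if_pos hi]; have := hS.2 i hi; omega
          · rw [if_neg hi]; omega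
        · intro i
          dsimp only
          by_cases hi : i ∈ S
          · rw [if_pos hi]
          · rw [if_neg hi]; omega
      · intro μ hμ
        rw [Finset.mem_filter] at hμ
        have hμ1 := hμ.2
        funext i
        simp only [Finset.mem_filter, Finset.mem_univ, true_and]
        by_cases hi : μ i = 1
        · rw [if_pos hi, hi]
        · rw [if_neg hi]; have := hμ1 i; omega
      · intro S hS
        ext i
        simp only [Finset.mem_filter, Finset.mem_univ, true_and]
        by_cases hi : i ∈ S <;> simp [hi]
      · intro μ hμ
        rw [Finset.mem_filter] at hμ
        obtain ⟨hμr, hμ1⟩ := hμ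
        simp only [Fintype.mem_piFinset, Finset.mem_range] at hμr
        have hcard : (Finset.univ.filter (fun i => μ i = 1)).card = ∑ i, μ i := by
          rw [Finset.card_filter]
          refine Finset.sum_congr rfl fun i _ => ?_
          have := hμ1 i
          by_cases hi : μ i = 1
          · rw [if_pos hi, hi]
          · rw [if_neg hi]; omega
        have hψval : ψ (fun i => p ^ μ i) = CC (g p) (h p) (∑ i, μ i) := by
          rw [hψp p hp μ]
          by_cases hz : ∀ i, μ i = 0
          · rw [if_pos hz, CC]
            have hs0 : ∑ i, μ i = 0 := Finset.sum_eq_zero (fun i _ => hz i)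
            rw [hs0, if_pos rfl]
          · rw [if_neg hz]
            have hsne : ∑ i, μ i ≠ 0 := by
              intro hc
              exact hz (fun i => (Finset.sum_eq_zero_iff.mp hc) i (Finset.mem_univ i))
            by_cases h2 : 2 ≤ ∑ i, μ i
            · rw [if_pos ⟨hμ1, h2⟩, CC, if_neg hsne]
              have he1 : ∑ i, μ i - 1 = (∑ i, μ i - 2) + 1 := by omega
              rw [he1, YY_succ, fpp p hp]
              ring
            · rw [if_neg (fun hc => h2 hc.2), CC, if_neg hsne]
              have he0 : ∑ i, μ i - 1 = 0 := by omega
              rw [he0, YY_zero, mul_zero]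
        have hprod : (∏ i, f (p ^ (ν i - μ i)))
            = (∏ i ∈ Finset.univ \ (Finset.univ.filter (fun i => μ i = 1)),
                XX (g p) (h p) (ν i)) *
              ∏ i ∈ Finset.univ.filter (fun i => μ i = 1), YY (g p) (h p) (ν i) := by
          rw [← Finset.prod_sdiff (Finset.subset_univ (Finset.univ.filter (fun i => μ i = 1)))]
          congr 1
          · refine Finset.prod_congr rfl fun i hi => ?_
            rw [Finset.mem_sdiff] at hi
            have hμ0 : μ i = 0 := by
              have h1 := hμ1 i
              have h2 : ¬ μ i = 1 := fun hc =>
                hi.2 (Finset.mem_filter.mpr ⟨Finset.mem_univ i, hc⟩)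
              omega
            rw [hμ0, Nat.sub_zero, fpp p hp]
          · refine Finset.prod_congr rfl fun i hi => ?_
            rw [Finset.mem_filter] at hi
            have hν1 : 1 ≤ ν i := by have := hμr i; have := hi.2; omega
            rw [hi.2, fpp p hp]
            have hrw : ν i = (ν i - 1) + 1 := by omega
            rw [hrw, YY_succ, Nat.add_sub_cancel]
        rw [hψval, hprod, hcard]
    have step4 : (∑ S ∈ Finset.univ.powerset.filter
            (fun S : Finset (Fin r) => ∀ i ∈ S, 1 ≤ ν i),
            CC (g p) (h p) S.card *
              ((∏ i ∈ Finset.univ \ S, XX (g p) (h p) (ν i)) *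
                ∏ i ∈ S, YY (g p) (h p) (ν i)))
        = ∑ S ∈ (Finset.univ : Finset (Fin r)).powerset,
            CC (g p) (h p) S.card *
              ((∏ i ∈ Finset.univ \ S, XX (g p) (h p) (ν i)) *
                ∏ i ∈ S, YY (g p) (h p) (ν i)) := by
      refine Finset.sum_subset (Finset.filter_subset _ _) ?_
      intro S hS hnot
      have hex : ∃ i ∈ S, ν i = 0 := by
        by_contra hc
        push_neg at hc
        exact hnot (Finset.mem_filter.mpr ⟨hS, fun i hi => by have := hc i hi; omega⟩)
      obtain ⟨i0, hi0, hν0⟩ := hex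
      have hz : (∏ i ∈ S, YY (g p) (h p) (ν i)) = 0 :=
        Finset.prod_eq_zero hi0 (by rw [hν0]; exact YY_zero _ _)
      rw [hz, mul_zero, mul_zero]
    rw [step1, step2, step3, step4, MAIN (g p) (h p) ν Finset.univ, fpp p hp]
  -- multiplicativity packaging
  have hΦmul : ∀ m' n' : Fin r → ℕ, (∀ i, 0 < m' i) → (∀ i, 0 < n' i) →
      Nat.gcd (∏ i, m' i) (∏ i, n' i) = 1 →
      (fun X : Fin r → ℕ => ∏ i, f (X i)) (fun i => m' i * n' i)
        = (fun X : Fin r → ℕ => ∏ i, f (X i)) m' * (fun X : Fin r → ℕ => ∏ i, f (X i)) n' := by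
    intro m' n' hm' hn' hmn'
    dsimp only
    have hco : ∀ i, (m' i).Coprime (n' i) := fun i =>
      Nat.Coprime.coprime_dvd_left (Finset.dvd_prod_of_mem m' (Finset.mem_univ i))
        (Nat.Coprime.coprime_dvd_right (Finset.dvd_prod_of_mem n' (Finset.mem_univ i)) hmn')
    rw [← Finset.prod_mul_distrib]
    exact Finset.prod_congr rfl fun i _ => fmult (hm' i) (hn' i) (hco i)
  have hFpmul : ∀ m' n' : Fin r → ℕ, (∀ i, 0 < m' i) → (∀ i, 0 < n' i) →
      Nat.gcd (∏ i, m' i) (∏ i, n' i) = 1 →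
      (fun X : Fin r → ℕ => f (∏ i, X i)) (fun i => m' i * n' i)
        = (fun X : Fin r → ℕ => f (∏ i, X i)) m' * (fun X : Fin r → ℕ => f (∏ i, X i)) n' := by
    intro m' n' hm' hn' hmn'
    dsimp only
    rw [Finset.prod_mul_distrib]
    exact fmult (Finset.prod_pos (fun i _ => hm' i)) (Finset.prod_pos (fun i _ => hn' i)) hmn'
  have hψmul' : ∀ m' n' : Fin r → ℕ, (∀ i, 0 < m' i) → (∀ i, 0 < n' i) →
      Nat.gcd (∏ i, m' i) (∏ i, n' i) = 1 →
      ψ (fun i => m' i * n' i) = ψ m' * ψ n' := fun m' n' _ _ hmn' => hψmul m' n' hmn'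
  -- the key identity  Φ * ψ = Fprod
  have E : ∀ m' : Fin r → ℕ, (∀ i, 0 < m' i) →
      Dconv (fun X : Fin r → ℕ => ∏ i, f (X i)) ψ m' = f (∏ i, m' i) := by
    refine Dagree _ _ (Dconv_mult _ _ hΦmul hψmul') hFpmul ?_
    intro p hp ν
    have hpos : ∀ i, 0 < p ^ ν i := fun i => Nat.pow_pos hp.pos
    rw [Dconv_comm _ _ _ hpos]
    show (∑ a ∈ Fintype.piFinset fun i => (p ^ ν i).divisors,
        ψ a * ∏ i, f (p ^ ν i / a i)) = f (∏ i, p ^ ν i)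
    rw [Finset.prod_pow_eq_pow_sum]
    exact E3 p hp ν
  -- assembly
  have c1 : (∑ a ∈ Fintype.piFinset fun i => (n i).divisors,
        f ((∏ i, n i) / ∏ i, a i) * ψinv a)
      = Dconv ψinv (fun X : Fin r → ℕ => f (∏ i, X i)) n := by
    refine Finset.sum_congr rfl fun a ha => ?_
    rw [mem_D] at ha
    dsimp only
    rw [nat_prod_div Finset.univ n a (fun i _ => (ha i).1)]
    exact mul_comm _ _
  have c2 : Dconv ψinv (fun X : Fin r → ℕ => f (∏ i, X i)) n
      = Dconv (fun X : Fin r → ℕ => f (∏ i, X i)) ψinv n :=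
    Dconv_comm _ _ n hn
  have c3 : Dconv (fun X : Fin r → ℕ => f (∏ i, X i)) ψinv n
      = Dconv (Dconv (fun X : Fin r → ℕ => ∏ i, f (X i)) ψ) ψinv n := by
    refine Finset.sum_congr rfl fun a ha => ?_
    rw [E a (pos_of_mem_D ha)]
  have c4 : Dconv (Dconv (fun X : Fin r → ℕ => ∏ i, f (X i)) ψ) ψinv n
      = Dconv (fun X : Fin r → ℕ => ∏ i, f (X i))
          (fun m => Dconv ψ ψinv m) n := Dconv_assoc _ _ _ n hn
  have c5 : Dconv (fun X : Fin r → ℕ => ∏ i, f (X i)) (fun m => Dconv ψ ψinv m) n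
      = ∑ b ∈ Fintype.piFinset fun i => (n i).divisors,
          (∏ i, f (b i)) * (if ∀ i, n i / b i = 1 then 1 else 0) := by
    refine Finset.sum_congr rfl fun b hb => ?_
    rw [mem_D] at hb
    dsimp only
    congr 1
    exact hψinv (fun i => n i / b i)
      (fun i => Nat.div_pos (Nat.le_of_dvd (hn i) (hb i).1)
        (Nat.pos_of_dvd_of_pos (hb i).1 (hn i)))
  have c6 : (∑ b ∈ Fintype.piFinset fun i => (n i).divisors,
        (∏ i, f (b i)) * (if ∀ i, n i / b i = 1 then 1 else 0))
      = ∏ i, f (n i) :=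
    Dconv_delta (fun X : Fin r → ℕ => ∏ i, f (X i)) n hn
  rw [c1, c2, c3, c4, c5, c6]
end

section
/- For every k ≥ 1 and all positive integers n_1, n_2: d_k(n_1 n_2) = ∑_{a_1 | n_1, a_2 | n_2} d_k(n_1/a_1) d_k(n_2/a_2) θ_k(a_1, a_2), where d_k is the Piltz divisor function and θ_k is the multiplicative function of two variables with θ_k(p^{ν_1}, p^{ν_2}) = 1 if ν_1 = ν_2 = 0; (−1)^{ν_1+ν_2−1} C(k, ν_1+ν_2) if ν_1, ν_2 ≥ 1 and ν_1 + ν_2 ≤ k; and 0 otherwise. -/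
open Finset ArithmeticFunction
open scoped ArithmeticFunction.zeta

/-- The Piltz divisor function `d_k(n)`: the number of ordered `k`-tuples of positive
integers with product `n`. -/
def piltz (k n : ℕ) : ℕ :=
  ((Fintype.piFinset fun _ : Fin k => n.divisors).filter (fun a => ∏ i, a i = n)).card

lemma piltz_zero (n : ℕ) : piltz 0 n = if n = 1 then 1 else 0 := by
  simp only [piltz, Fin.prod_univ_zero, Finset.filter_const]
  split <;> simp [*, eq_comm]

lemma piltz_succ {n : ℕ} (hn : n ≠ 0) (k : ℕ) :
    piltz (k + 1) n = ∑ d ∈ n.divisors, piltz k d := by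
  classical
  rw [piltz]
  rw [Finset.card_eq_sum_card_fiberwise
    (f := fun a : Fin (k+1) → ℕ => ∏ i : Fin k, a i.succ) (t := n.divisors)
    (fun a ha => by
      simp only [Finset.mem_coe, Finset.mem_filter, Fintype.mem_piFinset] at ha
      refine Nat.mem_divisors.mpr ⟨⟨a 0, ?_⟩, hn⟩
      rw [← ha.2, Fin.prod_univ_succ, mul_comm])]
  refine Finset.sum_congr rfl fun d hd => ?_
  obtain ⟨hdvd, -⟩ := Nat.mem_divisors.mp hd
  have hd0 : d ≠ 0 := fun h => hn (by simpa [h] using Nat.eq_zero_of_zero_dvd (h ▸ hdvd))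
  rw [piltz]
  apply Finset.card_nbij' (i := Fin.tail) (j := Fin.cons (n / d))
  · intro a ha
    simp only [Finset.mem_coe, Finset.mem_filter, Fintype.mem_piFinset] at ha ⊢
    obtain ⟨⟨h1, h2⟩, h3⟩ := ha
    refine ⟨fun i => Nat.mem_divisors.mpr ⟨?_, hd0⟩, h3⟩
    exact h3 ▸ Finset.dvd_prod_of_mem (fun j => a j.succ) (Finset.mem_univ i)
  · intro b hb
    simp only [Finset.mem_coe, Finset.mem_filter, Fintype.mem_piFinset] at hb ⊢
    obtain ⟨h1, h2⟩ := hb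
    have hprod : ∏ i, (Fin.cons (n / d) b : Fin (k+1) → ℕ) i = n := by
      rw [Fin.prod_univ_succ]
      simp only [Fin.cons_zero, Fin.cons_succ]
      rw [h2, Nat.div_mul_cancel hdvd]
    refine ⟨⟨fun i => ?_, hprod⟩, ?_⟩
    · refine Fin.cases ?_ ?_ i
      · simpa [Nat.mem_divisors] using ⟨Nat.div_dvd_of_dvd hdvd, hn⟩
      · intro j
        simp only [Fin.cons_succ]
        exact Nat.mem_divisors.mpr ⟨dvd_trans (Nat.mem_divisors.mp (h1 j)).1 hdvd, hn⟩
    · show ∏ i : Fin k, (Fin.cons (n/d) b : Fin (k+1) → ℕ) i.succ = d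
      simpa using h2
  · intro a ha
    simp only [Finset.mem_coe, Finset.mem_filter, Fintype.mem_piFinset] at ha
    obtain ⟨⟨h1, h2⟩, h3⟩ := ha
    have ha0 : a 0 = n / d := by
      rw [Fin.prod_univ_succ, h3] at h2
      rw [← h2, Nat.mul_div_cancel _ (Nat.pos_of_ne_zero hd0)]
    rw [← ha0]
    exact Fin.cons_self_tail a
  · intro b hb
    exact Fin.tail_cons _ _

lemma piltz_eq_zeta_pow (k : ℕ) {n : ℕ} (hn : n ≠ 0) :
    piltz k n = (ζ ^ k : ArithmeticFunction ℕ) n := by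
  induction k generalizing n with
  | zero =>
    rw [piltz_zero, pow_zero, one_apply]
  | succ k ih =>
    rw [piltz_succ hn, pow_succ, mul_zeta_apply]
    refine Finset.sum_congr rfl fun d hd => ih (Nat.pos_of_mem_divisors hd).ne'

lemma zeta_pow_isMult (k : ℕ) : (ζ ^ k : ArithmeticFunction ℕ).IsMultiplicative := by
  induction k with
  | zero => rw [pow_zero]; exact isMultiplicative_one
  | succ k ih => rw [pow_succ]; exact ih.mul isMultiplicative_zeta

lemma piltz_isMult (k : ℕ) {m n : ℕ} (hm : m ≠ 0) (hn : n ≠ 0) (h : Nat.Coprime m n) :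
    piltz k (m * n) = piltz k m * piltz k n := by
  rw [piltz_eq_zeta_pow k (Nat.mul_ne_zero hm hn), piltz_eq_zeta_pow k hm, piltz_eq_zeta_pow k hn]
  exact (zeta_pow_isMult k).map_mul_of_coprime h

lemma piltz_one (k : ℕ) : piltz k 1 = 1 := by
  rw [piltz_eq_zeta_pow k one_ne_zero]
  exact (zeta_pow_isMult k).map_one

lemma piltz_prime_pow {k : ℕ} (hk : 1 ≤ k) {p : ℕ} (hp : p.Prime) (m : ℕ) :
    piltz k (p ^ m) = (k - 1 + m).choose m := by
  induction k generalizing m with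
  | zero => omega
  | succ k ih =>
    rcases Nat.eq_zero_or_pos k with rfl | hk1
    · -- piltz 1 (p^m) = 1
      rw [piltz_succ (pow_ne_zero m hp.pos.ne') 0]
      simp only [piltz_zero]
      rw [Finset.sum_ite_eq' _ 1 (fun _ => 1)]
      simp [Nat.one_mem_divisors.mpr (pow_ne_zero m hp.pos.ne')]
    · rw [piltz_succ (pow_ne_zero m hp.pos.ne') k, Nat.sum_divisors_prime_pow hp]
      have : ∀ i ∈ Finset.range (m + 1), piltz k (p ^ i) = (i + (k-1)).choose (k-1) := by
        intro i _
        rw [ih hk1, Nat.add_comm, Nat.choose_symm_add]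
      rw [Finset.sum_congr rfl this, Nat.sum_range_add_choose]
      have h1 : m + (k - 1) + 1 = k + m := by omega
      have h2 : (k - 1) + 1 = k := by omega
      rw [h1, h2]
      have h3 : k + 1 - 1 + m = k + m := by omega
      rw [h3]
      exact Nat.choose_symm_add

lemma coeff_one_sub_pow (k j : ℕ) :
    (PowerSeries.coeff (R := ℤ) j) ((1 - PowerSeries.X) ^ k) = (-1 : ℤ) ^ j * (k.choose j : ℤ) := by
  have h : (1 - PowerSeries.X : PowerSeries ℤ) = -PowerSeries.X + 1 := by ring
  rw [h, add_pow, map_sum]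
  have hterm : ∀ m ∈ range (k+1),
      (PowerSeries.coeff (R := ℤ) j) ((-PowerSeries.X : PowerSeries ℤ)^m * 1^(k-m) * (k.choose m : PowerSeries ℤ))
      = if m = j then (-1:ℤ)^j * (k.choose j : ℤ) else 0 := by
    intro m _
    rw [neg_pow, one_pow, mul_one,
      show ((k.choose m : PowerSeries ℤ)) = PowerSeries.C (R := ℤ) (k.choose m : ℤ) from rfl,
      show ((-1 : PowerSeries ℤ)^m) = PowerSeries.C (R := ℤ) ((-1:ℤ)^m) by rw [map_pow, map_neg, map_one],
      mul_assoc, PowerSeries.coeff_C_mul, PowerSeries.coeff_mul_C, PowerSeries.coeff_X_pow]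
    rcases eq_or_ne m j with rfl | hm
    · simp [mul_comm]
    · simp [hm, (Ne.symm hm : j ≠ m)]
  rw [Finset.sum_congr rfl hterm, Finset.sum_ite_eq' (range (k+1)) j]
  split
  · rfl
  · rename_i hj
    rw [Nat.choose_eq_zero_of_lt (by simp at hj; omega)]
    simp

lemma orth {k : ℕ} (hk : 1 ≤ k) {m : ℕ} (hm : 1 ≤ m) :
    ∑ s ∈ range (m+1), (-1:ℤ)^s * (k.choose s : ℤ) * ((k - 1 + (m - s)).choose (m - s) : ℤ) = 0 := by
  obtain ⟨d, rfl⟩ : ∃ d, k = d + 1 := ⟨k - 1, by omega⟩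
  have h := congrArg (PowerSeries.coeff (R := ℤ) m)
    (PowerSeries.mk_add_choose_mul_one_sub_pow_eq_one (S := ℤ) (d := d))
  rw [PowerSeries.coeff_mul, PowerSeries.coeff_one, if_neg (by omega),
    Finset.Nat.sum_antidiagonal_eq_sum_range_succ
      (f := fun i j => (PowerSeries.coeff (R := ℤ) i) (PowerSeries.mk fun n => ((d + n).choose d : ℤ))
        * (PowerSeries.coeff (R := ℤ) j) ((1 - PowerSeries.X) ^ (d+1)))] at h
  simp only [PowerSeries.coeff_mk, coeff_one_sub_pow] at h
  rw [← Finset.sum_range_reflect] at h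
  rw [← h]
  refine Finset.sum_congr rfl fun s hs => ?_
  rw [Finset.mem_range] at hs
  have h1 : m + 1 - 1 - s = m - s := by omega
  have h2 : m - (m - s) = s := by omega
  rw [h1, h2]
  have h3 : (d + (m - s)).choose d = (d + (m - s)).choose (m - s) := Nat.choose_symm_add
  rw [h3]
  have h4 : d + 1 - 1 + (m - s) = d + (m - s) := by omega
  rw [h4]
  ring

def pD (k m : ℕ) : ℤ := ((k - 1 + m).choose m : ℤ)

def pτ (k s : ℕ) : ℤ := (-1 : ℤ) ^ (s - 1) * (k.choose s : ℤ)

def pt (k i j : ℕ) : ℤ :=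
  if i = 0 ∧ j = 0 then 1 else if 1 ≤ i ∧ 1 ≤ j then pτ k (i + j) else 0

def pG (k a b : ℕ) : ℤ :=
  ∑ i ∈ range (a+1), ∑ j ∈ range (b+1), pD k (a - i) * pD k (b - j) * pt k i j

lemma claim2 {k : ℕ} (hk : 1 ≤ k) {m : ℕ} (hm : 1 ≤ m) :
    ∑ s ∈ range (m+1), pD k (m - s) * pτ k s = 2 * pD k m := by
  have o := orth hk hm
  rw [Finset.sum_range_succ'] at o ⊢
  have e1 : ∀ j ∈ range m, pD k (m - (j+1)) * pτ k (j+1)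
      = -((-1:ℤ)^(j+1) * (k.choose (j+1) : ℤ) * ((k - 1 + (m - (j+1))).choose (m - (j+1)) : ℤ)) := by
    intro j _
    simp only [pτ, pD, Nat.add_sub_cancel]
    rw [pow_succ]
    ring
  rw [Finset.sum_congr rfl e1, Finset.sum_neg_distrib]
  have hτ0 : pτ k 0 = 1 := by simp [pτ]
  have hD0 : ((k - 1 + (m - 0)).choose (m - 0) : ℤ) = pD k m := by simp [pD]
  simp only [hτ0, Nat.sub_zero, pow_zero, Nat.choose_zero_right, Nat.cast_one, one_mul] at o ⊢
  have o2 : ∑ j ∈ range m, (-1:ℤ)^(j+1) * (k.choose (j+1) : ℤ)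
      * ((k - 1 + (m - (j+1))).choose (m - (j+1)) : ℤ) = - pD k m := by
    rw [pD]
    linarith [o]
  rw [o2]
  ring

lemma lemL {k : ℕ} (hk : 1 ≤ k) (b : ℕ) :
    ∑ j ∈ range (b+1), pD k (b - j) * (if j = 0 then 0 else pτ k (j+1))
      = pD k (b+1) - k * pD k b := by
  have c2 := claim2 hk (m := b+1) (Nat.le_add_left 1 b)
  rw [Finset.sum_range_succ'] at c2
  simp only [Nat.succ_sub_succ, Nat.sub_zero] at c2
  have hτ0 : pτ k 0 = 1 := by simp [pτ]
  rw [hτ0, mul_one] at c2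
  have hsum : ∑ j ∈ range (b+1), pD k (b - j) * pτ k (j+1) = pD k (b+1) := by linarith
  have split : ∀ j ∈ range (b+1),
      pD k (b - j) * (if j = 0 then 0 else pτ k (j+1))
        = pD k (b - j) * pτ k (j+1) - (if j = 0 then pD k (b - j) * pτ k (j+1) else 0) := by
    intro j _
    by_cases hj : j = 0 <;> simp [hj]
  rw [Finset.sum_congr rfl split, Finset.sum_sub_distrib, hsum,
    Finset.sum_ite_eq' (range (b+1)) 0 (fun j => pD k (b - j) * pτ k (j+1))]
  have hτ1 : pτ k 1 = (k : ℤ) := by simp [pτ]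
  simp [hτ1, mul_comm]

lemma pt_zero_left (k j : ℕ) : pt k 0 j = if j = 0 then 1 else 0 := by
  by_cases hj : j = 0 <;> simp [pt, hj]

lemma pt_zero_right (k i : ℕ) : pt k i 0 = if i = 0 then 1 else 0 := by
  by_cases hi : i = 0 <;> simp [pt, hi]

lemma pt_succ_left (k i j : ℕ) : pt k (i+1) j = if j = 0 then 0 else pτ k (i+1+j) := by
  by_cases hj : j = 0 <;> simp [pt, hj, Nat.succ_le_iff]

lemma pt_succ_right (k i j : ℕ) : pt k i (j+1) = if i = 0 then 0 else pτ k (i+j+1) := by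
  by_cases hi : i = 0 <;>
    simp [pt, hi, Nat.succ_le_iff, Nat.pos_of_ne_zero, ← Nat.add_assoc]

lemma pG_shift {k : ℕ} (hk : 1 ≤ k) (a b : ℕ) : pG k (a+1) b = pG k a (b+1) := by
  have eqA : pG k (a+1) b
      = (∑ i ∈ range (a+1), ∑ j ∈ range (b+1),
          pD k (a - i) * pD k (b - j) * (if j = 0 then 0 else pτ k (i+1+j)))
        + pD k (a+1) * pD k b := by
    rw [pG, Finset.sum_range_succ']
    congr 1
    · refine Finset.sum_congr rfl fun i _ => Finset.sum_congr rfl fun j _ => ?_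
      rw [Nat.succ_sub_succ, pt_succ_left]
    · have : ∀ j ∈ range (b+1), pD k (a+1-0) * pD k (b - j) * pt k 0 j
          = if j = 0 then pD k (a+1) * pD k (b - j) else 0 := by
        intro j _
        rw [pt_zero_left]
        by_cases hj : j = 0 <;> simp [hj]
      rw [Finset.sum_congr rfl this, Finset.sum_ite_eq' (range (b+1)) 0]
      simp
  have eqB : pG k a (b+1)
      = (∑ i ∈ range (a+1), ∑ j ∈ range (b+1),
          pD k (a - i) * pD k (b - j) * (if i = 0 then 0 else pτ k (i+j+1)))
        + pD k a * pD k (b+1) := by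
    rw [pG]
    have inner : ∀ i ∈ range (a+1),
        ∑ j ∈ range (b+2), pD k (a - i) * pD k (b+1-j) * pt k i j
          = (∑ j ∈ range (b+1), pD k (a - i) * pD k (b - j) * (if i = 0 then 0 else pτ k (i+j+1)))
            + (if i = 0 then pD k (a - i) * pD k (b+1) else 0) := by
      intro i _
      rw [Finset.sum_range_succ']
      congr 1
      · refine Finset.sum_congr rfl fun j _ => ?_
        rw [Nat.succ_sub_succ, pt_succ_right]
      · rw [pt_zero_right]
        by_cases hi : i = 0 <;> simp [hi]
    rw [Finset.sum_congr rfl inner, Finset.sum_add_distrib,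
      Finset.sum_ite_eq' (range (a+1)) 0]
    simp
  rw [eqA, eqB]
  have eqC : ∀ i ∈ range (a+1), ∀ j ∈ range (b+1),
      pD k (a - i) * pD k (b - j) * (if j = 0 then 0 else pτ k (i+1+j))
        - pD k (a - i) * pD k (b - j) * (if i = 0 then 0 else pτ k (i+j+1))
      = (if i = 0 then pD k a * (pD k (b - j) * (if j = 0 then 0 else pτ k (j+1))) else 0)
        - (if j = 0 then pD k b * (pD k (a - i) * (if i = 0 then 0 else pτ k (i+1))) else 0) := by
    intro i _ j _
    by_cases hi : i = 0 <;> by_cases hj : j = 0 <;>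
      simp [hi, hj] <;> ring_nf
  have key : ∑ i ∈ range (a+1), ∑ j ∈ range (b+1),
        (pD k (a - i) * pD k (b - j) * (if j = 0 then 0 else pτ k (i+1+j))
          - pD k (a - i) * pD k (b - j) * (if i = 0 then 0 else pτ k (i+j+1)))
      = pD k a * (pD k (b+1) - k * pD k b) - pD k b * (pD k (a+1) - k * pD k a) := by
    rw [Finset.sum_congr rfl fun i hi => Finset.sum_congr rfl fun j hj => eqC i hi j hj]
    rw [Finset.sum_congr rfl fun i (hi : i ∈ range (a+1)) => Finset.sum_sub_distrib _ _]
    rw [Finset.sum_sub_distrib]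
    congr 1
    · have : ∀ i ∈ range (a+1),
          ∑ j ∈ range (b+1), (if i = 0 then pD k a * (pD k (b - j) * (if j = 0 then 0 else pτ k (j+1))) else 0)
            = if i = 0 then pD k a * (∑ j ∈ range (b+1), pD k (b - j) * (if j = 0 then 0 else pτ k (j+1))) else 0 := by
        intro i _
        by_cases hi : i = 0 <;> simp [hi, Finset.mul_sum]
      rw [Finset.sum_congr rfl this, Finset.sum_ite_eq' (range (a+1)) 0,
        if_pos (Finset.mem_range.mpr (by omega : (0:ℕ) < a + 1)), lemL hk b]
    · have : ∀ i ∈ range (a+1),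
          ∑ j ∈ range (b+1), (if j = 0 then pD k b * (pD k (a - i) * (if i = 0 then 0 else pτ k (i+1))) else 0)
            = pD k b * (pD k (a - i) * (if i = 0 then 0 else pτ k (i+1))) := by
        intro i _
        rw [Finset.sum_ite_eq' (range (b+1)) 0]
        simp
      rw [Finset.sum_congr rfl this, ← Finset.mul_sum, lemL hk a]
  have expand := Finset.sum_congr rfl
    (fun i (_ : i ∈ range (a+1)) => (Finset.sum_sub_distrib (s := range (b+1))
      (f := fun j => pD k (a - i) * pD k (b - j) * (if j = 0 then 0 else pτ k (i+1+j)))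
      (g := fun j => pD k (a - i) * pD k (b - j) * (if i = 0 then 0 else pτ k (i+j+1)))))
  rw [expand, Finset.sum_sub_distrib] at key
  -- key : X - Y = pD k a * (...) - pD k b * (...)
  linarith [key]

lemma pG_eq_pD {k : ℕ} (hk : 1 ≤ k) : ∀ a b, pG k a b = pD k (a + b) := by
  have base : ∀ a, pG k a 0 = pD k a := by
    intro a
    rw [pG]
    have : ∀ i ∈ range (a+1), ∑ j ∈ range 1, pD k (a - i) * pD k (0 - j) * pt k i j
        = if i = 0 then pD k a else 0 := by
      intro i _
      rw [Finset.sum_range_one, pt_zero_right]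
      by_cases hi : i = 0 <;> simp [hi, pD]
    rw [Finset.sum_congr rfl this, Finset.sum_ite_eq' (range (a+1)) 0]
    simp
  intro a b
  induction b generalizing a with
  | zero => exact base a
  | succ b ih =>
    rw [← pG_shift hk, ih (a+1)]
    congr 1
    omega

lemma sum_divisors_coprime_mul {M : Type*} [AddCommMonoid M] {m n : ℕ}
    (h : m.Coprime n) (hm : m ≠ 0) (hn : n ≠ 0) (f : ℕ → M) :
    ∑ d ∈ (m * n).divisors, f d = ∑ a ∈ m.divisors, ∑ b ∈ n.divisors, f (a * b) := by
  rw [← Finset.sum_product']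
  refine Finset.sum_nbij' (i := fun d => (d.gcd m, d.gcd n)) (j := fun p => p.1 * p.2)
    ?_ ?_ ?_ ?_ ?_
  · intro d hd
    obtain ⟨hdvd, -⟩ := Nat.mem_divisors.mp hd
    exact Finset.mem_product.mpr ⟨Nat.mem_divisors.mpr ⟨Nat.gcd_dvd_right _ _, hm⟩,
      Nat.mem_divisors.mpr ⟨Nat.gcd_dvd_right _ _, hn⟩⟩
  · intro p hp
    obtain ⟨h1, h2⟩ := Finset.mem_product.mp hp
    exact Nat.mem_divisors.mpr ⟨mul_dvd_mul (Nat.mem_divisors.mp h1).1 (Nat.mem_divisors.mp h2).1,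
      Nat.mul_ne_zero hm hn⟩
  · intro d hd
    obtain ⟨hdvd, -⟩ := Nat.mem_divisors.mp hd
    show d.gcd m * d.gcd n = d
    rw [← Nat.Coprime.gcd_mul d h, Nat.gcd_eq_left hdvd]
  · intro p hp
    obtain ⟨h1, h2⟩ := Finset.mem_product.mp hp
    have ha := (Nat.mem_divisors.mp h1).1
    have hb := (Nat.mem_divisors.mp h2).1
    have hbm : Nat.Coprime p.2 m := Nat.Coprime.coprime_dvd_left hb h.symm
    have han : Nat.Coprime p.1 n := Nat.Coprime.coprime_dvd_left ha h
    show ((p.1 * p.2).gcd m, (p.1 * p.2).gcd n) = p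
    have e1 : (p.1 * p.2).gcd m = p.1 := by
      rw [Nat.Coprime.gcd_mul_right_cancel p.1 hbm, Nat.gcd_eq_left ha]
    have e2 : (p.1 * p.2).gcd n = p.2 := by
      rw [mul_comm, Nat.Coprime.gcd_mul_right_cancel p.2 han, Nat.gcd_eq_left hb]
    rw [e1, e2]
  · intro d hd
    obtain ⟨hdvd, -⟩ := Nat.mem_divisors.mp hd
    show f d = f (d.gcd m * d.gcd n)
    rw [← Nat.Coprime.gcd_mul d h, Nat.gcd_eq_left hdvd]

lemma quad_sum {M : Type*} [CommRing M] (s t u v : Finset ℕ) (A B : ℕ → ℕ → M) :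
    ∑ i ∈ s, ∑ c ∈ u, ∑ j ∈ t, ∑ d ∈ v, A i j * B c d
      = (∑ i ∈ s, ∑ j ∈ t, A i j) * (∑ c ∈ u, ∑ d ∈ v, B c d) := by
  rw [Finset.sum_mul_sum]
  exact Finset.sum_congr rfl fun i _ => Finset.sum_congr rfl fun c _ => by
    rw [Finset.sum_mul_sum]

lemma theta_prime_pow_eq_pt {k : ℕ} (θ : ℕ → ℕ → ℤ)
    (hθp : ∀ p : ℕ, p.Prime → ∀ ν₁ ν₂ : ℕ,
      θ (p ^ ν₁) (p ^ ν₂) =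
        if ν₁ = 0 ∧ ν₂ = 0 then 1
        else if 1 ≤ ν₁ ∧ 1 ≤ ν₂ ∧ ν₁ + ν₂ ≤ k then
          (-1 : ℤ) ^ (ν₁ + ν₂ - 1) * (k.choose (ν₁ + ν₂) : ℤ)
        else 0)
    {p : ℕ} (hp : p.Prime) (i j : ℕ) : θ (p ^ i) (p ^ j) = pt k i j := by
  rw [hθp p hp i j, pt, pτ]
  by_cases h0 : i = 0 ∧ j = 0
  · simp [h0]
  · rw [if_neg h0, if_neg h0]
    by_cases h1 : 1 ≤ i ∧ 1 ≤ j
    · rw [if_pos h1]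
      by_cases h2 : i + j ≤ k
      · rw [if_pos ⟨h1.1, h1.2, h2⟩]
      · rw [if_neg (by tauto), Nat.choose_eq_zero_of_lt (by omega)]
        simp
    · rw [if_neg h1, if_neg (by tauto)]

lemma prime_part {k : ℕ} (hk : 1 ≤ k) (θ : ℕ → ℕ → ℤ)
    (hθp : ∀ p : ℕ, p.Prime → ∀ ν₁ ν₂ : ℕ,
      θ (p ^ ν₁) (p ^ ν₂) =
        if ν₁ = 0 ∧ ν₂ = 0 then 1
        else if 1 ≤ ν₁ ∧ 1 ≤ ν₂ ∧ ν₁ + ν₂ ≤ k then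
          (-1 : ℤ) ^ (ν₁ + ν₂ - 1) * (k.choose (ν₁ + ν₂) : ℤ)
        else 0)
    {p : ℕ} (hp : p.Prime) (α β : ℕ) :
    ∑ a₁ ∈ (p^α).divisors, ∑ a₂ ∈ (p^β).divisors,
        (piltz k (p^α / a₁) : ℤ) * (piltz k (p^β / a₂) : ℤ) * θ a₁ a₂
      = (piltz k (p^(α+β)) : ℤ) := by
  rw [Nat.sum_divisors_prime_pow hp
    (f := fun a₁ => ∑ a₂ ∈ (p^β).divisors,
      (piltz k (p^α / a₁) : ℤ) * (piltz k (p^β / a₂) : ℤ) * θ a₁ a₂)]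
  have step : ∀ i ∈ range (α+1),
      ∑ a₂ ∈ (p^β).divisors, (piltz k (p^α / p^i) : ℤ) * (piltz k (p^β / a₂) : ℤ) * θ (p^i) a₂
        = ∑ j ∈ range (β+1), pD k (α - i) * pD k (β - j) * pt k i j := by
    intro i hi
    rw [Finset.mem_range] at hi
    rw [Nat.sum_divisors_prime_pow hp
      (f := fun a₂ => (piltz k (p^α / p^i) : ℤ) * (piltz k (p^β / a₂) : ℤ) * θ (p^i) a₂)]
    refine Finset.sum_congr rfl fun j hj => ?_
    rw [Finset.mem_range] at hj
    rw [Nat.pow_div (by omega) hp.pos, Nat.pow_div (by omega) hp.pos,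
      piltz_prime_pow hk hp, piltz_prime_pow hk hp,
      theta_prime_pow_eq_pt θ hθp hp i j]
    rfl
  rw [Finset.sum_congr rfl step]
  rw [show (∑ i ∈ range (α+1), ∑ j ∈ range (β+1),
      pD k (α - i) * pD k (β - j) * pt k i j) = pG k α β from rfl]
  rw [pG_eq_pD hk α β, piltz_prime_pow hk hp]
  rfl

theorem busche_ramanujan_piltz {k : ℕ} (hk : 1 ≤ k) (θ : ℕ → ℕ → ℤ)
    (hθmul : ∀ m₁ m₂ n₁ n₂ : ℕ, Nat.gcd (m₁ * m₂) (n₁ * n₂) = 1 →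
      θ (m₁ * n₁) (m₂ * n₂) = θ m₁ m₂ * θ n₁ n₂)
    (hθp : ∀ p : ℕ, p.Prime → ∀ ν₁ ν₂ : ℕ,
      θ (p ^ ν₁) (p ^ ν₂) =
        if ν₁ = 0 ∧ ν₂ = 0 then 1
        else if 1 ≤ ν₁ ∧ 1 ≤ ν₂ ∧ ν₁ + ν₂ ≤ k then
          (-1 : ℤ) ^ (ν₁ + ν₂ - 1) * (k.choose (ν₁ + ν₂) : ℤ)
        else 0)
    (n₁ n₂ : ℕ) (hn₁ : 0 < n₁) (hn₂ : 0 < n₂) :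
    (piltz k (n₁ * n₂) : ℤ) = ∑ a₁ ∈ n₁.divisors, ∑ a₂ ∈ n₂.divisors,
      (piltz k (n₁ / a₁) : ℤ) * (piltz k (n₂ / a₂) : ℤ) * θ a₁ a₂ := by
  have θ11 : θ 1 1 = 1 := by
    have h := hθp 2 Nat.prime_two 0 0
    simpa using h
  suffices H : ∀ N n₁ n₂ : ℕ, 0 < n₁ → 0 < n₂ → n₁ * n₂ ≤ N →
      (piltz k (n₁ * n₂) : ℤ) = ∑ a₁ ∈ n₁.divisors, ∑ a₂ ∈ n₂.divisors,
        (piltz k (n₁ / a₁) : ℤ) * (piltz k (n₂ / a₂) : ℤ) * θ a₁ a₂ by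
    exact H (n₁ * n₂) n₁ n₂ hn₁ hn₂ le_rfl
  intro N
  induction N with
  | zero =>
    intro n₁ n₂ h1 h2 h
    have := Nat.mul_pos h1 h2
    omega
  | succ N ih =>
    intro n₁ n₂ h1 h2 hle
    by_cases hone : n₁ * n₂ = 1
    · have e1 : n₁ = 1 := Nat.dvd_one.mp ⟨n₂, hone.symm⟩
      have e2 : n₂ = 1 := Nat.dvd_one.mp ⟨n₁, by rw [← hone]; ring⟩
      subst e1; subst e2
      simp [Nat.divisors_one, piltz_one, θ11]
    · -- pick the smallest prime factor
      set p := (n₁ * n₂).minFac with hpdef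
      have hp : p.Prime := Nat.minFac_prime hone
      have hn₁0 : n₁ ≠ 0 := h1.ne'
      have hn₂0 : n₂ ≠ 0 := h2.ne'
      set α := n₁.factorization p with hα
      set β := n₂.factorization p with hβ
      set m₁ := ordCompl[p] n₁ with hm₁
      set m₂ := ordCompl[p] n₂ with hm₂
      have hsplit₁ : p ^ α * m₁ = n₁ := Nat.ordProj_mul_ordCompl_eq_self n₁ p
      have hsplit₂ : p ^ β * m₂ = n₂ := Nat.ordProj_mul_ordCompl_eq_self n₂ p
      have hpm₁ : ¬ p ∣ m₁ := Nat.not_dvd_ordCompl hp hn₁0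
      have hpm₂ : ¬ p ∣ m₂ := Nat.not_dvd_ordCompl hp hn₂0
      have hm₁pos : 0 < m₁ := Nat.ordCompl_pos p hn₁0
      have hm₂pos : 0 < m₂ := Nat.ordCompl_pos p hn₂0
      have copb₁ : Nat.Coprime p m₁ := (Nat.Prime.coprime_iff_not_dvd hp).mpr hpm₁
      have copb₂ : Nat.Coprime p m₂ := (Nat.Prime.coprime_iff_not_dvd hp).mpr hpm₂
      have copm : Nat.Coprime p (m₁ * m₂) := Nat.Coprime.mul_right copb₁ copb₂
      have hαβ : 1 ≤ α + β := by
        have hdvd : p ∣ n₁ * n₂ := Nat.minFac_dvd _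
        rcases (Nat.Prime.dvd_mul hp).mp hdvd with hd | hd
        · have := Nat.Prime.factorization_pos_of_dvd hp hn₁0 hd
          omega
        · have := Nat.Prime.factorization_pos_of_dvd hp hn₂0 hd
          omega
      have hprod : n₁ * n₂ = p ^ (α + β) * (m₁ * m₂) := by
        rw [← hsplit₁, ← hsplit₂, pow_add]; ring
      have hmlt : m₁ * m₂ ≤ N := by
        have h2le : 2 ≤ p ^ (α + β) := by
          calc 2 ≤ p := hp.two_le
          _ = p ^ 1 := (pow_one p).symm
          _ ≤ p ^ (α + β) := Nat.pow_le_pow_right hp.pos hαβ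
        have : m₁ * m₂ < n₁ * n₂ := by
          rw [hprod]
          have := Nat.mul_pos hm₁pos hm₂pos
          nlinarith
        omega
      -- LHS
      have hLHS : piltz k (n₁ * n₂) = piltz k (p ^ (α + β)) * piltz k (m₁ * m₂) := by
        rw [hprod]
        exact piltz_isMult k (pow_ne_zero _ hp.pos.ne') (Nat.mul_ne_zero hm₁pos.ne' hm₂pos.ne')
          (Nat.Coprime.pow_left _ copm)
      -- RHS: split the divisor sums
      rw [← hsplit₁, ← hsplit₂]
      rw [sum_divisors_coprime_mul (Nat.Coprime.pow_left _ copb₁) (pow_ne_zero _ hp.pos.ne')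
        hm₁pos.ne']
      have inner : ∀ a ∈ (p^α).divisors, ∀ c ∈ m₁.divisors,
          ∑ a₂ ∈ (p^β * m₂).divisors,
            (piltz k (p^α * m₁ / (a * c)) : ℤ) * (piltz k (p^β * m₂ / a₂) : ℤ) * θ (a * c) a₂
          = ∑ b ∈ (p^β).divisors, ∑ d ∈ m₂.divisors,
            (piltz k (p^α * m₁ / (a * c)) : ℤ) * (piltz k (p^β * m₂ / (b * d)) : ℤ)
              * θ (a * c) (b * d) := by
        intro a _ c _
        rw [sum_divisors_coprime_mul (Nat.Coprime.pow_left _ copb₂) (pow_ne_zero _ hp.pos.ne')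
          hm₂pos.ne']
      rw [Finset.sum_congr rfl (fun a ha => Finset.sum_congr rfl (fun c hc => inner a ha c hc))]
      -- termwise factorization
      have term : ∀ a ∈ (p^α).divisors, ∀ c ∈ m₁.divisors, ∀ b ∈ (p^β).divisors,
          ∀ d ∈ m₂.divisors,
          (piltz k (p^α * m₁ / (a * c)) : ℤ) * (piltz k (p^β * m₂ / (b * d)) : ℤ)
              * θ (a * c) (b * d)
          = ((piltz k (p^α / a) : ℤ) * (piltz k (p^β / b) : ℤ) * θ a b)
            * ((piltz k (m₁ / c) : ℤ) * (piltz k (m₂ / d) : ℤ) * θ c d) := by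
        intro a ha c hc b hb d hd
        have hadvd := (Nat.mem_divisors.mp ha).1
        have hcdvd := (Nat.mem_divisors.mp hc).1
        have hbdvd := (Nat.mem_divisors.mp hb).1
        have hddvd := (Nat.mem_divisors.mp hd).1
        have e₁ : p^α * m₁ / (a * c) = (p^α / a) * (m₁ / c) :=
          (Nat.div_mul_div_comm hadvd hcdvd).symm
        have e₂ : p^β * m₂ / (b * d) = (p^β / b) * (m₂ / d) :=
          (Nat.div_mul_div_comm hbdvd hddvd).symm
        have hθ : θ (a * c) (b * d) = θ a b * θ c d := by
          apply hθmul
          have hab : a * b ∣ p ^ (α + β) := by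
            rw [pow_add]; exact mul_dvd_mul hadvd hbdvd
          have hcd : c * d ∣ m₁ * m₂ := mul_dvd_mul hcdvd hddvd
          exact Nat.Coprime.coprime_dvd_right hcd
            (Nat.Coprime.coprime_dvd_left hab (Nat.Coprime.pow_left _ copm))
        have hpq₁ : piltz k ((p^α / a) * (m₁ / c)) = piltz k (p^α / a) * piltz k (m₁ / c) := by
          apply piltz_isMult k
          · exact (Nat.div_pos (Nat.le_of_dvd (pow_pos hp.pos α) hadvd)
              (Nat.pos_of_mem_divisors ha)).ne'
          · exact (Nat.div_pos (Nat.le_of_dvd hm₁pos hcdvd)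
              (Nat.pos_of_mem_divisors hc)).ne'
          · exact Nat.Coprime.coprime_dvd_right (Nat.div_dvd_of_dvd hcdvd)
              (Nat.Coprime.coprime_dvd_left (Nat.div_dvd_of_dvd hadvd)
                (Nat.Coprime.pow_left _ copb₁))
        have hpq₂ : piltz k ((p^β / b) * (m₂ / d)) = piltz k (p^β / b) * piltz k (m₂ / d) := by
          apply piltz_isMult k
          · exact (Nat.div_pos (Nat.le_of_dvd (pow_pos hp.pos β) hbdvd)
              (Nat.pos_of_mem_divisors hb)).ne'
          · exact (Nat.div_pos (Nat.le_of_dvd hm₂pos hddvd)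
              (Nat.pos_of_mem_divisors hd)).ne'
          · exact Nat.Coprime.coprime_dvd_right (Nat.div_dvd_of_dvd hddvd)
              (Nat.Coprime.coprime_dvd_left (Nat.div_dvd_of_dvd hbdvd)
                (Nat.Coprime.pow_left _ copb₂))
        rw [e₁, e₂, hθ, hpq₁, hpq₂]
        push_cast
        ring
      rw [Finset.sum_congr rfl (fun a ha => Finset.sum_congr rfl (fun c hc =>
        Finset.sum_congr rfl (fun b hb => Finset.sum_congr rfl (fun d hd =>
          term a ha c hc b hb d hd))))]
      rw [quad_sum]
      rw [prime_part hk θ hθp hp α β]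
      have ihm := ih m₁ m₂ hm₁pos hm₂pos hmlt
      rw [← ihm, ← Nat.cast_mul, ← hLHS, hsplit₁, hsplit₂]
end

section
/- For distinct elements x_1,...,x_k of a field and integers m, n with 1 ≤ m, n ≤ k−1, the quantity c_{m,n} := (−1)^{m+n} ∑_{i=1}^k x_i^{k−1} ∏_{j≠i} (x_i − x_j)^{-1} e_m^{(i)} e_n^{(i)}, where e_m^{(i)} denotes the elementary symmetric polynomial of degree m in the variables x_1,...,x_k with x_i omitted, satisfies c_{m,n} = (−1)^{m+n−1} e_{m+n}(x_1,...,x_k) (which is 0 when m+n > k). -/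
open Finset Polynomial

/-- Elementary symmetric polynomial of degree `d` evaluated at `x`. -/
def esymmVal {R : Type*} [CommRing R] {k : ℕ} (x : Fin k → R) (d : ℕ) : R :=
  ∑ s ∈ Finset.univ.powersetCard d, ∏ i ∈ s, x i

/-- Elementary symmetric polynomial of degree `d` in the variables `x` with `x i` omitted. -/
def esymmDel {R : Type*} [CommRing R] {k : ℕ} (x : Fin k → R) (i : Fin k) (d : ℕ) : R :=
  ∑ s ∈ (Finset.univ.erase i).powersetCard d, ∏ j ∈ s, x j

namespace CoeffCmn

section CommRing

variable {R : Type*} [CommRing R] {k : ℕ} (x : Fin k → R)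

lemma esymmVal_zero : esymmVal x 0 = 1 := by
  simp [esymmVal]

lemma esymmDel_zero (i : Fin k) : esymmDel x i 0 = 1 := by
  simp [esymmDel]

lemma esymmVal_eq_zero {d : ℕ} (hd : k < d) : esymmVal x d = 0 := by
  rw [esymmVal, powersetCard_eq_empty.2 (by simpa using hd), sum_empty]

/-- recurrence: e_{d+1} = e_{d+1}^{(i)} + x_i e_d^{(i)} -/
lemma esymmVal_succ (i : Fin k) (d : ℕ) :
    esymmVal x (d + 1) = esymmDel x i (d + 1) + x i * esymmDel x i d := by
  have hu : (Finset.univ : Finset (Fin k)) = insert i (Finset.univ.erase i) := by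
    rw [insert_erase (mem_univ i)]
  rw [esymmVal, hu, powersetCard_succ_insert (notMem_erase i _) d,
    sum_union, sum_image]
  · rw [esymmDel, esymmDel, mul_sum]
    congr 1
    refine sum_congr rfl fun s hs => ?_
    have his : i ∉ s := fun h => (notMem_erase i _) ((mem_powersetCard.1 hs).1 h)
    rw [prod_insert his]
  · intro s hs t ht hst
    have his : i ∉ s := fun h => (notMem_erase i _) ((mem_powersetCard.1 hs).1 h)
    have hit : i ∉ t := fun h => (notMem_erase i _) ((mem_powersetCard.1 ht).1 h)
    have := congrArg (Finset.erase · i) hst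
    simpa [erase_insert his, erase_insert hit] using this
  · rw [disjoint_right]
    intro s hs
    simp only [mem_image] at hs
    obtain ⟨t, _, rfl⟩ := hs
    intro h
    exact (notMem_erase i _) ((mem_powersetCard.1 h).1 (mem_insert_self i t))

lemma esymmDel_eq (i : Fin k) (d : ℕ) :
    esymmDel x i d = ∑ a ∈ range (d + 1), (-x i) ^ a * esymmVal x (d - a) := by
  induction d with
  | zero => simp [esymmDel_zero, esymmVal_zero]
  | succ d ih =>
    have h := esymmVal_succ x i d
    have : esymmDel x i (d + 1) = esymmVal x (d + 1) - x i * esymmDel x i d := by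
      rw [h]; ring
    rw [this, ih, Finset.sum_range_succ' (fun a => (-x i) ^ a * esymmVal x (d + 1 - a)) (d+1)]
    rw [Finset.mul_sum]
    simp only [pow_zero, one_mul, Nat.sub_zero]
    rw [sub_eq_iff_eq_add]
    rw [add_comm (∑ k_1 ∈ range (d + 1), (-x i) ^ (k_1 + 1) * esymmVal x (d + 1 - (k_1 + 1)))]
    rw [add_assoc, ← sum_add_distrib]
    have hz : ∑ a ∈ range (d + 1),
        ((-x i) ^ (a + 1) * esymmVal x (d + 1 - (a + 1)) + x i * ((-x i) ^ a * esymmVal x (d - a)))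
        = 0 := by
      refine sum_eq_zero fun a _ => ?_
      have : d + 1 - (a + 1) = d - a := by omega
      rw [this, pow_succ]
      ring
    rw [hz, add_zero]

lemma vieta (t : R) :
    ∏ j : Fin k, (t - x j) = ∑ d ∈ range (k + 1), (-1 : R) ^ d * esymmVal x d * t ^ (k - d) := by
  have h : ∀ j : Fin k, t - x j = (-x j) + t := fun j => by ring
  simp only [h]
  rw [prod_add, sum_powerset]
  simp only [card_univ, Fintype.card_fin]
  refine sum_congr rfl fun d hd => ?_
  rw [esymmVal, mul_sum, sum_mul]
  refine sum_congr rfl fun s hs => ?_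
  obtain ⟨hsub, hcard⟩ := mem_powersetCard.1 hs
  rw [prod_const, card_sdiff_of_subset hsub, card_univ, Fintype.card_fin, hcard]
  have : ∏ i ∈ s, -x i = (-1 : R) ^ d * ∏ i ∈ s, x i := by
    rw [← hcard]
    have h2 : ∀ i : Fin k, -x i = (-1 : R) * x i := fun i => by ring
    rw [← prod_const, ← prod_mul_distrib]
    exact prod_congr rfl fun i _ => h2 i
  rw [this]

end CommRing

section Field

variable {K : Type*} [Field K] {k : ℕ} (x : Fin k → K)

lemma coeff_basis (hx : Function.Injective x) (i : Fin k) :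
    (Lagrange.basis Finset.univ x i).coeff (k - 1) =
      ∏ j ∈ Finset.univ.erase i, (x i - x j)⁻¹ := by
  have hvs : Set.InjOn x (Finset.univ : Finset (Fin k)) := fun a _ b _ h => hx h
  have hnd := Lagrange.natDegree_basis hvs (mem_univ i)
  rw [card_univ, Fintype.card_fin] at hnd
  rw [← hnd, Polynomial.coeff_natDegree, Lagrange.basis, Polynomial.leadingCoeff_prod]
  refine prod_congr rfl fun j hj => ?_
  rw [Lagrange.basisDivisor, leadingCoeff_mul, leadingCoeff_C,
    (monic_X_sub_C (x j)).leadingCoeff, mul_one]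

lemma lagrange_sum (hx : Function.Injective x) {r : ℕ} (hr : r < k) :
    ∑ i : Fin k, x i ^ r * ∏ j ∈ Finset.univ.erase i, (x i - x j)⁻¹ =
      if r = k - 1 then 1 else 0 := by
  have hvs : Set.InjOn x (Finset.univ : Finset (Fin k)) := fun a _ b _ h => hx h
  have hdeg : ((X : K[X]) ^ r).degree < (#(Finset.univ : Finset (Fin k)) : ℕ) := by
    rw [card_univ, Fintype.card_fin, degree_X_pow]
    exact_mod_cast hr
  have h := Lagrange.eq_interpolate (f := (X : K[X]) ^ r) hvs hdeg
  have h2 := congrArg (fun p => Polynomial.coeff p (k - 1)) h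
  simp only [Lagrange.interpolate_apply, Polynomial.finset_sum_coeff,
    Polynomial.coeff_C_mul, coeff_X_pow] at h2
  rw [if_congr (Iff.intro (fun h => h.symm) (fun h => h.symm)) rfl rfl] at h2
  rw [h2]
  refine sum_congr rfl fun i _ => ?_
  rw [eval_pow, eval_X, coeff_basis x hx i]

lemma neg_pow_sub {d s : ℕ} (h : d ≤ s) : (-1 : K) ^ (s - d) = (-1) ^ s * (-1) ^ d := by
  have h2 : s + d = (s - d) + 2 * d := by omega
  have h3 : ((-1 : K)) ^ (s + d) = (-1) ^ (s - d) := by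
    rw [h2, pow_add, pow_mul, neg_one_sq, one_pow, mul_one]
  rw [← h3, pow_add]

/-- The key relation `∑ d, e_d * (-1)^{s-d} h_{s-d} = 0` for `s ≥ 1`. -/
lemma hA_lemma (hx : Function.Injective x) (hk : 2 ≤ k) {s : ℕ} (hs : 1 ≤ s) :
    ∑ d ∈ range (s + 1), esymmVal x d *
      ((-1 : K) ^ (s - d) *
        ∑ i : Fin k, x i ^ (k - 1 + (s - d)) * ∏ j ∈ Finset.univ.erase i, (x i - x j)⁻¹) = 0 := by
  have Lpos : ∀ r : ℕ, r < k → r ≠ k - 1 →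
      (∑ i : Fin k, x i ^ r * ∏ j ∈ Finset.univ.erase i, (x i - x j)⁻¹) = 0 :=
    fun r h1 h2 => (lagrange_sum x hx h1).trans (if_neg h2)
  set W : Fin k → K := fun i => ∏ j ∈ Finset.univ.erase i, (x i - x j)⁻¹ with hW
  -- the basic relation from the vanishing of the nodal polynomial at the nodes
  have relation0 : ∑ d ∈ range (k + 1),
      (-1 : K) ^ d * esymmVal x d * (∑ i : Fin k, x i ^ (k - 1 + s - d) * W i) = 0 := by
    have hterm : ∀ d ∈ range (k + 1),
        (-1 : K) ^ d * esymmVal x d * (∑ i : Fin k, x i ^ (k - 1 + s - d) * W i) =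
          ∑ i : Fin k, ((-1 : K) ^ d * esymmVal x d * x i ^ (k - d)) * (x i ^ (s - 1) * W i) := by
      intro d hd
      rw [mem_range] at hd
      rw [mul_sum]
      refine sum_congr rfl fun i _ => ?_
      have he : k - 1 + s - d = (k - d) + (s - 1) := by omega
      rw [he, pow_add]
      ring
    rw [sum_congr rfl hterm, sum_comm]
    refine sum_eq_zero fun i _ => ?_
    rw [← sum_mul, ← vieta x (x i)]
    rw [prod_eq_zero (mem_univ i) (sub_self (x i))]
    rw [zero_mul]
  set N := max s k with hN
  have e1 : ∑ d ∈ range (N + 1),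
      (-1 : K) ^ d * esymmVal x d * (∑ i : Fin k, x i ^ (k - 1 + s - d) * W i) = 0 := by
    rw [← relation0]
    symm
    apply sum_subset
    · intro d hd
      simp only [mem_range] at *
      omega
    · intro d hd hd2
      simp only [mem_range] at hd hd2
      rw [esymmVal_eq_zero x (show k < d by omega)]
      ring
  have e2 : ∑ d ∈ range (s + 1),
      (-1 : K) ^ d * esymmVal x d * (∑ i : Fin k, x i ^ (k - 1 + (s - d)) * W i) = 0 := by
    calc ∑ d ∈ range (s + 1),
        (-1 : K) ^ d * esymmVal x d * (∑ i : Fin k, x i ^ (k - 1 + (s - d)) * W i)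
        = ∑ d ∈ range (s + 1),
          (-1 : K) ^ d * esymmVal x d * (∑ i : Fin k, x i ^ (k - 1 + s - d) * W i) := by
          refine sum_congr rfl fun d hd => ?_
          simp only [mem_range] at hd
          have hexp : k - 1 + s - d = k - 1 + (s - d) := by omega
          rw [hexp]
      _ = ∑ d ∈ range (N + 1),
          (-1 : K) ^ d * esymmVal x d * (∑ i : Fin k, x i ^ (k - 1 + s - d) * W i) := by
          apply sum_subset
          · intro d hd
            simp only [mem_range] at *
            omega
          · intro d hd hd2
            simp only [mem_range] at hd hd2
            rw [Lpos (k - 1 + s - d) (by omega) (by omega)]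
            ring
      _ = 0 := e1
  have hfin : ∑ d ∈ range (s + 1), esymmVal x d *
      ((-1 : K) ^ (s - d) * ∑ i : Fin k, x i ^ (k - 1 + (s - d)) * W i) =
      (-1 : K) ^ s * ∑ d ∈ range (s + 1),
        (-1 : K) ^ d * esymmVal x d * (∑ i : Fin k, x i ^ (k - 1 + (s - d)) * W i) := by
    rw [mul_sum]
    refine sum_congr rfl fun d hd => ?_
    rw [mem_range] at hd
    rw [neg_pow_sub (K := K) (by omega : d ≤ s)]
    ring
  rw [hfin, e2, mul_zero]

lemma key_swap (f : ℕ → ℕ → K) (m n : ℕ) :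
    ∑ u ∈ range (m + 1), ∑ v ∈ Ico (n + 1) (m + n - u + 1), f u v =
      ∑ v ∈ Ico (n + 1) (m + n + 1), ∑ u ∈ range (m + n - v + 1), f u v := by
  rw [Finset.sum_sigma' (range (m + 1)) (fun u => Ico (n + 1) (m + n - u + 1)) (fun u v => f u v),
    Finset.sum_sigma' (Ico (n + 1) (m + n + 1)) (fun v => range (m + n - v + 1)) (fun v u => f u v)]
  refine Finset.sum_nbij' (fun p => ⟨p.2, p.1⟩) (fun p => ⟨p.2, p.1⟩) ?_ ?_ ?_ ?_ ?_
  · rintro ⟨u, v⟩ hp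
    simp only [mem_sigma, mem_range, mem_Ico] at *
    omega
  · rintro ⟨v, u⟩ hp
    simp only [mem_sigma, mem_range, mem_Ico] at *
    omega
  · rintro ⟨u, v⟩ _; rfl
  · rintro ⟨v, u⟩ _; rfl
  · rintro ⟨u, v⟩ _; rfl

lemma key (e g : ℕ → K) (m n : ℕ) (hm : 1 ≤ m) (hn : 1 ≤ n)
    (h0 : e 0 * g 0 = 1)
    (hA : ∀ s, 1 ≤ s → ∑ d ∈ range (s + 1), e d * g (s - d) = 0) :
    ∑ u ∈ range (m + 1), ∑ v ∈ range (n + 1), e u * (e v * g (m + n - u - v)) =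
      -(e (m + n)) := by
  have step1 : ∀ u ∈ range (m + 1),
      ∑ v ∈ range (n + 1), e v * g (m + n - u - v) =
        -∑ v ∈ Ico (n + 1) (m + n - u + 1), e v * g (m + n - u - v) := by
    intro u hu
    rw [mem_range] at hu
    have hs : 1 ≤ m + n - u := by omega
    have hsplit : ∑ v ∈ range (m + n - u + 1), e v * g (m + n - u - v) = 0 := hA _ hs
    rw [range_eq_Ico] at hsplit
    rw [← Finset.sum_Ico_consecutive (fun v => e v * g (m + n - u - v))
      (Nat.zero_le (n + 1)) (by omega : n + 1 ≤ m + n - u + 1)] at hsplit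
    rw [← range_eq_Ico] at hsplit
    exact eq_neg_of_add_eq_zero_left hsplit
  calc ∑ u ∈ range (m + 1), ∑ v ∈ range (n + 1), e u * (e v * g (m + n - u - v))
      = ∑ u ∈ range (m + 1), e u * ∑ v ∈ range (n + 1), e v * g (m + n - u - v) := by
        refine sum_congr rfl fun u _ => ?_; rw [mul_sum]
    _ = -∑ u ∈ range (m + 1), ∑ v ∈ Ico (n + 1) (m + n - u + 1), e u * (e v * g (m + n - u - v)) := by
        rw [← sum_neg_distrib]
        refine sum_congr rfl fun u hu => ?_
        rw [step1 u hu, mul_neg, mul_sum]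
    _ = -∑ v ∈ Ico (n + 1) (m + n + 1), ∑ u ∈ range (m + n - v + 1), e u * (e v * g (m + n - u - v)) := by
        rw [key_swap (fun u v => e u * (e v * g (m + n - u - v))) m n]
    _ = -(e (m + n)) := by
        congr 1
        have hval : ∀ v ∈ Ico (n + 1) (m + n + 1),
            ∑ u ∈ range (m + n - v + 1), e u * (e v * g (m + n - u - v)) =
              if v = m + n then e (m + n) else 0 := by
          intro v hv
          rw [mem_Ico] at hv
          by_cases hvm : v = m + n
          · subst hvm
            simp only [Nat.sub_self, zero_add, if_true]
            rw [sum_range_one]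
            have h1 : m + n - 0 - (m + n) = 0 := by omega
            rw [h1]
            calc e 0 * (e (m + n) * g 0) = e (m + n) * (e 0 * g 0) := by ring
              _ = e (m + n) := by rw [h0, mul_one]
          · rw [if_neg hvm]
            have hs : 1 ≤ m + n - v := by omega
            have hA1 := hA (m + n - v) hs
            have hfac : ∑ u ∈ range (m + n - v + 1), e u * (e v * g (m + n - u - v)) =
                e v * ∑ u ∈ range (m + n - v + 1), e u * g (m + n - v - u) := by
              rw [mul_sum]
              refine sum_congr rfl fun u hu => ?_
              rw [mem_range] at hu
              have h2 : m + n - u - v = m + n - v - u := by omega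
              rw [h2]; ring
            rw [hfac, hA1, mul_zero]
        rw [sum_congr rfl hval, sum_ite_eq' (Ico (n + 1) (m + n + 1)) (m + n) (fun _ => e (m + n))]
        rw [if_pos (by rw [mem_Ico]; omega)]

end Field

end CoeffCmn

open CoeffCmn

theorem coeff_c_mn {K : Type*} [Field K] {k : ℕ} (x : Fin k → K)
    (hx : Function.Injective x) (m n : ℕ) (hm : 1 ≤ m) (hm' : m ≤ k - 1)
    (hn : 1 ≤ n) (hn' : n ≤ k - 1) :
    (-1 : K) ^ (m + n) * ∑ i : Fin k, x i ^ (k - 1) *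
        (∏ j ∈ Finset.univ.erase i, (x i - x j)⁻¹) * esymmDel x i m * esymmDel x i n =
      (-1 : K) ^ (m + n - 1) * esymmVal x (m + n) := by
  have hk : 2 ≤ k := by omega
  set W : Fin k → K := fun i => ∏ j ∈ Finset.univ.erase i, (x i - x j)⁻¹ with hW
  set h : ℕ → K := fun t => ∑ i : Fin k, x i ^ (k - 1 + t) * W i with hh
  set g : ℕ → K := fun t => (-1 : K) ^ t * h t with hg
  have h0 : esymmVal x 0 * g 0 = 1 := by
    rw [hg, hh]
    simp only [pow_zero, one_mul, add_zero]
    rw [esymmVal_zero, one_mul]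
    conv_lhs => rw [hW]
    rw [lagrange_sum x hx (by omega : k - 1 < k), if_pos rfl]
  have hA : ∀ s, 1 ≤ s → ∑ d ∈ range (s + 1), esymmVal x d * g (s - d) = 0 := by
    intro s hs
    have := hA_lemma x hx hk hs
    simp only [hg, hh, hW]
    convert this using 3
  -- Step 1: rewrite the sum as a double convolution sum
  have hS : ∑ i : Fin k, x i ^ (k - 1) * W i * esymmDel x i m * esymmDel x i n =
      ∑ a ∈ range (m + 1), ∑ b ∈ range (n + 1),
        esymmVal x (m - a) * (esymmVal x (n - b) * g (a + b)) := by
    have expand : ∀ i : Fin k, x i ^ (k - 1) * W i * esymmDel x i m * esymmDel x i n =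
        ∑ a ∈ range (m + 1), ∑ b ∈ range (n + 1),
          esymmVal x (m - a) * (esymmVal x (n - b) *
            ((-1 : K) ^ (a + b) * (x i ^ (k - 1 + (a + b)) * W i))) := by
      intro i
      rw [esymmDel_eq x i m, esymmDel_eq x i n]
      rw [mul_assoc, Finset.sum_mul_sum]
      rw [mul_sum]
      refine sum_congr rfl fun a _ => ?_
      rw [mul_sum]
      refine sum_congr rfl fun b _ => ?_
      rw [neg_pow (x i) a, neg_pow (x i) b, pow_add ((-1 : K)) a b,
        pow_add (x i) (k - 1) (a + b), pow_add (x i) a b]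
      ring
    rw [sum_congr rfl (fun i _ => expand i), sum_comm]
    refine sum_congr rfl fun a _ => ?_
    rw [sum_comm]
    refine sum_congr rfl fun b _ => ?_
    rw [← mul_sum, ← mul_sum, ← mul_sum]
  -- Step 2: reflect the double sum
  have hrefl : ∑ a ∈ range (m + 1), ∑ b ∈ range (n + 1),
      esymmVal x (m - a) * (esymmVal x (n - b) * g (a + b)) =
      ∑ u ∈ range (m + 1), ∑ v ∈ range (n + 1),
        esymmVal x u * (esymmVal x v * g (m + n - u - v)) := by
    calc ∑ a ∈ range (m + 1), ∑ b ∈ range (n + 1),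
        esymmVal x (m - a) * (esymmVal x (n - b) * g (a + b))
        = ∑ a ∈ range (m + 1), ∑ b ∈ range (n + 1),
          esymmVal x (m - a) * (esymmVal x (n - b) * g (m + n - (m - a) - (n - b))) := by
          refine sum_congr rfl fun a ha => sum_congr rfl fun b hb => ?_
          simp only [mem_range] at ha hb
          have hab : m + n - (m - a) - (n - b) = a + b := by omega
          rw [hab]
      _ = ∑ u ∈ range (m + 1), ∑ v ∈ range (n + 1),
          esymmVal x u * (esymmVal x v * g (m + n - u - v)) := by
          rw [← sum_range_reflect (fun u => ∑ v ∈ range (n + 1),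
            esymmVal x u * (esymmVal x v * g (m + n - u - v))) (m + 1)]
          refine sum_congr rfl fun a _ => ?_
          simp only [Nat.add_sub_cancel]
          rw [← sum_range_reflect (fun v =>
            esymmVal x (m - a) * (esymmVal x v * g (m + n - (m - a) - v))) (n + 1)]
          refine sum_congr rfl fun b _ => ?_
          simp only [Nat.add_sub_cancel]
  -- Step 3: apply the key lemma
  have hT : ∑ u ∈ range (m + 1), ∑ v ∈ range (n + 1),
      esymmVal x u * (esymmVal x v * g (m + n - u - v)) = -(esymmVal x (m + n)) :=
    key (fun d => esymmVal x d) g m n hm hn h0 hA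
  obtain ⟨p, hp⟩ : ∃ p, m + n = p + 1 := ⟨m + n - 1, by omega⟩
  rw [hS, hrefl, hT, hp]
  simp only [Nat.add_sub_cancel]
  rw [pow_succ]
  ring
end
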